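/- arXiv:1412.2354 — 4 statements merged into one kernel-verified Lean document; each statement's English description precedes it below -/
import Mathlib

section
/- Let $\{\varepsilon_\lambda\}_{\lambda\geq 1}$ be positive reals such that there exists $\alpha>0$ with $\varepsilon_\lambda < (2\lambda)^\alpha$ for all $\lambda$, and such that $\varepsilon_{\nu-\mu}^{-1} \leq \varepsilon_\nu^{-1} + \varepsilon_\mu^{-1}$ for all $\nu > \mu \geq 1$. Then for every power series $f(Z) = \sum_{\lambda=2}^\infty a_\lambda Z^\lambda$ with positive radius of convergence, the formal power series $g(Z) = Z + \sum_{\lambda=2}^\infty c_\lambda Z^\lambda$ uniquely determined by the equation $\sum_{\lambda=2}^\infty \varepsilon_{\lambda-1}^{-1} c_\lambda Z^\lambda = f(g(Z))$ has a positive radius of convergence. -/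
set_option maxHeartbeats 1000000

open Classical in
/-- max number of "good" nodes in a laminar splitting tree of total mass `n`. -/
noncomputable def SSDkap (g : ℕ → Prop) : ℕ → ℕ
  | 0 => 0
  | 1 => 0
  | (n+2) => (if g (n+2) then 1 else 0) +
      ((Finset.Icc 1 (n+1)).attach.sup fun a => SSDkap g a.1 + SSDkap g (n + 2 - a.1))
  decreasing_by
  · have := (Finset.mem_Icc.mp a.2).2; omega
  · have h1 := (Finset.mem_Icc.mp a.2).1; omega

lemma SSDkap_zero (g : ℕ → Prop) : SSDkap g 0 = 0 := by rw [SSDkap]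

lemma SSDkap_one (g : ℕ → Prop) : SSDkap g 1 = 0 := by rw [SSDkap]

open Classical in
lemma SSDkap_step_aux (g : ℕ → Prop) (n : ℕ) (hn : 2 ≤ n) (a : ℕ) (ha1 : 1 ≤ a) (ha2 : a < n) :
    SSDkap g a + SSDkap g (n - a) + (if g n then 1 else 0) ≤ SSDkap g n := by
  obtain ⟨m, rfl⟩ : ∃ m, n = m + 2 := ⟨n - 2, by omega⟩
  rw [SSDkap]
  have hmem : a ∈ Finset.Icc 1 (m+1) := Finset.mem_Icc.mpr ⟨ha1, by omega⟩
  have h2 : SSDkap g a + SSDkap g (m + 2 - a) ≤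
      ((Finset.Icc 1 (m+1)).attach.sup fun a => SSDkap g a.1 + SSDkap g (m + 2 - a.1)) := by
    simpa using Finset.le_sup (f := fun a : {x // x ∈ Finset.Icc 1 (m+1)} =>
      SSDkap g a.1 + SSDkap g (m + 2 - a.1)) (Finset.mem_attach _ ⟨a, hmem⟩)
  omega

lemma SSDkap_step (g : ℕ → Prop) (n : ℕ) (hn : 2 ≤ n) (a : ℕ) (ha1 : 1 ≤ a) (ha2 : a < n) :
    SSDkap g a + SSDkap g (n - a) ≤ SSDkap g n := by
  have := SSDkap_step_aux g n hn a ha1 ha2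
  omega

lemma SSDkap_step_good (g : ℕ → Prop) (n : ℕ) (hn : 2 ≤ n) (hg : g n) (a : ℕ)
    (ha1 : 1 ≤ a) (ha2 : a < n) :
    SSDkap g a + SSDkap g (n - a) + 1 ≤ SSDkap g n := by
  have h := SSDkap_step_aux g n hn a ha1 ha2
  classical
  rw [if_pos hg] at h
  omega

open Classical in
lemma SSDkap_exists_split_aux (g : ℕ → Prop) (n : ℕ) (hn : 2 ≤ n) :
    ∃ a, 1 ≤ a ∧ a < n ∧
      SSDkap g n = SSDkap g a + SSDkap g (n - a) + (if g n then 1 else 0) := by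
  obtain ⟨m, rfl⟩ : ∃ m, n = m + 2 := ⟨n - 2, by omega⟩
  have hne : ((Finset.Icc 1 (m+1)).attach).Nonempty := by
    apply Finset.attach_nonempty_iff.mpr
    exact ⟨1, Finset.mem_Icc.mpr ⟨le_refl 1, by omega⟩⟩
  obtain ⟨b, _, hb⟩ := Finset.exists_mem_eq_sup ((Finset.Icc 1 (m+1)).attach) hne
      (fun a : {x // x ∈ Finset.Icc 1 (m+1)} => SSDkap g a.1 + SSDkap g (m + 2 - a.1))
  have hbm := Finset.mem_Icc.mp b.2
  refine ⟨b.1, hbm.1, by omega, ?_⟩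
  rw [SSDkap, hb]; omega

lemma SSDkap_exists_split (g : ℕ → Prop) (n : ℕ) (hn : 2 ≤ n) :
    ∃ a, 1 ≤ a ∧ a < n ∧
      ((g n ∧ SSDkap g n = SSDkap g a + SSDkap g (n - a) + 1) ∨
       (¬ g n ∧ SSDkap g n = SSDkap g a + SSDkap g (n - a))) := by
  classical
  obtain ⟨a, h1, h2, h3⟩ := SSDkap_exists_split_aux g n hn
  by_cases hg : g n
  · rw [if_pos hg] at h3
    exact ⟨a, h1, h2, Or.inl ⟨hg, h3⟩⟩
  · rw [if_neg hg] at h3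
    exact ⟨a, h1, h2, Or.inr ⟨hg, h3⟩⟩

lemma SSDkap_superadd (g : ℕ → Prop) (a b : ℕ) (ha : 1 ≤ a) (hb : 1 ≤ b) :
    SSDkap g a + SSDkap g b ≤ SSDkap g (a + b) := by
  have h := SSDkap_step g (a+b) (by omega) a ha (by omega)
  have h2 : a + b - a = b := by omega
  rw [h2] at h
  exact h

/-- The key counting lemma: if good sizes are at least `σ` and pairwise gaps between
good sizes are at least `σ`, then any laminar tree over mass `n` has at most `2n/σ`
good nodes. -/
lemma SSDcount (g : ℕ → Prop) (σ : ℝ) (hσ : 0 < σ)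
    (hmin : ∀ m, g m → 2 ≤ m ∧ σ ≤ (m : ℝ))
    (hgap : ∀ m m', g m → g m' → m' < m → σ ≤ (m : ℝ) - (m' : ℝ)) :
    ∀ n : ℕ, σ * SSDkap g n ≤ 2 * n := by
  -- invariant: ∃ p h r mn an m, ...
  have key : ∀ n : ℕ, ∃ (p h r : ℕ) (mn an m : ℝ),
      (SSDkap g n + r ≤ 2*p + h) ∧ σ * p ≤ mn ∧ σ * h ≤ an ∧ 0 ≤ mn ∧ 0 ≤ an ∧
      mn + an ≤ m ∧ m ≤ (n:ℝ) ∧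
      (r = 0 → SSDkap g n = 0 ∧ m = 0) ∧
      (r = 1 → ∃ mg : ℕ, g mg ∧ m = (mg:ℝ) ∧ mg ≤ n) := by
    intro n
    induction n using Nat.strong_induction_on with
    | _ n ih =>
      rcases le_or_gt n 1 with hn | hn
      · -- n = 0 or 1 : kap = 0
        have hz : SSDkap g n = 0 := by
          interval_cases n
          · exact SSDkap_zero g
          · exact SSDkap_one g
        exact ⟨0, 0, 0, 0, 0, 0, by omega, by simp, by simp, le_refl _, le_refl _, by simp,
          by positivity, fun _ => ⟨hz, rfl⟩, by simp⟩
      · -- n ≥ 2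
        obtain ⟨a, ha1, ha2, hsplit4⟩ := SSDkap_exists_split g n hn
        set b := n - a with hbdef
        have hb1 : 1 ≤ b := by omega
        have hab : a + b = n := by omega
        obtain ⟨pa, ha', ra, mna, ana, ma, Ka, Pa, Ha, Na1, Na2, Ma, MaN, Ra0, Ra1⟩ :=
          ih a (by omega)
        obtain ⟨pb, hb', rb, mnb, anb, mb, Kb, Pb, Hb, Nb1, Nb2, Mb, MbN, Rb0, Rb1⟩ :=
          ih b (by omega)
        rcases hsplit4 with ⟨hg, hsplit⟩ | ⟨hg, hsplit⟩
        · -- root is good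
          rcases Nat.lt_or_ge (ra + rb) 1 with hρ | hρ'
          · -- ρ = 0 : both subtrees have no good nodes
            have hra : ra = 0 := by omega
            have hrb : rb = 0 := by omega
            have hka := (Ra0 hra).1
            have hkb := (Rb0 hrb).1
            refine ⟨1, 0, 1, (n:ℝ), 0, (n:ℝ), by omega, ?_, by simp, by positivity,
              le_refl _, by simp, le_refl _, by omega, fun _ => ⟨n, hg, rfl, le_refl _⟩⟩
            simpa using (hmin n hg).2
          rcases Nat.lt_or_ge (ra + rb) 2 with hρ | hρ
          · -- ρ = 1 : exactly one subtree has good nodes; root is a chain node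
            have h1 : (ra = 1 ∧ rb = 0) ∨ (ra = 0 ∧ rb = 1) := by omega
            -- symmetric handling
            rcases h1 with ⟨hra, hrb⟩ | ⟨hra, hrb⟩
            · obtain ⟨mg, hmg, hmamg, hmgle⟩ := Ra1 hra
              obtain ⟨hkb, hmb0⟩ := Rb0 hrb
              have hmgn : mg < n := by omega
              have hann : σ ≤ (n:ℝ) - (mg:ℝ) := hgap n mg hg hmg hmgn
              refine ⟨pa + pb, ha' + hb' + 1, 1, mna + mnb, ana + anb + ((n:ℝ) - mg),
                (n:ℝ), by omega, ?_, ?_, by positivity, ?_, ?_, le_refl _, by omega,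
                fun _ => ⟨n, hg, rfl, le_refl _⟩⟩
              · push_cast; linarith
              · push_cast; linarith
              · linarith
              · -- mn + an ≤ n
                have : mnb + anb ≤ 0 := by rw [hmb0] at Mb; linarith
                have hma' : mna + ana ≤ (mg:ℝ) := by rw [hmamg] at Ma; linarith
                linarith
            · obtain ⟨mg, hmg, hmbmg, hmgle⟩ := Rb1 hrb
              obtain ⟨hka, hma0⟩ := Ra0 hra
              have hmgn : mg < n := by omega
              have hann : σ ≤ (n:ℝ) - (mg:ℝ) := hgap n mg hg hmg hmgn
              refine ⟨pa + pb, ha' + hb' + 1, 1, mna + mnb, ana + anb + ((n:ℝ) - mg),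
                (n:ℝ), by omega, ?_, ?_, by positivity, ?_, ?_, le_refl _, by omega,
                fun _ => ⟨n, hg, rfl, le_refl _⟩⟩
              · push_cast; linarith
              · push_cast; linarith
              · linarith
              · have : mna + ana ≤ 0 := by rw [hma0] at Ma; linarith
                have hmb' : mnb + anb ≤ (mg:ℝ) := by rw [hmbmg] at Mb; linarith
                linarith
          · -- ρ ≥ 2 : root is a branching node
            refine ⟨pa + pb, ha' + hb', 1, mna + mnb, ana + anb, (n:ℝ), by omega, ?_, ?_,
              by positivity, by positivity, ?_, le_refl _, by omega,
              fun _ => ⟨n, hg, rfl, le_refl _⟩⟩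
            · push_cast; linarith
            · push_cast; linarith
            · have : (ma : ℝ) + mb ≤ (n:ℝ) := by
                have : (a:ℝ) + (b:ℝ) = (n:ℝ) := by push_cast [← hab]; ring
                linarith
              linarith
        · -- root is not good: everything adds up
          refine ⟨pa + pb, ha' + hb', ra + rb, mna + mnb, ana + anb, ma + mb, by omega,
            ?_, ?_, by positivity, by positivity, by linarith, ?_, ?_, ?_⟩
          · push_cast; linarith
          · push_cast; linarith
          · have : (a:ℝ) + (b:ℝ) = (n:ℝ) := by push_cast [← hab]; ring
            linarith
          · intro h0
            have hra : ra = 0 := by omega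
            have hrb : rb = 0 := by omega
            obtain ⟨hka, hma0⟩ := Ra0 hra
            obtain ⟨hkb, hmb0⟩ := Rb0 hrb
            constructor
            · omega
            · rw [hma0, hmb0]; ring
          · intro h1
            have h1' : (ra = 1 ∧ rb = 0) ∨ (ra = 0 ∧ rb = 1) := by omega
            rcases h1' with ⟨hra, hrb⟩ | ⟨hra, hrb⟩
            · obtain ⟨mg, hmg, hmamg, hmgle⟩ := Ra1 hra
              obtain ⟨_, hmb0⟩ := Rb0 hrb
              exact ⟨mg, hmg, by rw [hmamg, hmb0]; ring, by omega⟩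
            · obtain ⟨mg, hmg, hmbmg, hmgle⟩ := Rb1 hrb
              obtain ⟨_, hma0⟩ := Ra0 hra
              exact ⟨mg, hmg, by rw [hmbmg, hma0]; ring, by omega⟩
  intro n
  obtain ⟨p, h, r, mn, an, m, K1, K2, K3, K4, K5, K6, K7, _, _⟩ := key n
  have h1 : (SSDkap g n : ℝ) ≤ 2*p + h := by exact_mod_cast by omega
  have h2 : σ * (SSDkap g n : ℝ) ≤ σ * (2*p + h) := by
    apply mul_le_mul_of_nonneg_left h1 hσ.le
  calc σ * (SSDkap g n : ℝ) ≤ σ * (2*p + h) := h2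
    _ = 2 * (σ * p) + σ * h := by ring
    _ ≤ 2 * mn + an := by linarith
    _ ≤ 2 * (mn + an) := by linarith
    _ ≤ 2 * m := by linarith
    _ ≤ 2 * n := by linarith

/-- coefficientwise norm comparison is preserved by powers -/
lemma SSDcmp (φ : PowerSeries ℂ) (ψ : PowerSeries ℝ)
    (h : ∀ k, ‖(PowerSeries.coeff (R := ℂ) k) φ‖ ≤ (PowerSeries.coeff (R := ℝ) k) ψ) :
    ∀ (l n : ℕ), ‖(PowerSeries.coeff (R := ℂ) n) (φ ^ l)‖ ≤ (PowerSeries.coeff (R := ℝ) n) (ψ ^ l) := by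
  intro l
  induction l with
  | zero =>
    intro n
    simp [PowerSeries.coeff_one]
    split <;> simp
  | succ l ihl =>
    intro n
    rw [pow_succ, pow_succ, PowerSeries.coeff_mul, PowerSeries.coeff_mul]
    refine le_trans (norm_sum_le _ _) (Finset.sum_le_sum ?_)
    intro p _
    rw [norm_mul]
    exact mul_le_mul (ihl p.1) (h p.2) (norm_nonneg _)
      (le_trans (norm_nonneg _) (ihl p.1))

/-- constant coefficient of powers vanishes -/
lemma SSDconst {R : Type*} [CommRing R] (φ : PowerSeries R)
    (h0 : PowerSeries.coeff (R := R) 0 φ = 0) (l : ℕ) (hl : 1 ≤ l) :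
    PowerSeries.coeff (R := R) 0 (φ ^ l) = 0 := by
  rw [PowerSeries.coeff_zero_eq_constantCoeff] at h0 ⊢
  rw [map_pow, h0, zero_pow (by omega)]

/-- truncation below n doesn't change coefficient n of powers ≥ 2 (zero const term) -/
lemma SSDtrunc {R : Type*} [CommRing R] (φ φ' : PowerSeries R) (n : ℕ)
    (h0 : PowerSeries.coeff (R := R) 0 φ = 0) (h0' : PowerSeries.coeff (R := R) 0 φ' = 0)
    (hk : ∀ k, k < n → PowerSeries.coeff (R := R) k φ = PowerSeries.coeff (R := R) k φ') :
    ∀ l, 2 ≤ l → PowerSeries.coeff (R := R) n (φ ^ l) = PowerSeries.coeff (R := R) n (φ' ^ l) := by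
  have ha : ∀ l, ∀ i, i < n → PowerSeries.coeff (R := R) i (φ ^ l) = PowerSeries.coeff (R := R) i (φ' ^ l) := by
    intro l
    induction l with
    | zero => intro i _; rfl
    | succ l ihl =>
      intro i hi
      rw [pow_succ, pow_succ, PowerSeries.coeff_mul, PowerSeries.coeff_mul]
      apply Finset.sum_congr rfl
      intro p hp
      have hpq := Finset.HasAntidiagonal.mem_antidiagonal.mp hp
      rw [ihl p.1 (by omega), hk p.2 (by omega)]
  intro l hl
  obtain ⟨l', rfl⟩ : ∃ l', l = l' + 1 := ⟨l - 1, by omega⟩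
  have hl' : 1 ≤ l' := by omega
  rw [pow_succ, pow_succ, PowerSeries.coeff_mul, PowerSeries.coeff_mul]
  apply Finset.sum_congr rfl
  intro p hp
  have hpq := Finset.HasAntidiagonal.mem_antidiagonal.mp hp
  rcases Nat.lt_or_ge p.2 n with h2 | h2
  · rcases Nat.lt_or_ge p.1 n with h1 | h1
    · rw [ha l' p.1 h1, hk p.2 h2]
    · -- p.1 = n, p.2 = 0
      have hp1 : p.1 = n := by omega
      have hp2 : p.2 = 0 := by omega
      rw [hp2, h0, h0', mul_zero, mul_zero]
  · -- p.2 = n, p.1 = 0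
    have hp1 : p.1 = 0 := by omega
    rw [hp1, SSDconst φ h0 l' hl', SSDconst φ' h0' l' hl', zero_mul, zero_mul]

lemma SSDsqaux : ∀ m : ℕ, (∑ i ∈ Finset.range (m+2), (1:ℝ)/(i:ℝ)^2) ≤ 2 - 1/((m:ℝ)+1) := by
  intro m
  induction m with
  | zero =>
    rw [Finset.sum_range_succ, Finset.sum_range_succ, Finset.sum_range_zero]
    norm_num
  | succ m ih =>
    rw [Finset.sum_range_succ]
    have hm1 : (0:ℝ) < (m:ℝ)+1 := by positivity
    have hm2 : (0:ℝ) < (m:ℝ)+2 := by positivity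
    have h1 : (1:ℝ)/(((m+2:ℕ)):ℝ)^2 ≤ 1/((m:ℝ)+1) - 1/((m:ℝ)+2) := by
      have hcast : (((m+2:ℕ)):ℝ) = (m:ℝ) + 2 := by push_cast; ring
      rw [hcast]
      rw [div_sub_div _ _ (ne_of_gt hm1) (ne_of_gt hm2)]
      rw [div_le_div_iff₀ (by positivity) (by positivity)]
      ring_nf
      nlinarith
    have hgoal : ((m+1:ℕ):ℝ) + 1 = (m:ℝ)+2 := by push_cast; ring
    rw [hgoal]
    linarith
lemma SSDsq : ∀ m : ℕ, (∑ i ∈ Finset.range m, (1:ℝ)/(i:ℝ)^2) ≤ 2 := by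
  intro m
  match m with
  | 0 => simp
  | 1 => simp
  | (m+2) =>
    have h1 := SSDsqaux m
    have h2 : (0:ℝ) < 1/((m:ℝ)+1) := by positivity
    linarith
lemma SSDbin : ∀ n : ℕ, 1 ≤ n →
    (∑ p ∈ Finset.HasAntidiagonal.antidiagonal n, ((1:ℝ)/((p.1:ℝ))^2) * ((1:ℝ)/((p.2:ℝ))^2))
      ≤ 16 / (n:ℝ)^2 := by
  intro n hn
  have hnpos : (0:ℝ) < (n:ℝ)^2 := by
    have : (0:ℝ) < (n:ℝ) := by exact_mod_cast hn
    positivity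
  have hterm : ∀ p ∈ Finset.HasAntidiagonal.antidiagonal n, ((1:ℝ)/((p.1:ℝ))^2) * ((1:ℝ)/((p.2:ℝ))^2)
      ≤ (4/(n:ℝ)^2) * ((1:ℝ)/((p.1:ℝ))^2 + (1:ℝ)/((p.2:ℝ))^2) := by
    intro p hp
    have hpq : p.1 + p.2 = n := Finset.HasAntidiagonal.mem_antidiagonal.mp hp
    rcases Nat.eq_zero_or_pos p.1 with h1 | h1
    · rw [h1]
      simp
      positivity
    rcases Nat.eq_zero_or_pos p.2 with h2 | h2
    · rw [h2]
      simp
      positivity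
    have hp1 : (0:ℝ) < (p.1:ℝ) := by exact_mod_cast h1
    have hp2 : (0:ℝ) < (p.2:ℝ) := by exact_mod_cast h2
    rcases le_total p.1 p.2 with hle | hle
    · have hc : (n:ℝ) ≤ 2*(p.2:ℝ) := by
        have : n ≤ 2 * p.2 := by omega
        exact_mod_cast this
      have e1 : (1:ℝ)/(p.2:ℝ)^2 ≤ 4/(n:ℝ)^2 := by
        rw [div_le_div_iff₀ (by positivity) hnpos]
        nlinarith
      have e2 : ((1:ℝ)/((p.1:ℝ))^2) * ((1:ℝ)/((p.2:ℝ))^2)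
          ≤ ((1:ℝ)/((p.1:ℝ))^2) * (4/(n:ℝ)^2) := by
        apply mul_le_mul_of_nonneg_left e1 (by positivity)
      have e3 : (0:ℝ) ≤ (1:ℝ)/(p.2:ℝ)^2 := by positivity
      have e4 : (0:ℝ) ≤ 4/(n:ℝ)^2 := by positivity
      nlinarith [mul_nonneg e4 e3]
    · have hc : (n:ℝ) ≤ 2*(p.1:ℝ) := by
        have : n ≤ 2 * p.1 := by omega
        exact_mod_cast this
      have e1 : (1:ℝ)/(p.1:ℝ)^2 ≤ 4/(n:ℝ)^2 := by
        rw [div_le_div_iff₀ (by positivity) hnpos]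
        nlinarith
      have e2 : ((1:ℝ)/((p.1:ℝ))^2) * ((1:ℝ)/((p.2:ℝ))^2)
          ≤ (4/(n:ℝ)^2) * ((1:ℝ)/((p.2:ℝ))^2) := by
        apply mul_le_mul_of_nonneg_right e1 (by positivity)
      have e3 : (0:ℝ) ≤ (1:ℝ)/(p.1:ℝ)^2 := by positivity
      have e4 : (0:ℝ) ≤ 4/(n:ℝ)^2 := by positivity
      nlinarith [mul_nonneg e4 e3]
  have hsum1 : (∑ p ∈ Finset.HasAntidiagonal.antidiagonal n, ((1:ℝ)/((p.1:ℝ))^2))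
      = ∑ i ∈ Finset.range (n+1), (1:ℝ)/(i:ℝ)^2 := by
    rw [Finset.Nat.sum_antidiagonal_eq_sum_range_succ_mk]
  have hsum2 : (∑ p ∈ Finset.HasAntidiagonal.antidiagonal n, ((1:ℝ)/((p.2:ℝ))^2))
      = ∑ i ∈ Finset.range (n+1), (1:ℝ)/(i:ℝ)^2 := by
    rw [Finset.Nat.sum_antidiagonal_eq_sum_range_succ_mk]
    have := Finset.sum_range_reflect (fun j => (1:ℝ)/(j:ℝ)^2) (n+1)
    simp only [Nat.add_sub_cancel] at this
    calc ∑ i ∈ Finset.range (n+1), (1:ℝ)/(((i, n-i).2:ℕ):ℝ)^2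
        = ∑ i ∈ Finset.range (n+1), (1:ℝ)/(((n-i:ℕ)):ℝ)^2 := rfl
      _ = ∑ i ∈ Finset.range (n+1), (1:ℝ)/(i:ℝ)^2 := this
  calc (∑ p ∈ Finset.HasAntidiagonal.antidiagonal n, ((1:ℝ)/((p.1:ℝ))^2) * ((1:ℝ)/((p.2:ℝ))^2))
      ≤ ∑ p ∈ Finset.HasAntidiagonal.antidiagonal n,
          (4/(n:ℝ)^2) * ((1:ℝ)/((p.1:ℝ))^2 + (1:ℝ)/((p.2:ℝ))^2) :=
        Finset.sum_le_sum hterm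
    _ = (4/(n:ℝ)^2) * ((∑ p ∈ Finset.HasAntidiagonal.antidiagonal n, ((1:ℝ)/((p.1:ℝ))^2))
          + ∑ p ∈ Finset.HasAntidiagonal.antidiagonal n, ((1:ℝ)/((p.2:ℝ))^2)) := by
        rw [← Finset.mul_sum, ← Finset.sum_add_distrib]
    _ ≤ (4/(n:ℝ)^2) * (2 + 2) := by
        apply mul_le_mul_of_nonneg_left ?_ (by positivity)
        rw [hsum1, hsum2]
        have := SSDsq (n+1)
        linarith
    _ = 16 / (n:ℝ)^2 := by ring

/-- Siegel's small-denominators lemma (Ueda, Lemma 5). -/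
theorem siegel_small_denominators
    (ε : ℕ → ℝ) (hεpos : ∀ l, 1 ≤ l → 0 < ε l)
    (α : ℝ) (hα : 0 < α)
    (hgrow : ∀ l : ℕ, 1 ≤ l → ε l < (2 * (l : ℝ)) ^ α)
    (hsub : ∀ ν μ : ℕ, 1 ≤ μ → μ < ν → (ε (ν - μ))⁻¹ ≤ (ε ν)⁻¹ + (ε μ)⁻¹)
    (a : ℕ → ℂ) (ha0 : a 0 = 0) (ha1 : a 1 = 0)
    (hfconv : ∃ ρ : ℝ, 0 < ρ ∧ Summable fun n => ‖a n‖ * ρ ^ n)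
    (c : ℕ → ℂ) (hc0 : c 0 = 0) (hc1 : c 1 = 1)
    (heq : ∀ n : ℕ, 2 ≤ n →
      ((ε (n - 1) : ℂ))⁻¹ * c n
        = ∑ l ∈ Finset.range (n + 1),
            a l * PowerSeries.coeff (R := ℂ) n ((PowerSeries.mk c) ^ l)) :
    ∃ r : ℝ, 0 < r ∧ Summable fun n => ‖c n‖ * r ^ n := by
  classical
  -- ## Step 1: geometric bound on the coefficients of f
  obtain ⟨ρ, hρ, hsum⟩ := hfconv
  set t0 : ℝ := ∑' n, ‖a n‖ * ρ ^ n with ht0def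
  have ht0 : ∀ l, ‖a l‖ * ρ ^ l ≤ t0 := by
    intro l
    exact Summable.le_tsum hsum l (fun i _ => by positivity)
  set R : ℝ := max ρ⁻¹ 1 with hRdef
  set M : ℝ := max t0 1 with hMdef
  have hR1 : 1 ≤ R := le_max_right _ _
  have hM1 : 1 ≤ M := le_max_right _ _
  have haMR : ∀ l, ‖a l‖ ≤ M * R ^ l := by
    intro l
    have h1 : ‖a l‖ = (‖a l‖ * ρ ^ l) * (ρ⁻¹) ^ l := by
      rw [mul_assoc, ← mul_pow]
      rw [mul_inv_cancel₀ (ne_of_gt hρ)]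
      simp
    rw [h1]
    have h2 : (ρ⁻¹) ^ l ≤ R ^ l := pow_le_pow_left₀ (by positivity) (le_max_left _ _) l
    have h3 : (0:ℝ) ≤ ρ⁻¹ ^ l := by positivity
    have h4 : ‖a l‖ * ρ ^ l ≤ M := le_trans (ht0 l) (le_max_left _ _)
    have h5 : (0:ℝ) ≤ ‖a l‖ * ρ ^ l := by positivity
    exact mul_le_mul h4 h2 h3 (by linarith)
  set K : ℝ := 16 with hKdef
  set q : ℝ := 2 * M * R^2 * K with hqdef
  have hq1 : 1 ≤ q := by
    simp only [hqdef, hKdef]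
    nlinarith [hM1, hR1, sq_nonneg R]
  have hq0 : 0 < q := by linarith
  -- ## Step 2: the level structure
  set good : ℕ → ℕ → Prop := fun t m => 2 ≤ m ∧ (2:ℝ)^t ≤ ε (m-1) with hgooddef
  set sig : ℕ → ℝ := fun t => (2:ℝ) ^ ((((t-1 : ℕ)):ℝ)/α) / 2 with hsigdef
  have hsigpos : ∀ t, 0 < sig t := by
    intro t; simp only [hsigdef]; positivity
  -- root extraction helper
  have hroot : ∀ (s d : ℕ), 1 ≤ d → (2:ℝ)^s ≤ ε d → (2:ℝ)^((s:ℝ)/α) < 2*(d:ℝ) := by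
    intro s d hd h
    have hεlt := hgrow d hd
    have h2t : (2:ℝ) ^ ((s:ℝ)) ≤ ε d := by rw [Real.rpow_natCast]; exact h
    have hlt : (2:ℝ) ^ ((s:ℝ)) < (2 * (d:ℝ)) ^ α := lt_of_le_of_lt h2t hεlt
    by_contra hcon
    push_neg at hcon
    have h1 : (0:ℝ) ≤ 2 * (d:ℝ) := by positivity
    have h2 : (2 * (d:ℝ)) ^ α ≤ ((2:ℝ) ^ ((s:ℝ)/α)) ^ α :=
      Real.rpow_le_rpow h1 hcon hα.le
    rw [← Real.rpow_mul (by norm_num : (0:ℝ) ≤ 2) ((s:ℝ)/α) α] at h2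
    rw [div_mul_cancel₀ (s:ℝ) (ne_of_gt hα)] at h2
    linarith
  -- basic fact: a good size is large
  have hgsize : ∀ t m, 1 ≤ t → good t m → sig t ≤ ((m:ℝ) - 1) := by
    intro t m ht hg
    obtain ⟨hm2, hge⟩ := hg
    have hcast : ((m-1:ℕ):ℝ) = (m:ℝ) - 1 := by
      have : (1:ℕ) ≤ m := by omega
      push_cast [this]; ring
    have hb := hroot t (m-1) (by omega) hge
    rw [hcast] at hb
    have hmono : (2:ℝ) ^ ((((t-1:ℕ)):ℝ)/α) ≤ (2:ℝ) ^ ((t:ℝ)/α) := by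
      apply Real.rpow_le_rpow_of_exponent_le one_le_two
      gcongr
      exact_mod_cast Nat.sub_le t 1
    simp only [hsigdef]
    linarith
  have hmin : ∀ t m, 1 ≤ t → good t m → 2 ≤ m ∧ sig t ≤ (m:ℝ) := by
    intro t m ht hg
    refine ⟨hg.1, le_trans (hgsize t m ht hg) (by simp)⟩
  have hgap : ∀ t m m', 1 ≤ t → good t m → good t m' → m' < m → sig t ≤ (m:ℝ) - (m':ℝ) := by
    intro t m m' ht hg hg' hlt
    obtain ⟨hm2, hge⟩ := hg
    obtain ⟨hm2', hge'⟩ := hg'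
    set d := m - m' with hddef
    have hd1 : 1 ≤ d := by omega
    have hdpos : 0 < ε d := hεpos d hd1
    have h2tpos : (0:ℝ) < 2^t := by positivity
    -- from hsub : ε d ≥ 2^t / 2, i.e. 2^(t-1) ≤ ε d
    have hkey : (2:ℝ)^(t-1) ≤ ε d := by
      have h2 := hsub (m-1) (m'-1) (by omega) (by omega)
      have hsubeq : (m-1) - (m'-1) = d := by omega
      rw [hsubeq] at h2
      have e1 : (ε (m-1))⁻¹ ≤ ((2:ℝ)^t)⁻¹ := by
        apply inv_anti₀ h2tpos hge
      have e2 : (ε (m'-1))⁻¹ ≤ ((2:ℝ)^t)⁻¹ := by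
        apply inv_anti₀ h2tpos hge'
      have h3 : (ε d)⁻¹ ≤ 2 * ((2:ℝ)^t)⁻¹ := by linarith
      have h4 : (2:ℝ)^t ≤ 2 * ε d := by
        have h5 : (2:ℝ)^t = ((2:ℝ)^t * (ε d)⁻¹) * ε d := by
          field_simp
        rw [h5]
        calc ((2:ℝ)^t * (ε d)⁻¹) * ε d ≤ ((2:ℝ)^t * (2 * ((2:ℝ)^t)⁻¹)) * ε d := by
              gcongr
          _ = 2 * ε d := by field_simp
      have h6 : (2:ℝ)^(t-1) * 2 = (2:ℝ)^t := by
        rw [← pow_succ]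
        congr 1
        omega
      linarith
    have hb := hroot (t-1) d hd1 hkey
    have hcast : ((d:ℕ):ℝ) = (m:ℝ) - (m':ℝ) := by
      simp only [hddef]
      push_cast [Nat.cast_sub (le_of_lt hlt)]
      ring
    rw [hcast] at hb
    simp only [hsigdef]
    linarith
  have hcount : ∀ t n, 1 ≤ t → sig t * SSDkap (good t) n ≤ 2 * n := by
    intro t n ht
    exact SSDcount (good t) (sig t) (hsigpos t) (fun m => hmin t m ht)
      (fun m m' h1 h2 h3 => hgap t m m' ht h1 h2 h3) n
  set x : ℝ := (2:ℝ) ^ (-(1:ℝ)/α) with hxdef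
  have hx0 : 0 ≤ x := by positivity
  have hx1 : x < 1 := by
    apply Real.rpow_lt_one_of_one_lt_of_neg one_lt_two
    rw [neg_div]
    exact neg_neg_iff_pos.mpr (by positivity)
  have hkapx : ∀ t n, 1 ≤ t → (SSDkap (good t) n : ℝ) ≤ 4 * n * x ^ (t-1) := by
    intro t n ht
    have h1 := hcount t n ht
    have hxpow : x ^ (t-1) = ((2:ℝ)) ^ (-((((t-1:ℕ)):ℝ))/α) := by
      simp only [hxdef]
      rw [← Real.rpow_natCast ((2:ℝ) ^ (-(1:ℝ)/α)) (t-1)]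
      rw [← Real.rpow_mul (by norm_num : (0:ℝ) ≤ 2)]
      congr 1
      ring
    have hspos := hsigpos t
    have h2 : (SSDkap (good t) n : ℝ) ≤ 2*n / sig t := by
      rw [le_div_iff₀ hspos]
      linarith [h1, mul_comm (sig t) ((SSDkap (good t) n : ℝ))]
    refine le_trans h2 (le_of_eq ?_)
    simp only [hsigdef]
    rw [hxpow, neg_div, Real.rpow_neg (by norm_num : (0:ℝ) ≤ 2)]
    have hrpos : (0:ℝ) < (2:ℝ) ^ (((t-1:ℕ):ℝ)/α) := by positivity
    field_simp
    ring
  set Ca : ℝ := 4 * (1-x)⁻¹ with hCadef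
  have hCa0 : 0 < Ca := by
    simp only [hCadef]
    have : 0 < 1 - x := by linarith
    positivity
  have hkapsum : ∀ T n, (∑ t ∈ Finset.Icc 1 T, (SSDkap (good t) n : ℝ)) ≤ Ca * n := by
    intro T n
    have hgeom : ∑ t ∈ Finset.Icc 1 T, x^(t-1) ≤ (1-x)⁻¹ := by
      have he : ∀ S, ∑ t ∈ Finset.Icc 1 S, x^(t-1) = ∑ i ∈ Finset.range S, x^i := by
        intro S
        induction S with
        | zero => simp
        | succ S ihS =>
          rw [Finset.sum_Icc_succ_top (by omega : 1 ≤ S + 1), ihS, Finset.sum_range_succ]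
          simp
      rw [he T]
      refine le_trans (Summable.sum_le_tsum _ (fun i _ => by positivity)
        (summable_geometric_of_lt_one hx0 hx1)) ?_
      rw [tsum_geometric_of_lt_one hx0 hx1]
    calc ∑ t ∈ Finset.Icc 1 T, (SSDkap (good t) n : ℝ)
        ≤ ∑ t ∈ Finset.Icc 1 T, 4 * n * x^(t-1) := by
          apply Finset.sum_le_sum
          intro t htmem
          exact hkapx t n (Finset.mem_Icc.mp htmem).1
      _ = 4 * n * ∑ t ∈ Finset.Icc 1 T, x^(t-1) := by rw [Finset.mul_sum]
      _ ≤ 4 * n * (1-x)⁻¹ := by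
          apply mul_le_mul_of_nonneg_left hgeom (by positivity)
      _ = Ca * n := by simp only [hCadef]; ring
  -- ## Step 3: the majorant weights θ
  set θ : ℕ → ℕ → ℝ := fun T n =>
    2^(n-1) * ∏ t ∈ Finset.Icc 1 T, (2:ℝ)^(SSDkap (good t) n) with hθdef
  have hθpos : ∀ T n, 0 < θ T n := by
    intro T n
    simp only [hθdef]
    apply mul_pos (by positivity)
    apply Finset.prod_pos
    intro t _
    positivity
  have hθ1 : ∀ T, θ T 1 = 1 := by
    intro T
    simp only [hθdef, SSDkap_one]
    simp
  have hθsuper : ∀ T a b, 1 ≤ a → 1 ≤ b → θ T a * θ T b ≤ θ T (a+b) := by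
    intro T a' b' ha' hb'
    simp only [hθdef]
    have hd : ∏ t ∈ Finset.Icc 1 T, ((2:ℝ)^(SSDkap (good t) a') * (2:ℝ)^(SSDkap (good t) b'))
        = (∏ t ∈ Finset.Icc 1 T, (2:ℝ)^(SSDkap (good t) a')) *
          ∏ t ∈ Finset.Icc 1 T, (2:ℝ)^(SSDkap (good t) b') := Finset.prod_mul_distrib
    have h2 : (2:ℝ)^(a'-1) * (2:ℝ)^(b'-1) ≤ (2:ℝ)^(a'+b'-1) := by
      rw [← pow_add]
      apply pow_le_pow_right₀ one_le_two
      omega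
    have h3 : ∏ t ∈ Finset.Icc 1 T, ((2:ℝ)^(SSDkap (good t) a') * (2:ℝ)^(SSDkap (good t) b'))
        ≤ ∏ t ∈ Finset.Icc 1 T, (2:ℝ)^(SSDkap (good t) (a'+b')) := by
      apply Finset.prod_le_prod
      · intro t _; positivity
      · intro t _
        rw [← pow_add]
        apply pow_le_pow_right₀ one_le_two
        exact SSDkap_superadd (good t) a' b' ha' hb'
    calc (2:ℝ)^(a'-1) * (∏ t ∈ Finset.Icc 1 T, (2:ℝ)^(SSDkap (good t) a')) *
          ((2:ℝ)^(b'-1) * ∏ t ∈ Finset.Icc 1 T, (2:ℝ)^(SSDkap (good t) b'))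
        = ((2:ℝ)^(a'-1) * (2:ℝ)^(b'-1)) *
          ∏ t ∈ Finset.Icc 1 T, ((2:ℝ)^(SSDkap (good t) a') * (2:ℝ)^(SSDkap (good t) b')) := by
          rw [hd]; ring
      _ ≤ (2:ℝ)^(a'+b'-1) * ∏ t ∈ Finset.Icc 1 T, (2:ℝ)^(SSDkap (good t) (a'+b')) := by
          apply mul_le_mul h2 h3 ?_ (by positivity)
          apply Finset.prod_nonneg
          intro t _; positivity
  have habsorb : ∀ T n a b, a + b = n → 1 ≤ a → 1 ≤ b → 2 ≤ n →
      (max (ε (n-1)) 1 ≤ 2 * ∏ t ∈ Finset.Icc 1 T, (2:ℝ)^(if good t n then 1 else 0)) →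
      max (ε (n-1)) 1 * (θ T a * θ T b) ≤ θ T n := by
    intro T n a' b' hab ha' hb' hn2 hlev'
    simp only [hθdef]
    have hstep : ∀ t, t ∈ Finset.Icc 1 T →
        (if good t n then 1 else 0) + SSDkap (good t) a' + SSDkap (good t) b'
          ≤ SSDkap (good t) n := by
      intro t _
      have hsub' : n - a' = b' := by omega
      by_cases hgn : good t n
      · rw [if_pos hgn]
        have h := SSDkap_step_good (good t) n hn2 hgn a' ha' (by omega)
        rw [hsub'] at h
        omega
      · rw [if_neg hgn]
        have h := SSDkap_step (good t) n hn2 a' ha' (by omega)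
        rw [hsub'] at h
        omega
    calc max (ε (n-1)) 1 * (θ T a' * θ T b')
        ≤ (2 * ∏ t ∈ Finset.Icc 1 T, (2:ℝ)^(if good t n then 1 else 0)) * (θ T a' * θ T b') := by
          apply mul_le_mul_of_nonneg_right hlev'
          exact mul_nonneg (hθpos T a').le (hθpos T b').le
      _ = ((2:ℝ) * (2:ℝ)^(a'-1) * (2:ℝ)^(b'-1)) * ∏ t ∈ Finset.Icc 1 T,
            ((2:ℝ)^(if good t n then 1 else 0) * ((2:ℝ)^(SSDkap (good t) a') *
             (2:ℝ)^(SSDkap (good t) b'))) := by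
          simp only [hθdef]
          have hd1 : ∏ t ∈ Finset.Icc 1 T, ((2:ℝ)^(if good t n then 1 else 0) *
              ((2:ℝ)^(SSDkap (good t) a') * (2:ℝ)^(SSDkap (good t) b')))
              = (∏ t ∈ Finset.Icc 1 T, (2:ℝ)^(if good t n then 1 else 0)) *
                ∏ t ∈ Finset.Icc 1 T, ((2:ℝ)^(SSDkap (good t) a') * (2:ℝ)^(SSDkap (good t) b')) :=
            Finset.prod_mul_distrib
          have hd2 : ∏ t ∈ Finset.Icc 1 T, ((2:ℝ)^(SSDkap (good t) a') * (2:ℝ)^(SSDkap (good t) b'))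
              = (∏ t ∈ Finset.Icc 1 T, (2:ℝ)^(SSDkap (good t) a')) *
                ∏ t ∈ Finset.Icc 1 T, (2:ℝ)^(SSDkap (good t) b') := Finset.prod_mul_distrib
          rw [hd1, hd2]; ring
      _ ≤ ((2:ℝ)^(n-1)) * ∏ t ∈ Finset.Icc 1 T, (2:ℝ)^(SSDkap (good t) n) := by
          apply mul_le_mul
          · rw [← pow_succ']
            rw [← pow_add]
            apply pow_le_pow_right₀ one_le_two
            omega
          · apply Finset.prod_le_prod
            · intro t _; positivity
            · intro t htm
              rw [← pow_add, ← pow_add]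
              apply pow_le_pow_right₀ one_le_two
              have := hstep t htm
              omega
          · apply Finset.prod_nonneg; intro t _; positivity
          · positivity
  have hlev : ∀ T m, 2 ≤ m → max (ε (m-1)) 1 < (2:ℝ)^(T+1) →
      max (ε (m-1)) 1 ≤ 2 * ∏ t ∈ Finset.Icc 1 T, (2:ℝ)^(if good t m then 1 else 0) := by
    intro T m hm2 hup
    set e : ℝ := max (ε (m-1)) 1 with hedef
    have he1 : 1 ≤ e := le_max_right _ _
    set F : ℕ := ⌊e⌋₊ with hFdef
    have hF1 : 1 ≤ F := Nat.le_floor (by exact_mod_cast he1)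
    set k : ℕ := Nat.log 2 F with hkdef
    have h2k : ((2:ℝ))^k ≤ e := by
      calc ((2:ℝ))^k = ((2^k : ℕ) : ℝ) := by push_cast; ring
        _ ≤ (F : ℝ) := by exact_mod_cast Nat.pow_log_le_self 2 (by omega)
        _ ≤ e := Nat.floor_le (by linarith)
    have hek : e < (2:ℝ)^(k+1) := by
      have h1 : F < 2^(k+1) := Nat.lt_pow_succ_log_self (by norm_num) F
      have h2 : e < (F:ℝ) + 1 := Nat.lt_floor_add_one e
      have h3 : ((F:ℝ)) + 1 ≤ ((2^(k+1) : ℕ) : ℝ) := by exact_mod_cast h1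
      push_cast at h3
      linarith
    have hkT : k ≤ T := by
      have : (2:ℝ)^k < (2:ℝ)^(T+1) := lt_of_le_of_lt h2k hup
      have := (pow_lt_pow_iff_right₀ one_lt_two).mp this
      omega
    have hgoods : ∀ t, t ∈ Finset.Icc 1 k → good t m := by
      intro t htm
      obtain ⟨ht1, htk⟩ := Finset.mem_Icc.mp htm
      refine ⟨hm2, ?_⟩
      have h2t : (2:ℝ)^t ≤ (2:ℝ)^k := pow_le_pow_right₀ one_le_two htk
      by_cases hε1 : 1 ≤ ε (m-1)
      · have : e = ε (m-1) := max_eq_left hε1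
        rw [← this]; linarith
      · exfalso
        push_neg at hε1
        have : e = 1 := max_eq_right (by linarith)
        have h2t1 : (2:ℝ)^1 ≤ (2:ℝ)^t := pow_le_pow_right₀ one_le_two ht1
        rw [this] at h2k
        norm_num at h2t1
        linarith
    have hprod1 : ((2:ℝ))^k = ∏ t ∈ Finset.Icc 1 k, (2:ℝ)^(if good t m then 1 else 0) := by
      rw [Finset.prod_congr rfl (fun t htm => by rw [if_pos (hgoods t htm)])]
      rw [Finset.prod_const]
      rw [Nat.card_Icc]
      norm_num
    have hprod2 : ∏ t ∈ Finset.Icc 1 k, (2:ℝ)^(if good t m then 1 else 0)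
        ≤ ∏ t ∈ Finset.Icc 1 T, (2:ℝ)^(if good t m then 1 else 0) := by
      rw [Finset.prod_pow_eq_pow_sum, Finset.prod_pow_eq_pow_sum]
      apply pow_le_pow_right₀ one_le_two
      apply Finset.sum_le_sum_of_subset (Finset.Icc_subset_Icc_right hkT)
    have hfin : e < 2 * ∏ t ∈ Finset.Icc 1 T, (2:ℝ)^(if good t m then 1 else 0) := by
      calc e < (2:ℝ)^(k+1) := hek
        _ = 2 * (2:ℝ)^k := by rw [pow_succ]; ring
        _ = 2 * ∏ t ∈ Finset.Icc 1 k, (2:ℝ)^(if good t m then 1 else 0) := by rw [hprod1]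
        _ ≤ 2 * ∏ t ∈ Finset.Icc 1 T, (2:ℝ)^(if good t m then 1 else 0) := by
            linarith [hprod2]
    exact hfin.le
  -- ## Step 4: the majorant series
  set bco : ℕ → ℕ → ℝ := fun T k => if k = 0 then 0 else θ T k * q^(k-1) / (k:ℝ)^2 with hbcodef
  have hbnn : ∀ T k, 0 ≤ bco T k := by
    intro T k
    simp only [hbcodef]
    split
    · exact le_refl 0
    · exact div_nonneg (mul_nonneg (hθpos T k).le (by positivity)) (by positivity)
  set B : ℕ → PowerSeries ℝ := fun T => PowerSeries.mk (bco T) with hBdef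
  have hBco : ∀ T k, PowerSeries.coeff (R := ℝ) k (B T) = bco T k := by
    intro T k; simp only [hBdef, PowerSeries.coeff_mk]
  have hB0 : ∀ T, PowerSeries.coeff (R := ℝ) 0 (B T) = 0 := by
    intro T; rw [hBco]; simp [hbcodef]
  have hBpownn : ∀ T l k, 0 ≤ PowerSeries.coeff (R := ℝ) k ((B T)^l) := by
    intro T l
    induction l with
    | zero =>
      intro k
      rw [pow_zero, PowerSeries.coeff_one]
      split <;> norm_num
    | succ l ihl =>
      intro k
      rw [pow_succ, PowerSeries.coeff_mul]
      apply Finset.sum_nonneg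
      intro p _
      refine mul_nonneg (ihl p.1) ?_
      rw [hBco]
      exact hbnn T p.2
  have hbin : ∀ n : ℕ, 1 ≤ n →
      (∑ p ∈ Finset.HasAntidiagonal.antidiagonal n, ((1:ℝ)/((p.1:ℝ))^2) * ((1:ℝ)/((p.2:ℝ))^2))
        ≤ K / (n:ℝ)^2 := by
    intro n hn
    rw [hKdef]
    exact SSDbin n hn
  -- the convolution bound for powers of B
  have hconv : ∀ T l, 1 ≤ l → ∀ m, 1 ≤ m →
      q^(l-1) * PowerSeries.coeff (R := ℝ) m ((B T)^l)
        ≤ θ T m * q^(m-1) * K^(l-1) / (m:ℝ)^2 := by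
    intro T l hl
    induction l, hl using Nat.le_induction with
    | base =>
      intro m hm
      rw [pow_one, hBco]
      simp only [hbcodef]
      rw [if_neg (by omega)]
      simp only [Nat.sub_self, pow_zero, one_mul, mul_one]
      exact le_refl _
    | succ l hl ihl =>
      intro m hm
      have hidx : l + 1 - 1 = l := by omega
      rw [hidx, pow_succ, PowerSeries.coeff_mul, Finset.mul_sum]
      -- goal: sum bound
      have hql : q^l = q * q^(l-1) := by
        rw [← pow_succ']
        congr 1
        omega
      have hterm : ∀ p ∈ Finset.HasAntidiagonal.antidiagonal m,
          q^l * (PowerSeries.coeff (R := ℝ) p.1 ((B T)^l) * PowerSeries.coeff (R := ℝ) p.2 (B T))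
            ≤ (θ T m * q^(m-1) * K^(l-1)) * (((1:ℝ)/((p.1:ℝ))^2) * ((1:ℝ)/((p.2:ℝ))^2)) := by
        intro p hp
        have hpq : p.1 + p.2 = m := Finset.HasAntidiagonal.mem_antidiagonal.mp hp
        rcases Nat.eq_zero_or_pos p.1 with h1 | h1
        · rw [h1, SSDconst (B T) (hB0 T) l (by omega)]
          simp
        rcases Nat.eq_zero_or_pos p.2 with h2 | h2
        · rw [h2, hB0 T]
          simp
        have hp1 : (1:ℕ) ≤ p.1 := h1
        have hp2 : (1:ℕ) ≤ p.2 := h2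
        have e1 := ihl p.1 hp1
        have e2 : PowerSeries.coeff (R := ℝ) p.2 (B T) = θ T p.2 * q^(p.2-1) / ((p.2:ℝ))^2 := by
          rw [hBco]
          simp only [hbcodef]
          rw [if_neg (by omega)]
        have hcnn : 0 ≤ PowerSeries.coeff (R := ℝ) p.1 ((B T)^l) := hBpownn T l p.1
        have hbnn2 : 0 ≤ θ T p.2 * q^(p.2-1) / ((p.2:ℝ))^2 := by
          have := (hθpos T p.2).le
          positivity
        have step1 : q^l * (PowerSeries.coeff (R := ℝ) p.1 ((B T)^l) * PowerSeries.coeff (R := ℝ) p.2 (B T))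
            = q * ((q^(l-1) * PowerSeries.coeff (R := ℝ) p.1 ((B T)^l))
                * (θ T p.2 * q^(p.2-1) / ((p.2:ℝ))^2)) := by
          rw [e2, hql]; ring
        rw [step1]
        have step2 : (q^(l-1) * PowerSeries.coeff (R := ℝ) p.1 ((B T)^l))
              * (θ T p.2 * q^(p.2-1) / ((p.2:ℝ))^2)
            ≤ (θ T p.1 * q^(p.1-1) * K^(l-1) / ((p.1:ℝ))^2)
              * (θ T p.2 * q^(p.2-1) / ((p.2:ℝ))^2) := by
          apply mul_le_mul_of_nonneg_right e1 hbnn2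
        have hqpow : q * (q^(p.1-1) * q^(p.2-1)) = q^(m-1) := by
          rw [← pow_add, ← pow_succ']
          congr 1
          omega
        have step3 : (θ T p.1 * q^(p.1-1) * K^(l-1) / ((p.1:ℝ))^2)
              * (θ T p.2 * q^(p.2-1) / ((p.2:ℝ))^2)
            = (θ T p.1 * θ T p.2) * (q^(p.1-1) * q^(p.2-1)) * K^(l-1)
              * (((1:ℝ)/((p.1:ℝ))^2) * ((1:ℝ)/((p.2:ℝ))^2)) := by
          ring
        have hθs := hθsuper T p.1 p.2 hp1 hp2
        rw [hpq] at hθs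
        calc q * ((q^(l-1) * PowerSeries.coeff (R := ℝ) p.1 ((B T)^l))
                * (θ T p.2 * q^(p.2-1) / ((p.2:ℝ))^2))
            ≤ q * ((θ T p.1 * q^(p.1-1) * K^(l-1) / ((p.1:ℝ))^2)
                * (θ T p.2 * q^(p.2-1) / ((p.2:ℝ))^2)) := by
              apply mul_le_mul_of_nonneg_left step2 (le_of_lt hq0)
          _ = (θ T p.1 * θ T p.2) * (q * (q^(p.1-1) * q^(p.2-1))) * K^(l-1)
              * (((1:ℝ)/((p.1:ℝ))^2) * ((1:ℝ)/((p.2:ℝ))^2)) := by ring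
          _ ≤ (θ T m) * (q * (q^(p.1-1) * q^(p.2-1))) * K^(l-1)
              * (((1:ℝ)/((p.1:ℝ))^2) * ((1:ℝ)/((p.2:ℝ))^2)) := by
              apply mul_le_mul_of_nonneg_right ?_ (by positivity)
              apply mul_le_mul_of_nonneg_right ?_ (by positivity)
              apply mul_le_mul_of_nonneg_right hθs (by positivity)
          _ = (θ T m * q^(m-1) * K^(l-1)) * (((1:ℝ)/((p.1:ℝ))^2) * ((1:ℝ)/((p.2:ℝ))^2)) := by
              rw [hqpow]
      calc ∑ p ∈ Finset.HasAntidiagonal.antidiagonal m,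
            q^l * (PowerSeries.coeff (R := ℝ) p.1 ((B T)^l) * PowerSeries.coeff (R := ℝ) p.2 (B T))
          ≤ ∑ p ∈ Finset.HasAntidiagonal.antidiagonal m,
            (θ T m * q^(m-1) * K^(l-1)) * (((1:ℝ)/((p.1:ℝ))^2) * ((1:ℝ)/((p.2:ℝ))^2)) :=
            Finset.sum_le_sum hterm
        _ = (θ T m * q^(m-1) * K^(l-1)) * ∑ p ∈ Finset.HasAntidiagonal.antidiagonal m,
            (((1:ℝ)/((p.1:ℝ))^2) * ((1:ℝ)/((p.2:ℝ))^2)) := by rw [Finset.mul_sum]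
        _ ≤ (θ T m * q^(m-1) * K^(l-1)) * (K / (m:ℝ)^2) := by
            apply mul_le_mul_of_nonneg_left (hbin m hm) ?_
            have := (hθpos T m).le
            positivity
        _ = θ T m * q^(m-1) * K^l / (m:ℝ)^2 := by
            have hKl : K^l = K * K^(l-1) := by
              rw [← pow_succ']
              congr 1
              omega
            rw [hKl]
            ring
  -- single absorb convolution step
  have habsl : ∀ T n, 2 ≤ n →
      (max (ε (n-1)) 1 ≤ 2 * ∏ t ∈ Finset.Icc 1 T, (2:ℝ)^(if good t n then 1 else 0)) →
      ∀ l, 2 ≤ l →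
      max (ε (n-1)) 1 * PowerSeries.coeff (R := ℝ) n ((B T)^l)
        ≤ θ T n * q^(n-1) / (n:ℝ)^2 * (K/q)^(l-1) := by
    intro T n hn2 hlevn l hl2
    obtain ⟨l', rfl⟩ : ∃ l', l = l' + 1 := ⟨l - 1, by omega⟩
    have hl'1 : 1 ≤ l' := by omega
    have hidx2 : l' + 1 - 1 = l' := by omega
    rw [hidx2, pow_succ, PowerSeries.coeff_mul, Finset.mul_sum]
    have he0 : (0:ℝ) < max (ε (n-1)) 1 := lt_of_lt_of_le one_pos (le_max_right _ _)
    have hterm : ∀ p ∈ Finset.HasAntidiagonal.antidiagonal n,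
        max (ε (n-1)) 1 * (PowerSeries.coeff (R := ℝ) p.1 ((B T)^l') * PowerSeries.coeff (R := ℝ) p.2 (B T))
          ≤ (θ T n * q^(n-2) * (K^(l'-1)/q^(l'-1)))
              * (((1:ℝ)/((p.1:ℝ))^2) * ((1:ℝ)/((p.2:ℝ))^2)) := by
      intro p hp
      have hpq := Finset.HasAntidiagonal.mem_antidiagonal.mp hp
      rcases Nat.eq_zero_or_pos p.1 with h1 | h1
      · rw [h1, SSDconst (B T) (hB0 T) l' (by omega)]
        simp
      rcases Nat.eq_zero_or_pos p.2 with h2 | h2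
      · rw [h2, hB0 T]
        simp
      have e2 : PowerSeries.coeff (R := ℝ) p.2 (B T) = θ T p.2 * q^(p.2-1) / ((p.2:ℝ))^2 := by
        rw [hBco]
        simp only [hbcodef]
        rw [if_neg (by omega)]
      have e1 : PowerSeries.coeff (R := ℝ) p.1 ((B T)^l')
          ≤ θ T p.1 * q^(p.1-1) * K^(l'-1) / ((p.1:ℝ))^2 / q^(l'-1) := by
        have h := hconv T l' hl'1 p.1 h1
        rw [le_div_iff₀ (by positivity)]
        calc PowerSeries.coeff (R := ℝ) p.1 ((B T)^l') * q^(l'-1)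
            = q^(l'-1) * PowerSeries.coeff (R := ℝ) p.1 ((B T)^l') := by ring
          _ ≤ θ T p.1 * q^(p.1-1) * K^(l'-1) / ((p.1:ℝ))^2 := h
      have hb2nn : (0:ℝ) ≤ θ T p.2 * q^(p.2-1) / ((p.2:ℝ))^2 := by
        have := (hθpos T p.2).le
        positivity
      have habs2 := habsorb T n p.1 p.2 hpq h1 h2 hn2 hlevn
      have hqpow2 : q^(p.1-1) * q^(p.2-1) = q^(n-2) := by
        rw [← pow_add]
        congr 1
        omega
      rw [e2]
      calc max (ε (n-1)) 1 * (PowerSeries.coeff (R := ℝ) p.1 ((B T)^l')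
              * (θ T p.2 * q^(p.2-1) / ((p.2:ℝ))^2))
          ≤ max (ε (n-1)) 1 * ((θ T p.1 * q^(p.1-1) * K^(l'-1) / ((p.1:ℝ))^2 / q^(l'-1))
              * (θ T p.2 * q^(p.2-1) / ((p.2:ℝ))^2)) := by
            apply mul_le_mul_of_nonneg_left ?_ he0.le
            apply mul_le_mul_of_nonneg_right e1 hb2nn
        _ = (max (ε (n-1)) 1 * (θ T p.1 * θ T p.2)) * (q^(p.1-1) * q^(p.2-1))
              * (K^(l'-1)/q^(l'-1)) * (((1:ℝ)/((p.1:ℝ))^2) * ((1:ℝ)/((p.2:ℝ))^2)) := by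
            ring
        _ ≤ (θ T n) * (q^(p.1-1) * q^(p.2-1))
              * (K^(l'-1)/q^(l'-1)) * (((1:ℝ)/((p.1:ℝ))^2) * ((1:ℝ)/((p.2:ℝ))^2)) := by
            apply mul_le_mul_of_nonneg_right ?_ (by positivity)
            apply mul_le_mul_of_nonneg_right ?_ (by positivity)
            apply mul_le_mul_of_nonneg_right habs2 (by positivity)
        _ = (θ T n * q^(n-2) * (K^(l'-1)/q^(l'-1)))
              * (((1:ℝ)/((p.1:ℝ))^2) * ((1:ℝ)/((p.2:ℝ))^2)) := by
            rw [hqpow2]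
    calc ∑ p ∈ Finset.HasAntidiagonal.antidiagonal n,
          max (ε (n-1)) 1 * (PowerSeries.coeff (R := ℝ) p.1 ((B T)^l') * PowerSeries.coeff (R := ℝ) p.2 (B T))
        ≤ ∑ p ∈ Finset.HasAntidiagonal.antidiagonal n,
          (θ T n * q^(n-2) * (K^(l'-1)/q^(l'-1)))
            * (((1:ℝ)/((p.1:ℝ))^2) * ((1:ℝ)/((p.2:ℝ))^2)) := Finset.sum_le_sum hterm
      _ = (θ T n * q^(n-2) * (K^(l'-1)/q^(l'-1))) * ∑ p ∈ Finset.HasAntidiagonal.antidiagonal n,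
            (((1:ℝ)/((p.1:ℝ))^2) * ((1:ℝ)/((p.2:ℝ))^2)) := by rw [Finset.mul_sum]
      _ ≤ (θ T n * q^(n-2) * (K^(l'-1)/q^(l'-1))) * (K / (n:ℝ)^2) := by
          apply mul_le_mul_of_nonneg_left (hbin n (by omega)) ?_
          have := (hθpos T n).le
          positivity
      _ = θ T n * q^(n-1) / (n:ℝ)^2 * (K/q)^l' := by
          have hq' : q^(n-1) = q^(n-2) * q := by
            rw [← pow_succ]
            congr 1
            omega
          have hK' : K^(l') = K^(l'-1) * K := by
            rw [← pow_succ]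
            congr 1
            omega
          have hqd : q^(l') = q^(l'-1) * q := by
            rw [← pow_succ]
            congr 1
            omega
          rw [div_pow, hq', hK', hqd]
          have hqne : q ≠ 0 := ne_of_gt hq0
          have hqlne : q^(l'-1) ≠ 0 := pow_ne_zero _ hqne
          field_simp
  -- the main inductive bound
  have main : ∀ T n, 1 ≤ n →
      (∀ m, 2 ≤ m → m ≤ n → max (ε (m-1)) 1 < (2:ℝ)^(T+1)) →
      ‖c n‖ ≤ θ T n * q^(n-1) / (n:ℝ)^2 := by
    intro T n
    induction n using Nat.strong_induction_on with
    | _ n ihn =>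
      intro hn1 hadeq
      rcases eq_or_lt_of_le hn1 with h1 | h1
      · obtain rfl : n = 1 := h1.symm
        rw [hc1, norm_one, hθ1 T]
        norm_num
      · have hn2 : 2 ≤ n := h1
        have hcmp : ∀ k, ‖PowerSeries.coeff (R := ℂ) k (PowerSeries.mk (fun k => if k < n then c k else 0))‖
            ≤ PowerSeries.coeff (R := ℝ) k (PowerSeries.mk (fun k => if k < n then bco T k else 0)) := by
          intro k
          rw [PowerSeries.coeff_mk, PowerSeries.coeff_mk]
          by_cases hk : k < n
          · rw [if_pos hk, if_pos hk]
            rcases Nat.eq_zero_or_pos k with rfl | hk1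
            · rw [hc0]
              simp only [hbcodef]
              simp
            · have hkb := ihn k hk hk1 (fun m hm2 hmk => hadeq m hm2 (by omega))
              simp only [hbcodef]
              rw [if_neg (by omega)]
              exact hkb
          · rw [if_neg hk, if_neg hk]
            simp
        have hkey : ∀ l, 2 ≤ l → ‖PowerSeries.coeff (R := ℂ) n ((PowerSeries.mk c)^l)‖
            ≤ PowerSeries.coeff (R := ℝ) n ((B T)^l) := by
          intro l hl
          have hmk0 : PowerSeries.coeff (R := ℂ) 0 (PowerSeries.mk c) = 0 := by
            rw [PowerSeries.coeff_mk]
            exact hc0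
          have hmk0' : PowerSeries.coeff (R := ℂ) 0 (PowerSeries.mk (fun k => if k < n then c k else 0)) = 0 := by
            rw [PowerSeries.coeff_mk, if_pos (by omega : 0 < n)]
            exact hc0
          have ht1 := SSDtrunc (PowerSeries.mk c) (PowerSeries.mk (fun k => if k < n then c k else 0))
            n hmk0 hmk0'
            (fun k hk => by rw [PowerSeries.coeff_mk, PowerSeries.coeff_mk, if_pos hk]) l hl
          have hB0' : PowerSeries.coeff (R := ℝ) 0 (PowerSeries.mk (fun k => if k < n then bco T k else 0)) = 0 := by
            rw [PowerSeries.coeff_mk, if_pos (by omega : 0 < n)]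
            simp only [hbcodef]
            simp
          have ht2 := SSDtrunc (B T) (PowerSeries.mk (fun k => if k < n then bco T k else 0))
            n (hB0 T) hB0'
            (fun k hk => by rw [hBco, PowerSeries.coeff_mk, if_pos hk]) l hl
          rw [ht1, ht2]
          exact SSDcmp _ _ hcmp l n
        have hεn := hεpos (n-1) (by omega)
        have hcn : c n = ((ε (n-1) : ℝ) : ℂ)
            * ∑ l ∈ Finset.range (n+1), a l * PowerSeries.coeff (R := ℂ) n ((PowerSeries.mk c)^l) := by
          have h := heq n hn2
          have hne : ((ε (n-1) : ℝ) : ℂ) ≠ 0 := by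
            exact_mod_cast ne_of_gt hεn
          rw [← h]
          field_simp
        have hsum2 : ∑ l ∈ Finset.range (n+1), a l * PowerSeries.coeff (R := ℂ) n ((PowerSeries.mk c)^l)
            = ∑ l ∈ Finset.Icc 2 n, a l * PowerSeries.coeff (R := ℂ) n ((PowerSeries.mk c)^l) := by
          symm
          apply Finset.sum_subset
          · intro l hl
            rw [Finset.mem_range]
            have := (Finset.mem_Icc.mp hl).2
            omega
          · intro l hlr hlnot
            rw [Finset.mem_range] at hlr
            rw [Finset.mem_Icc] at hlnot
            have : l = 0 ∨ l = 1 := by omega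
            rcases this with rfl | rfl
            · rw [ha0, zero_mul]
            · rw [ha1, zero_mul]
        have hεe : ε (n-1) ≤ max (ε (n-1)) 1 := le_max_left _ _
        have he0 : (0:ℝ) < max (ε (n-1)) 1 := lt_of_lt_of_le one_pos (le_max_right _ _)
        have hnorm1 : ‖c n‖ ≤ max (ε (n-1)) 1
            * ∑ l ∈ Finset.Icc 2 n, (M*R^l) * PowerSeries.coeff (R := ℝ) n ((B T)^l) := by
          rw [hcn, hsum2, norm_mul]
          have h1' : ‖((ε (n-1):ℝ) : ℂ)‖ = ε (n-1) := by
            rw [Complex.norm_real, Real.norm_eq_abs, abs_of_pos hεn]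
          rw [h1']
          apply mul_le_mul hεe ?_ (norm_nonneg _) he0.le
          refine le_trans (norm_sum_le _ _) (Finset.sum_le_sum ?_)
          intro l hlm
          obtain ⟨hl2, hln⟩ := Finset.mem_Icc.mp hlm
          rw [norm_mul]
          apply mul_le_mul (haMR l) (hkey l hl2) (norm_nonneg _) (by positivity)
        have hlevn := hlev T n hn2 (hadeq n hn2 (le_refl n))
        have habsn := habsl T n hn2 hlevn
        have hterm2 : ∀ l ∈ Finset.Icc 2 n,
            (M*R^l) * (max (ε (n-1)) 1 * PowerSeries.coeff (R := ℝ) n ((B T)^l))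
              ≤ θ T n * q^(n-1) / (n:ℝ)^2 * ((1:ℝ)/2)^(l-1) := by
          intro l hlm
          obtain ⟨hl2, hln⟩ := Finset.mem_Icc.mp hlm
          have h1' := habsn l hl2
          have hMR0 : (0:ℝ) ≤ M * R^l := by positivity
          have hA0 : (0:ℝ) ≤ θ T n * q^(n-1) / (n:ℝ)^2 := by
            have := (hθpos T n).le
            positivity
          have h3 : (M*R^l) * (K/q)^(l-1) ≤ ((1:ℝ)/2)^(l-1) := by
            have hM0 : M ≠ 0 := by linarith
            have hR0 : R ≠ 0 := by linarith
            have hKq : K/q = 1/(2*M*R^2) := by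
              rw [hqdef, hKdef]
              field_simp
            have hden : ((2*M*R^2):ℝ)^(l-1) = 2^(l-1)*(M^(l-1)*(R^2)^(l-1)) := by
              rw [mul_pow, mul_pow]
              ring
            have hdenpos : (0:ℝ) < (2*M*R^2)^(l-1) := by positivity
            have hM' : M ≤ M^(l-1) := by
              calc M = M^1 := (pow_one M).symm
                _ ≤ M^(l-1) := pow_le_pow_right₀ hM1 (by omega)
            have hR' : R^l ≤ (R^2)^(l-1) := by
              rw [← pow_mul]
              apply pow_le_pow_right₀ hR1
              omega
            have hnum : M * R^l ≤ M^(l-1) * (R^2)^(l-1) := by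
              apply mul_le_mul hM' hR' (by positivity) (by positivity)
            rw [hKq, div_pow, one_pow, mul_one_div]
            rw [div_le_iff₀ hdenpos]
            rw [hden]
            calc M * R^l ≤ M^(l-1) * (R^2)^(l-1) := hnum
              _ = ((1:ℝ)/2)^(l-1) * (2^(l-1)*(M^(l-1)*(R^2)^(l-1))) := by
                  rw [div_pow, one_pow]
                  field_simp
          calc (M*R^l) * (max (ε (n-1)) 1 * PowerSeries.coeff (R := ℝ) n ((B T)^l))
              ≤ (M*R^l) * (θ T n * q^(n-1) / (n:ℝ)^2 * (K/q)^(l-1)) :=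
                mul_le_mul_of_nonneg_left h1' hMR0
            _ = (θ T n * q^(n-1) / (n:ℝ)^2) * ((M*R^l) * (K/q)^(l-1)) := by ring
            _ ≤ (θ T n * q^(n-1) / (n:ℝ)^2) * ((1:ℝ)/2)^(l-1) :=
                mul_le_mul_of_nonneg_left h3 hA0
        have hgeo2 : ∑ l ∈ Finset.Icc 2 n, ((1:ℝ)/2)^(l-1) ≤ 1 := by
          have he : ∀ S : ℕ, ∑ l ∈ Finset.Icc 2 S, ((1:ℝ)/2)^(l-1)
              = ∑ i ∈ Finset.range (S-1), ((1:ℝ)/2)^(i+1) := by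
            intro S
            induction S with
            | zero => simp
            | succ S ihS =>
              rcases Nat.lt_or_ge (S+1) 2 with hS | hS
              · have : S = 0 := by omega
                subst this
                simp
              · rw [Finset.sum_Icc_succ_top hS, ihS]
                have h2' : S + 1 - 1 = (S-1) + 1 := by omega
                rw [h2']
                rw [Finset.sum_range_succ]
          rw [he n]
          calc ∑ i ∈ Finset.range (n-1), ((1:ℝ)/2)^(i+1)
              = (1/2) * ∑ i ∈ Finset.range (n-1), ((1:ℝ)/2)^i := by
                rw [Finset.mul_sum]
                apply Finset.sum_congr rfl
                intro i _
                rw [pow_succ]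
                ring
            _ ≤ (1/2) * 2 := by
                apply mul_le_mul_of_nonneg_left ?_ (by norm_num)
                exact sum_geometric_two_le _
            _ = 1 := by norm_num
        calc ‖c n‖ ≤ max (ε (n-1)) 1
              * ∑ l ∈ Finset.Icc 2 n, (M*R^l) * PowerSeries.coeff (R := ℝ) n ((B T)^l) := hnorm1
          _ = ∑ l ∈ Finset.Icc 2 n, (M*R^l)
              * (max (ε (n-1)) 1 * PowerSeries.coeff (R := ℝ) n ((B T)^l)) := by
              rw [Finset.mul_sum]
              apply Finset.sum_congr rfl
              intro l _
              ring
          _ ≤ ∑ l ∈ Finset.Icc 2 n, θ T n * q^(n-1) / (n:ℝ)^2 * ((1:ℝ)/2)^(l-1) :=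
              Finset.sum_le_sum hterm2
          _ = θ T n * q^(n-1) / (n:ℝ)^2 * ∑ l ∈ Finset.Icc 2 n, ((1:ℝ)/2)^(l-1) := by
              rw [Finset.mul_sum]
          _ ≤ θ T n * q^(n-1) / (n:ℝ)^2 * 1 := by
              apply mul_le_mul_of_nonneg_left hgeo2 ?_
              have := (hθpos T n).le
              positivity
          _ = θ T n * q^(n-1) / (n:ℝ)^2 := by ring
  -- ## Final assembly
  set Q : ℝ := 2 * (2:ℝ)^Ca * q with hQdef
  have h2Ca : (0:ℝ) < (2:ℝ)^Ca := Real.rpow_pos_of_pos two_pos Ca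
  have hQ0 : 0 < Q := by
    simp only [hQdef]
    positivity
  have hcQ : ∀ n, 1 ≤ n → ‖c n‖ ≤ Q^n := by
    intro n hn1
    set T : ℕ := (Finset.Icc 2 n).sup (fun m => ⌊max (ε (m-1)) 1⌋₊) with hTdef
    have hadeq : ∀ m, 2 ≤ m → m ≤ n → max (ε (m-1)) 1 < (2:ℝ)^(T+1) := by
      intro m hm2 hmn
      have h1 : ⌊max (ε (m-1)) 1⌋₊ ≤ T := by
        apply Finset.le_sup (f := fun m => ⌊max (ε (m-1)) 1⌋₊)
        exact Finset.mem_Icc.mpr ⟨hm2, hmn⟩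
      have h2 : max (ε (m-1)) 1 < (⌊max (ε (m-1)) 1⌋₊ : ℝ) + 1 := Nat.lt_floor_add_one _
      have h4 : T + 1 ≤ 2^(T+1) := by
        have h5 := Nat.lt_two_pow_self (n := T)
        have h6 : (2:ℕ)^T ≤ 2^(T+1) := Nat.pow_le_pow_right (by norm_num) (by omega)
        omega
      have h3 : (T:ℝ) + 1 ≤ (2:ℝ)^(T+1) := by
        calc (T:ℝ) + 1 = ((T+1 : ℕ) : ℝ) := by push_cast; ring
          _ ≤ ((2^(T+1) : ℕ) : ℝ) := by exact_mod_cast h4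
          _ = (2:ℝ)^(T+1) := by push_cast; ring
      have h6 : ((⌊max (ε (m-1)) 1⌋₊ : ℕ):ℝ) ≤ (T:ℝ) := by exact_mod_cast h1
      linarith
    have hmain := main T n hn1 hadeq
    have hθb : θ T n ≤ 2^(n-1) * ((2:ℝ)^Ca)^n := by
      simp only [hθdef]
      apply mul_le_mul_of_nonneg_left ?_ (by positivity)
      rw [Finset.prod_pow_eq_pow_sum]
      have hS : ((∑ t ∈ Finset.Icc 1 T, SSDkap (good t) n : ℕ):ℝ) ≤ Ca * n := by
        push_cast
        exact hkapsum T n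
      calc (2:ℝ)^(∑ t ∈ Finset.Icc 1 T, SSDkap (good t) n)
          = (2:ℝ)^(((∑ t ∈ Finset.Icc 1 T, SSDkap (good t) n : ℕ)):ℝ) := by
            rw [Real.rpow_natCast]
        _ ≤ (2:ℝ)^(Ca * n) := Real.rpow_le_rpow_of_exponent_le one_le_two hS
        _ = ((2:ℝ)^Ca)^n := by
            rw [Real.rpow_mul (by norm_num : (0:ℝ) ≤ 2), Real.rpow_natCast]
    have hone : (1:ℝ) ≤ (n:ℝ)^2 := by
      have hc' : (1:ℝ) ≤ (n:ℝ) := by exact_mod_cast hn1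
      nlinarith
    calc ‖c n‖ ≤ θ T n * q^(n-1) / (n:ℝ)^2 := hmain
      _ ≤ θ T n * q^(n-1) := by
          apply div_le_self ?_ hone
          exact mul_nonneg (hθpos T n).le (by positivity)
      _ ≤ (2^(n-1) * ((2:ℝ)^Ca)^n) * q^(n-1) :=
          mul_le_mul_of_nonneg_right hθb (by positivity)
      _ ≤ (2^n * ((2:ℝ)^Ca)^n) * q^n := by
          apply mul_le_mul ?_ (pow_le_pow_right₀ hq1 (by omega)) (by positivity) (by positivity)
          apply mul_le_mul_of_nonneg_right (pow_le_pow_right₀ one_le_two (by omega)) (by positivity)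
      _ = Q^n := by
          rw [hQdef, mul_pow (2*(2:ℝ)^Ca) q n, mul_pow 2 ((2:ℝ)^Ca) n]
  refine ⟨(2*Q)⁻¹, by positivity, ?_⟩
  apply Summable.of_nonneg_of_le (f := fun n => ((1:ℝ)/2)^n) (fun n => by positivity) ?_ ?_
  · intro n
    rcases Nat.eq_zero_or_pos n with rfl | hn1
    · simp [hc0]
    · have h1 := hcQ n hn1
      have hQhalf : Q * (2*Q)⁻¹ = (1:ℝ)/2 := by
        have hQne : Q ≠ 0 := ne_of_gt hQ0
        calc Q * (2*Q)⁻¹ = (Q*Q⁻¹) * 2⁻¹ := by rw [mul_inv]; ring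
          _ = (1:ℝ)/2 := by rw [mul_inv_cancel₀ hQne]; norm_num
      calc ‖c n‖ * ((2*Q)⁻¹)^n ≤ Q^n * ((2*Q)⁻¹)^n := by
            apply mul_le_mul_of_nonneg_right h1 (by positivity)
        _ = (Q * (2*Q)⁻¹)^n := by rw [mul_pow Q ((2*Q)⁻¹) n]
        _ = ((1:ℝ)/2)^n := by rw [hQhalf]
  · exact summable_geometric_of_lt_one (by norm_num) (by norm_num)
end

section
/- Fix positive reals $K, M, R$. There is a unique formal power series $A(X,Y) = X + O(X^2)$ in two variables satisfying $A(X,Y) - X = \frac{RK}{1-RY}\left((A(X,Y)-X)\,Y + \frac{(1+MR)\,A(X,Y)^2}{1 - R\,A(X,Y)}\right)$, and all its coefficients $A_{n,m}$ (of $X^n Y^m$) are non-negative real numbers. -/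
open MvPowerSeries

namespace MajorantAux

noncomputable section

abbrev S2 := MvPowerSeries (Fin 2) ℝ

def deg (d : Fin 2 →₀ ℕ) : ℕ := d 0 + d 1

lemma deg_add (p q : Fin 2 →₀ ℕ) : deg (p + q) = deg p + deg q := by
  simp [deg]; ring

lemma eq_zero_of_deg_eq_zero {p : Fin 2 →₀ ℕ} (h : deg p = 0) : p = 0 := by
  ext i
  fin_cases i <;> simp [deg] at h ⊢ <;> omega

lemma coeff_mul_vanish (w : (Fin 2 →₀ ℕ) → ℕ) (hw : ∀ p q, w (p + q) = w p + w q)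
    (φ ψ : S2) (a b : ℕ) (hφ : ∀ d, w d < a → coeff (R := ℝ) d φ = 0)
    (hψ : ∀ d, w d < b → coeff (R := ℝ) d ψ = 0) :
    ∀ d, w d < a + b → coeff (R := ℝ) d (φ * ψ) = 0 := by
  intro d hd
  rw [coeff_mul]
  apply Finset.sum_eq_zero
  intro p hp
  rw [Finset.HasAntidiagonal.mem_antidiagonal] at hp
  have hsum : w p.1 + w p.2 = w d := by rw [← hp, hw]
  rcases lt_or_ge (w p.1) a with h | h
  · rw [hφ _ h, zero_mul]
  · rw [hψ _ (by omega), mul_zero]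

lemma coeff_mul_nonneg (φ ψ : S2) (hφ : ∀ d, 0 ≤ coeff (R := ℝ) d φ)
    (hψ : ∀ d, 0 ≤ coeff (R := ℝ) d ψ) : ∀ d, 0 ≤ coeff (R := ℝ) d (φ * ψ) := by
  intro d
  rw [coeff_mul]
  exact Finset.sum_nonneg fun p _ => mul_nonneg (hφ _) (hψ _)

/-- Coefficients of `(1 - φ)⁻¹` are nonnegative when `φ` has nonneg coeffs, zero const coeff. -/
lemma inv_one_sub_nonneg (φ : S2) (h0 : constantCoeff (σ := Fin 2) (R := ℝ) φ = 0)
    (hpos : ∀ d, 0 ≤ coeff (R := ℝ) d φ) : ∀ d, 0 ≤ coeff (R := ℝ) d (1 - φ)⁻¹ := by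
  set B := (1 - φ)⁻¹ with hBdef
  have h1 : (1 - φ) * B = 1 :=
    MvPowerSeries.mul_inv_cancel _ (by simp [h0])
  have hB : B = 1 + φ * B := by linear_combination h1
  suffices h : ∀ n : ℕ, ∀ d, deg d = n → 0 ≤ coeff (R := ℝ) d B by
    intro d; exact h (deg d) d rfl
  intro n
  induction n using Nat.strong_induction_on with
  | _ n IH =>
    intro d hd
    rw [hB, map_add]
    have h2 : 0 ≤ coeff (R := ℝ) d (φ * B) := by
      rw [coeff_mul]
      apply Finset.sum_nonneg
      intro p hp
      rw [Finset.HasAntidiagonal.mem_antidiagonal] at hp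
      by_cases hp1 : p.1 = 0
      · have : coeff (R := ℝ) p.1 φ = 0 := by
          rw [hp1, coeff_zero_eq_constantCoeff_apply, h0]
        rw [this, zero_mul]
      · have hdp : deg p.1 + deg p.2 = n := by rw [← hd, ← hp, deg_add]
        have hp1' : 0 < deg p.1 := by
          rcases Nat.eq_zero_or_pos (deg p.1) with h | h
          · exact absurd (eq_zero_of_deg_eq_zero h) hp1
          · exact h
        exact mul_nonneg (hpos _) (IH (deg p.2) (by omega) _ rfl)
    have h3 : (0:ℝ) ≤ coeff (R := ℝ) d (1 : S2) := by
      rw [coeff_one]; split <;> norm_num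
    linarith

/-- The fixed-point operator. -/
def Fma (c r R : ℝ) (A : S2) : S2 :=
  X 0 + C (σ := Fin 2) (R := ℝ) c * A ^ 2 *
    ((1 - C (σ := Fin 2) (R := ℝ) r * X 1) * (1 - C (σ := Fin 2) (R := ℝ) R * A))⁻¹

variable {c r R : ℝ}

lemma constCoeff_S {A : S2} (hA : constantCoeff (σ := Fin 2) (R := ℝ) A = 0) :
    constantCoeff (σ := Fin 2) (R := ℝ) ((1 - C (σ := Fin 2) (R := ℝ) r * X 1) * (1 - C (σ := Fin 2) (R := ℝ) R * A)) = 1 := by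
  simp [hA]

lemma eq2_iff_fixed {A : S2} (hA : constantCoeff (σ := Fin 2) (R := ℝ) A = 0) :
    (A - X 0) * (1 - C (σ := Fin 2) (R := ℝ) r * X 1) * (1 - C (σ := Fin 2) (R := ℝ) R * A)
        = C (σ := Fin 2) (R := ℝ) c * A ^ 2 ↔ Fma c r R A = A := by
  set S := (1 - C (σ := Fin 2) (R := ℝ) r * X 1) * (1 - C (σ := Fin 2) (R := ℝ) R * A) with hSdef
  have hS : constantCoeff (σ := Fin 2) (R := ℝ) S ≠ 0 := by rw [constCoeff_S hA]; norm_num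
  have hSI : S * S⁻¹ = 1 := MvPowerSeries.mul_inv_cancel _ hS
  constructor
  · intro h
    have h' : (A - X 0) * S = C (σ := Fin 2) (R := ℝ) c * A ^ 2 := by
      rw [hSdef]; linear_combination h
    rw [Fma, ← hSdef, ← h']
    linear_combination (A - X 0) * hSI
  · intro h
    have h' : C (σ := Fin 2) (R := ℝ) c * A ^ 2 * S⁻¹ = A - X 0 := by
      rw [Fma, ← hSdef] at h; linear_combination h
    calc (A - X 0) * (1 - C (σ := Fin 2) (R := ℝ) r * X 1) * (1 - C (σ := Fin 2) (R := ℝ) R * A)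
        = (A - X 0) * S := by rw [hSdef, mul_assoc]
      _ = C (σ := Fin 2) (R := ℝ) c * A ^ 2 * S⁻¹ * S := by rw [h']
      _ = C (σ := Fin 2) (R := ℝ) c * A ^ 2 := by
          rw [mul_assoc, mul_comm S⁻¹ S, hSI, mul_one]

/-- Contraction property of `Fma`. -/
lemma Fma_contract {A B : S2} (hA : constantCoeff (σ := Fin 2) (R := ℝ) A = 0)
    (hB : constantCoeff (σ := Fin 2) (R := ℝ) B = 0) (n : ℕ)
    (h : ∀ d, deg d < n → coeff (R := ℝ) d (A - B) = 0) :
    ∀ d, deg d < n + 1 → coeff (R := ℝ) d (Fma c r R A - Fma c r R B) = 0 := by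
  set SA := (1 - C (σ := Fin 2) (R := ℝ) r * X 1) * (1 - C (σ := Fin 2) (R := ℝ) R * A) with hSAdef
  set SB := (1 - C (σ := Fin 2) (R := ℝ) r * X 1) * (1 - C (σ := Fin 2) (R := ℝ) R * B) with hSBdef
  have hSA1 : SA * SA⁻¹ = 1 :=
    MvPowerSeries.mul_inv_cancel _ (by rw [hSAdef, constCoeff_S hA]; norm_num)
  have hSB1 : SB * SB⁻¹ = 1 :=
    MvPowerSeries.mul_inv_cancel _ (by rw [hSBdef, constCoeff_S hB]; norm_num)
  set E : S2 := C (σ := Fin 2) (R := ℝ) c * ((A + B) * SA⁻¹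
      + C (σ := Fin 2) (R := ℝ) R * B ^ 2 * SA⁻¹ * (1 - C (σ := Fin 2) (R := ℝ) r * X 1) * SB⁻¹) with hEdef
  have key : Fma c r R A - Fma c r R B = (A - B) * E := by
    rw [Fma, Fma, ← hSAdef, ← hSBdef, hEdef]
    linear_combination (C (σ := Fin 2) (R := ℝ) c * B ^ 2 * SB⁻¹) * hSA1
      - (C (σ := Fin 2) (R := ℝ) c * B ^ 2 * SA⁻¹) * hSB1
  have hE0 : coeff (R := ℝ) (0 : Fin 2 →₀ ℕ) E = 0 := by
    rw [coeff_zero_eq_constantCoeff_apply, hEdef]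
    simp [hA, hB]
  intro d hd
  rw [key]
  refine coeff_mul_vanish deg deg_add _ _ n 1 h ?_ d (by omega)
  intro e he
  have : e = 0 := eq_zero_of_deg_eq_zero (by omega)
  rw [this]; exact hE0

lemma Fma_sub_X_vanish (w : (Fin 2 →₀ ℕ) → ℕ) (hw : ∀ p q, w (p + q) = w p + w q)
    (a : ℕ) {A : S2} (hA : ∀ d, w d < a → coeff (R := ℝ) d A = 0) :
    ∀ d, w d < a + a → coeff (R := ℝ) d (Fma c r R A - X 0) = 0 := by
  intro d hd
  have h1 : Fma c r R A - X 0 = (A * A) *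
      (C (σ := Fin 2) (R := ℝ) c * ((1 - C (σ := Fin 2) (R := ℝ) r * X 1) * (1 - C (σ := Fin 2) (R := ℝ) R * A))⁻¹) := by
    rw [Fma]; ring
  rw [h1]
  refine coeff_mul_vanish w hw _ _ (a + a) 0
    (coeff_mul_vanish w hw A A a a hA hA) (fun e he => absurd he (by omega)) d (by omega)

lemma Fma_nonneg (hc : 0 ≤ c) (hr : 0 ≤ r) (hR : 0 ≤ R) {A : S2}
    (hA0 : constantCoeff (σ := Fin 2) (R := ℝ) A = 0) (hA : ∀ d, 0 ≤ coeff (R := ℝ) d A) :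
    ∀ d, 0 ≤ coeff (R := ℝ) d (Fma c r R A) := by
  have hinv : ((1 - C (σ := Fin 2) (R := ℝ) r * X 1) * (1 - C (σ := Fin 2) (R := ℝ) R * A))⁻¹
      = (1 - C (σ := Fin 2) (R := ℝ) R * A)⁻¹ * (1 - C (σ := Fin 2) (R := ℝ) r * X 1)⁻¹ :=
    MvPowerSeries.mul_inv_rev _ _
  have h1 : ∀ d, 0 ≤ coeff (R := ℝ) d (1 - C (σ := Fin 2) (R := ℝ) r * X 1)⁻¹ := by
    apply inv_one_sub_nonneg
    · simp
    · intro d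
      rw [coeff_C_mul, coeff_X]
      split <;> simp [hr]
  have h2 : ∀ d, 0 ≤ coeff (R := ℝ) d (1 - C (σ := Fin 2) (R := ℝ) R * A)⁻¹ := by
    apply inv_one_sub_nonneg
    · simp [hA0]
    · intro d
      rw [coeff_C_mul]
      exact mul_nonneg hR (hA d)
  intro d
  rw [Fma, map_add, hinv]
  have hX : 0 ≤ coeff (R := ℝ) d (X 0 : S2) := by rw [coeff_X]; split <;> norm_num
  have hC : ∀ e, 0 ≤ coeff (R := ℝ) e (C (σ := Fin 2) (R := ℝ) c * A ^ 2) := by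
    intro e
    rw [pow_two, ← mul_assoc]
    exact coeff_mul_nonneg _ _
      (fun e' => by rw [coeff_C_mul]; exact mul_nonneg hc (hA e')) hA e
  have := coeff_mul_nonneg _ _
    (coeff_mul_nonneg _ _ hC h2) h1 d
  rw [mul_assoc (C (σ := Fin 2) (R := ℝ) c * A ^ 2)] at this
  linarith [this]

/-- The iteration sequence. -/
def seq (c r R : ℝ) : ℕ → S2
  | 0 => X 0
  | (k + 1) => Fma c r R (seq c r R k)

lemma coeff_X0_of_fst_zero {d : Fin 2 →₀ ℕ} (h : d 0 = 0) :
    coeff (R := ℝ) d (X 0 : S2) = 0 := by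
  rw [coeff_X, if_neg]
  intro he
  rw [he] at h
  simp at h

lemma seq_Xlow : ∀ k, ∀ d : Fin 2 →₀ ℕ, d 0 < 2 →
    coeff (R := ℝ) d (seq c r R k - X 0) = 0 := by
  intro k
  induction k with
  | zero => intro d _; simp [seq]
  | succ k IH =>
    have hA : ∀ d : Fin 2 →₀ ℕ, d 0 < 1 → coeff (R := ℝ) d (seq c r R k) = 0 := by
      intro d hd
      have h1 := IH d (by omega)
      have h2 : coeff (R := ℝ) d (X 0 : S2) = 0 := coeff_X0_of_fst_zero (by omega)
      rw [map_sub, h2, sub_zero] at h1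
      exact h1
    exact Fma_sub_X_vanish (fun d => d 0) (fun p q => by simp) 1 hA

lemma seq_const0 : ∀ k, constantCoeff (σ := Fin 2) (R := ℝ) (seq c r R k) = 0 := by
  intro k
  have h1 := seq_Xlow (c := c) (r := r) (R := R) k 0 (by simp)
  have h2 : coeff (R := ℝ) (0 : Fin 2 →₀ ℕ) (X 0 : S2) = 0 := coeff_X0_of_fst_zero (by simp)
  rw [map_sub, h2, sub_zero] at h1
  rw [← coeff_zero_eq_constantCoeff_apply]
  exact h1

lemma seq_deg1 : ∀ k, ∀ d : Fin 2 →₀ ℕ, deg d < 1 → coeff (R := ℝ) d (seq c r R k) = 0 := by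
  intro k d hd
  have : d = 0 := eq_zero_of_deg_eq_zero (by omega)
  rw [this, coeff_zero_eq_constantCoeff_apply]
  exact seq_const0 k

lemma seq_nonneg (hc : 0 ≤ c) (hr : 0 ≤ r) (hR : 0 ≤ R) :
    ∀ k, ∀ d, 0 ≤ coeff (R := ℝ) d (seq c r R k) := by
  intro k
  induction k with
  | zero =>
    intro d; rw [seq, coeff_X]; split <;> norm_num
  | succ k IH => exact Fma_nonneg hc hr hR (seq_const0 k) IH

lemma seq_stab : ∀ k, ∀ d : Fin 2 →₀ ℕ, deg d < k + 2 →
    coeff (R := ℝ) d (seq c r R (k + 1) - seq c r R k) = 0 := by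
  intro k
  induction k with
  | zero =>
    intro d hd
    show coeff (R := ℝ) d (Fma c r R (seq c r R 0) - seq c r R 0) = 0
    exact Fma_sub_X_vanish deg deg_add 1 (seq_deg1 0) d (by omega)
  | succ k IH =>
    intro d hd
    exact Fma_contract (seq_const0 (k + 1)) (seq_const0 k) (k + 2) IH d (by omega)

/-- The limit series. -/
def lim (c r R : ℝ) : S2 := fun d => coeff (R := ℝ) d (seq c r R (deg d))

lemma coeff_lim (d : Fin 2 →₀ ℕ) : coeff (R := ℝ) d (lim c r R) = coeff (R := ℝ) d (seq c r R (deg d)) :=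
  rfl

lemma lim_agree : ∀ k, ∀ d : Fin 2 →₀ ℕ, deg d ≤ k →
    coeff (R := ℝ) d (lim c r R) = coeff (R := ℝ) d (seq c r R k) := by
  intro k
  induction k with
  | zero =>
    intro d hd
    have h0 : deg d = 0 := by omega
    rw [coeff_lim, h0]
  | succ k IH =>
    intro d hd
    rcases Nat.lt_or_ge (deg d) (k + 1) with h | h
    · have h1 := seq_stab (c := c) (r := r) (R := R) k d (by omega)
      rw [map_sub, sub_eq_zero] at h1
      rw [IH d (by omega), ← h1]
    · have : deg d = k + 1 := by omega
      rw [coeff_lim, this]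

lemma lim_const0 : constantCoeff (σ := Fin 2) (R := ℝ) (lim c r R) = 0 := by
  rw [← coeff_zero_eq_constantCoeff_apply, coeff_lim]
  rw [coeff_zero_eq_constantCoeff_apply]
  exact seq_const0 _

lemma lim_fixed : Fma c r R (lim c r R) = lim c r R := by
  apply MvPowerSeries.ext
  intro d
  set n := deg d with hn
  have h1 : ∀ e : Fin 2 →₀ ℕ, deg e < n + 1 →
      coeff (R := ℝ) e (lim c r R - seq c r R n) = 0 := by
    intro e he
    rw [map_sub, lim_agree n e (by omega), sub_self]
  have h2 := Fma_contract (c := c) (r := r) (R := R) lim_const0 (seq_const0 n) (n + 1) h1 d (by omega)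
  rw [map_sub, sub_eq_zero] at h2
  have h3 := seq_stab (c := c) (r := r) (R := R) n d (by omega)
  rw [map_sub, sub_eq_zero] at h3
  have h4 : coeff (R := ℝ) d (Fma c r R (seq c r R n)) = coeff (R := ℝ) d (seq c r R (n + 1)) := rfl
  rw [h2, h4, h3]
  exact (lim_agree n d (by omega)).symm

lemma lim_Xlow : ∀ d : Fin 2 →₀ ℕ, d 0 < 2 →
    coeff (R := ℝ) d (lim c r R) = coeff (R := ℝ) d (X 0 : S2) := by
  intro d hd
  have h := seq_Xlow (c := c) (r := r) (R := R) (deg d) d hd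
  rw [map_sub, sub_eq_zero] at h
  rw [coeff_lim]
  exact h

lemma eq_equiv (K M R : ℝ) (A : S2) :
    ((A - X 0) * (1 - C (σ := Fin 2) (R := ℝ) R * X 1) * (1 - C (σ := Fin 2) (R := ℝ) R * A)
      = C (σ := Fin 2) (R := ℝ) (R * K) * ((A - X 0) * X 1 * (1 - C (σ := Fin 2) (R := ℝ) R * A)
          + C (σ := Fin 2) (R := ℝ) (1 + M * R) * A ^ 2))
    ↔ (A - X 0) * (1 - C (σ := Fin 2) (R := ℝ) (R * (1 + K)) * X 1) * (1 - C (σ := Fin 2) (R := ℝ) R * A)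
        = C (σ := Fin 2) (R := ℝ) (R * K * (1 + M * R)) * A ^ 2 := by
  have h1 : C (σ := Fin 2) (R := ℝ) (R * (1 + K)) = C (σ := Fin 2) (R := ℝ) R + C (σ := Fin 2) (R := ℝ) (R * K) := by
    rw [← map_add]; congr 1; ring
  have h2 : C (σ := Fin 2) (R := ℝ) (R * K * (1 + M * R))
      = C (σ := Fin 2) (R := ℝ) (R * K) * C (σ := Fin 2) (R := ℝ) (1 + M * R) := by rw [← map_mul]
  rw [h1, h2]
  constructor <;> intro h <;> linear_combination h

end

end MajorantAux

open MajorantAux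

/-- The two-variable majorant series of equation (13): there is a unique
formal power series `A(X,Y) = X + O(X²)` with
`A - X = (RK/(1-RY)) ((A-X)Y + (1+MR)A²/(1-RA))` (denominators cleared),
and all its coefficients are non-negative. -/
theorem majorant_series_two_variables (K M R : ℝ) (hK : 0 < K) (hM : 0 < M) (hR : 0 < R) :
    ∃ A : MvPowerSeries (Fin 2) ℝ,
      ((∀ m : ℕ, coeff (R := ℝ) (Finsupp.single 1 m) A = 0) ∧
        coeff (R := ℝ) (Finsupp.single 0 1) A = 1 ∧
        (∀ m : ℕ, 1 ≤ m → coeff (R := ℝ) (Finsupp.single 0 1 + Finsupp.single 1 m) A = 0) ∧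
        (A - X 0) * (1 - C (σ := Fin 2) (R := ℝ) R * X 1) * (1 - C (σ := Fin 2) (R := ℝ) R * A)
          = C (σ := Fin 2) (R := ℝ) (R * K) *
              ((A - X 0) * X 1 * (1 - C (σ := Fin 2) (R := ℝ) R * A)
                + C (σ := Fin 2) (R := ℝ) (1 + M * R) * A ^ 2)) ∧
      (∀ B : MvPowerSeries (Fin 2) ℝ,
        ((∀ m : ℕ, coeff (R := ℝ) (Finsupp.single 1 m) B = 0) ∧
          coeff (R := ℝ) (Finsupp.single 0 1) B = 1 ∧
          (∀ m : ℕ, 1 ≤ m → coeff (R := ℝ) (Finsupp.single 0 1 + Finsupp.single 1 m) B = 0) ∧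
          (B - X 0) * (1 - C (σ := Fin 2) (R := ℝ) R * X 1) * (1 - C (σ := Fin 2) (R := ℝ) R * B)
            = C (σ := Fin 2) (R := ℝ) (R * K) *
                ((B - X 0) * X 1 * (1 - C (σ := Fin 2) (R := ℝ) R * B)
                  + C (σ := Fin 2) (R := ℝ) (1 + M * R) * B ^ 2)) → B = A) ∧
      (∀ d : Fin 2 →₀ ℕ, 0 ≤ coeff (R := ℝ) d A) := by
  set c := R * K * (1 + M * R) with hcdef
  set r := R * (1 + K) with hrdef
  have hc0 : 0 ≤ c := by positivity
  have hr0 : 0 ≤ r := by positivity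
  have hR0 : 0 ≤ R := le_of_lt hR
  have hs1 : (Finsupp.single 1 0 : Fin 2 →₀ ℕ) 0 = 0 := by
    simp
  have hfst : ∀ m : ℕ, (Finsupp.single 1 m : Fin 2 →₀ ℕ) 0 = 0 := by
    intro m; rw [Finsupp.single_apply]; simp
  refine ⟨lim c r R, ⟨?_, ?_, ?_, ?_⟩, ?_, ?_⟩
  · -- coeff of X^0 Y^m is 0
    intro m
    rw [lim_Xlow _ (by rw [hfst m]; omega), coeff_X, if_neg]
    intro h
    have := DFunLike.congr_fun h (0 : Fin 2)
    rw [hfst m, Finsupp.single_apply] at this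
    simp at this
  · -- coeff of X^1 Y^0 is 1
    rw [lim_Xlow _ (by rw [Finsupp.single_apply]; simp), coeff_X, if_pos rfl]
  · -- coeff of X^1 Y^m is 0 for m ≥ 1
    intro m hm
    have hd0 : (Finsupp.single 0 1 + Finsupp.single 1 m : Fin 2 →₀ ℕ) 0 = 1 := by
      rw [Finsupp.add_apply, hfst m, Finsupp.single_apply]; simp
    rw [lim_Xlow _ (by omega), coeff_X, if_neg]
    intro h
    have := DFunLike.congr_fun h (1 : Fin 2)
    rw [Finsupp.add_apply, Finsupp.single_apply, Finsupp.single_apply] at this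
    simp at this
    omega
  · -- the functional equation
    rw [eq_equiv K M R]
    exact (eq2_iff_fixed (c := c) (r := r) (R := R) lim_const0).mpr lim_fixed
  · -- uniqueness
    rintro B ⟨hB1, _, _, hB4⟩
    have hB0 : constantCoeff (σ := Fin 2) (R := ℝ) B = 0 := by
      rw [← coeff_zero_eq_constantCoeff_apply]
      have := hB1 0
      rwa [Finsupp.single_zero] at this
    have hBfix : Fma c r R B = B :=
      (eq2_iff_fixed (c := c) (r := r) (R := R) hB0).mp ((eq_equiv K M R B).mp hB4)
    apply MvPowerSeries.ext
    intro d
    have key : ∀ n : ℕ, ∀ e : Fin 2 →₀ ℕ, deg e = n → coeff (R := ℝ) e (B - lim c r R) = 0 := by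
      intro n
      induction n using Nat.strong_induction_on with
      | _ n IH =>
        intro e he
        have h := Fma_contract (c := c) (r := r) (R := R) hB0 lim_const0 n
          (fun p hp => IH (deg p) (by omega) p rfl) e (by omega)
        rwa [hBfix, lim_fixed] at h
    have h := key (deg d) d rfl
    rw [map_sub, sub_eq_zero] at h
    exact h
  · -- nonnegativity
    intro d
    rw [coeff_lim]
    exact seq_nonneg hc0 hr0 hR0 _ d
end

section
/- Let $\{\varepsilon_n\}_{n\geq 1}$ be positive reals with $\varepsilon_\lambda < (2\lambda)^\alpha$ for some $\alpha>0$ and all $\lambda$, and $\varepsilon_{\nu-\mu}^{-1} \leq \varepsilon_\nu^{-1}+\varepsilon_\mu^{-1}$ for $\nu>\mu$. Fix $K,R>0$. Let $B(X) = X + \sum_{n\geq 2} B_n X^n$ be the formal power series determined by $\sum_{n=2}^\infty \varepsilon_{n-1}^{-1} B_n X^n = \frac{2K\,B(X)^2}{(1-R\,B(X))^2}$. Then all $B_n$ are non-negative and $B(X)$ has a positive radius of convergence. -/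
open Finset

lemma sum_inv_sq_le (m : ℕ) : ∑ k ∈ Finset.Ico 1 (m+2), ((k:ℝ)^2)⁻¹ ≤ 2 - ((m:ℝ)+1)⁻¹ := by
  induction m with
  | zero => norm_num
  | succ m ih =>
    rw [Finset.sum_Ico_succ_top (by omega)]
    have h1 : (0:ℝ) < (m:ℝ)+1 := by positivity
    have h2 : (0:ℝ) < (m:ℝ)+2 := by positivity
    have key : (((m+2:ℕ):ℝ)^2)⁻¹ ≤ ((m:ℝ)+1)⁻¹ - ((m:ℝ)+2)⁻¹ := by
      push_cast
      have hd : ((m:ℝ)+1)⁻¹ - ((m:ℝ)+2)⁻¹ = (((m:ℝ)+1) * ((m:ℝ)+2))⁻¹ := by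
        field_simp; norm_num
      rw [hd]
      apply inv_anti₀ (by positivity)
      nlinarith [Nat.cast_nonneg (α := ℝ) m]
    have h3 : ((m:ℝ)+1+1)⁻¹ = ((m:ℝ)+2)⁻¹ := by ring_nf
    push_cast at key ⊢
    linarith

lemma sum_inv_sq_le' (n : ℕ) : ∑ k ∈ Finset.Ico 1 n, ((k:ℝ)^2)⁻¹ ≤ 2 := by
  rcases Nat.lt_or_ge n 2 with h | h
  · interval_cases n <;> simp
  · obtain ⟨m, rfl⟩ : ∃ m, n = m + 2 := ⟨n-2, by omega⟩
    have h2 : (0:ℝ) < (m:ℝ)+1 := by positivity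
    have : 0 < ((m:ℝ)+1)⁻¹ := by positivity
    linarith [sum_inv_sq_le m]

lemma conv_sq_le {n : ℕ} (hn : 1 ≤ n) :
    ∑ k ∈ Finset.Ico 1 n, ((k:ℝ)^2 * ((n-k:ℕ):ℝ)^2)⁻¹ ≤ 16 / (n:ℝ)^2 := by
  have hterm : ∀ k ∈ Finset.Ico 1 n,
      ((k:ℝ)^2 * ((n-k:ℕ):ℝ)^2)⁻¹ ≤ 4/(n:ℝ)^2 * (((k:ℝ)^2)⁻¹ + (((n-k:ℕ):ℝ)^2)⁻¹) := by
    intro k hk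
    rw [Finset.mem_Ico] at hk
    set a : ℝ := (k:ℝ) with ha
    set b : ℝ := ((n-k:ℕ):ℝ) with hb
    have hab : a + b = (n:ℝ) := by rw [ha, hb]; push_cast [Nat.cast_sub (le_of_lt hk.2)]; ring
    have ha1 : 1 ≤ a := by rw [ha]; exact_mod_cast hk.1
    have hb1 : 1 ≤ b := by rw [hb]; have : 1 ≤ n - k := by omega
                           exact_mod_cast this
    have ha0 : 0 < a := by linarith
    have hb0 : 0 < b := by linarith
    rw [← hab]
    rw [inv_le_iff_one_le_mul₀ (by positivity)]
    have key : (a+b)^2 ≤ 4*(a^2 + b^2) := by nlinarith [sq_nonneg (a-b)]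
    have expand : 4/(a+b)^2 * ((a^2)⁻¹ + (b^2)⁻¹) * (a^2*b^2)
        = 4*(a^2+b^2)/(a+b)^2 := by field_simp; ring
    rw [expand, le_div_iff₀ (by positivity)]
    linarith
  calc ∑ k ∈ Finset.Ico 1 n, ((k:ℝ)^2 * ((n-k:ℕ):ℝ)^2)⁻¹
      ≤ ∑ k ∈ Finset.Ico 1 n, 4/(n:ℝ)^2 * (((k:ℝ)^2)⁻¹ + (((n-k:ℕ):ℝ)^2)⁻¹) :=
        Finset.sum_le_sum hterm
    _ = 4/(n:ℝ)^2 * (∑ k ∈ Finset.Ico 1 n, ((k:ℝ)^2)⁻¹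
          + ∑ k ∈ Finset.Ico 1 n, (((n-k:ℕ):ℝ)^2)⁻¹) := by
        rw [← Finset.mul_sum, Finset.sum_add_distrib]
    _ ≤ 16 / (n:ℝ)^2 := by
        have hrefl : ∑ k ∈ Finset.Ico 1 n, (((n-k:ℕ):ℝ)^2)⁻¹
            = ∑ k ∈ Finset.Ico 1 n, ((k:ℝ)^2)⁻¹ := by
          apply Finset.sum_nbij' (fun k => n - k) (fun k => n - k)
          · intro a ha; simp only [Finset.mem_Ico] at *; omega
          · intro a ha; simp only [Finset.mem_Ico] at *; omega
          · intro a ha; simp only [Finset.mem_Ico] at *; omega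
          · intro a ha; simp only [Finset.mem_Ico] at *; omega
          · intro a ha; rfl
        rw [hrefl]
        have h1 := sum_inv_sq_le' n
        have h2 : (0:ℝ) < (n:ℝ)^2 := by positivity
        have h3 : (0:ℝ) ≤ 4/(n:ℝ)^2 := by positivity
        calc 4/(n:ℝ)^2 * (∑ k ∈ Finset.Ico 1 n, ((k:ℝ)^2)⁻¹ + ∑ k ∈ Finset.Ico 1 n, ((k:ℝ)^2)⁻¹)
            ≤ 4/(n:ℝ)^2 * (2+2) := by
              apply mul_le_mul_of_nonneg_left _ h3
              linarith
          _ = 16/(n:ℝ)^2 := by ring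


inductive BTree where
  | leaf : BTree
  | node : BTree → BTree → BTree

namespace BTree

def wt : BTree → ℕ
  | leaf => 1
  | node l r => wt l + wt r

lemma one_le_wt (t : BTree) : 1 ≤ t.wt := by
  induction t with
  | leaf => simp [wt]
  | node l r ihl ihr => simp only [wt]; omega

structure St where
  R : ℕ
  M : ℕ
  L : ℕ
  S : ℕ
  B : ℕ

variable (hv : ℕ → Bool)

def stats : BTree → St
  | leaf => ⟨0,0,0,0,0⟩
  | node l r =>
    let a := stats l
    let b := stats r
    if hv (wt l + wt r) then
      ⟨1, wt l + wt r, (if a.R + b.R = 0 then 1 else a.L + b.L),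
        a.S + b.S + (if a.R + b.R = 1 then 1 else 0),
        a.B + b.B + (if 2 ≤ a.R + b.R then 1 else 0)⟩
    else ⟨a.R + b.R, a.M + b.M, a.L + b.L, a.S + b.S, a.B + b.B⟩

def hC : BTree → ℕ
  | leaf => 0
  | node l r => hC l + hC r + (if hv (wt l + wt r) then 1 else 0)

lemma stats_node_heavy {l r : BTree} (h : hv (wt l + wt r)) :
    stats hv (node l r) =
      ⟨1, wt l + wt r,
        (if (stats hv l).R + (stats hv r).R = 0 then 1 else (stats hv l).L + (stats hv r).L),
        (stats hv l).S + (stats hv r).S + (if (stats hv l).R + (stats hv r).R = 1 then 1 else 0),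
        (stats hv l).B + (stats hv r).B +
          (if 2 ≤ (stats hv l).R + (stats hv r).R then 1 else 0)⟩ := by
  rw [stats, if_pos h]

lemma stats_node_light {l r : BTree} (h : ¬ hv (wt l + wt r)) :
    stats hv (node l r) =
      ⟨(stats hv l).R + (stats hv r).R, (stats hv l).M + (stats hv r).M,
        (stats hv l).L + (stats hv r).L, (stats hv l).S + (stats hv r).S,
        (stats hv l).B + (stats hv r).B⟩ := by
  rw [stats, if_neg h]

variable {q : ℕ}
variable {hv}

theorem stats_inv
    (Hbig : ∀ m, 2 ≤ m → hv m → q < m)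
    (Hsep : ∀ a b, 2 ≤ a → a < b → hv a → hv b → a + q < b) :
    ∀ t : BTree,
    (stats hv t).M ≤ wt t ∧
    ((stats hv t).R = 1 → hv (stats hv t).M ∧ 2 ≤ (stats hv t).M) ∧
    ((stats hv t).R = 0 → (stats hv t).M = 0 ∧ (stats hv t).L = 0 ∧
        (stats hv t).S = 0 ∧ (stats hv t).B = 0) ∧
    ((stats hv t).L + (stats hv t).S) * q ≤ (stats hv t).M ∧
    (stats hv t).B + (stats hv t).R ≤ (stats hv t).L ∧
    hC hv t = (stats hv t).L + (stats hv t).S + (stats hv t).B := by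
  intro t
  induction t with
  | leaf => simp [stats, hC, wt]
  | node l r ihl ihr =>
    obtain ⟨aM, aR1, aR0, aC, aD, aE⟩ := ihl
    obtain ⟨bM, bR1, bR0, bC, bD, bE⟩ := ihr
    have hwl := one_le_wt l
    have hwr := one_le_wt r
    have hwt : wt (node l r) = wt l + wt r := rfl
    have hhCn : hC hv (node l r)
        = hC hv l + hC hv r + (if hv (wt l + wt r) then 1 else 0) := rfl
    by_cases hh : (hv (wt l + wt r) : Prop)
    · rw [stats_node_heavy hv hh]
      rcases (by omega : (stats hv l).R + (stats hv r).R = 0 ∨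
          (stats hv l).R + (stats hv r).R = 1 ∨ 2 ≤ (stats hv l).R + (stats hv r).R)
        with h0 | h1 | h2
      · obtain ⟨aM0, aL0, aS0, aB0⟩ := aR0 (by omega)
        obtain ⟨bM0, bL0, bS0, bB0⟩ := bR0 (by omega)
        have hq : q < wt l + wt r := Hbig _ (by omega) hh
        rw [if_pos h0, if_neg (by omega : ¬ (stats hv l).R + (stats hv r).R = 1),
          if_neg (by omega : ¬ 2 ≤ (stats hv l).R + (stats hv r).R)]
        dsimp only [wt]
        refine ⟨by omega, fun _ => ⟨hh, by omega⟩, by omega, ?_, by omega, ?_⟩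
        · simp only [aS0, bS0]
          omega
        · rw [hhCn, if_pos hh]; omega
      · rw [if_neg (by omega : ¬ (stats hv l).R + (stats hv r).R = 0), if_pos h1,
          if_neg (by omega : ¬ 2 ≤ (stats hv l).R + (stats hv r).R)]
        have key : (stats hv l).M + (stats hv r).M + q < wt l + wt r := by
          rcases (by omega : ((stats hv l).R = 1 ∧ (stats hv r).R = 0) ∨
              ((stats hv l).R = 0 ∧ (stats hv r).R = 1)) with ⟨h1a, h1b⟩ | ⟨h1a, h1b⟩
          · obtain ⟨haM, haM2⟩ := aR1 h1a
            obtain ⟨bM0, -, -, -⟩ := bR0 h1b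
            have := Hsep (stats hv l).M (wt l + wt r) haM2 (by omega) haM hh
            omega
          · obtain ⟨hbM, hbM2⟩ := bR1 h1b
            obtain ⟨aM0, -, -, -⟩ := aR0 h1a
            have := Hsep (stats hv r).M (wt l + wt r) hbM2 (by omega) hbM hh
            omega
        dsimp only [wt]
        refine ⟨by omega, fun _ => ⟨hh, by omega⟩, by omega, ?_, by omega, ?_⟩
        · calc ((stats hv l).L + (stats hv r).L + ((stats hv l).S + (stats hv r).S + 1)) * q
              = ((stats hv l).L + (stats hv l).S) * q
                + ((stats hv r).L + (stats hv r).S) * q + q := by ring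
            _ ≤ (stats hv l).M + (stats hv r).M + q := by omega
            _ ≤ wt l + wt r := by omega
        · rw [hhCn, if_pos hh]; omega
      · rw [if_neg (by omega : ¬ (stats hv l).R + (stats hv r).R = 0),
          if_neg (by omega : ¬ (stats hv l).R + (stats hv r).R = 1), if_pos h2]
        dsimp only [wt]
        refine ⟨by omega, fun _ => ⟨hh, by omega⟩, by omega, ?_, by omega, ?_⟩
        · calc ((stats hv l).L + (stats hv r).L + ((stats hv l).S + (stats hv r).S + 0)) * q
              = ((stats hv l).L + (stats hv l).S) * q
                + ((stats hv r).L + (stats hv r).S) * q := by ring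
            _ ≤ (stats hv l).M + (stats hv r).M := by omega
            _ ≤ wt l + wt r := by omega
        · rw [hhCn, if_pos hh]; omega
    · rw [stats_node_light hv hh]
      dsimp only [wt]
      refine ⟨by omega, ?_, ?_, ?_, by omega, ?_⟩
      · intro hR
        rcases (by omega : ((stats hv l).R = 1 ∧ (stats hv r).R = 0) ∨
            ((stats hv l).R = 0 ∧ (stats hv r).R = 1)) with ⟨h1a, h1b⟩ | ⟨h1a, h1b⟩
        · obtain ⟨haM, haM2⟩ := aR1 h1a
          obtain ⟨bM0, -, -, -⟩ := bR0 h1b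
          rw [bM0, add_zero]
          exact ⟨haM, haM2⟩
        · obtain ⟨hbM, hbM2⟩ := bR1 h1b
          obtain ⟨aM0, -, -, -⟩ := aR0 h1a
          rw [aM0, zero_add]
          exact ⟨hbM, hbM2⟩
      · intro hR
        obtain ⟨aM0, aL0, aS0, aB0⟩ := aR0 (by omega)
        obtain ⟨bM0, bL0, bS0, bB0⟩ := bR0 (by omega)
        refine ⟨by omega, by omega, by omega, by omega⟩
      · calc ((stats hv l).L + (stats hv r).L + ((stats hv l).S + (stats hv r).S)) * q
            = ((stats hv l).L + (stats hv l).S) * q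
              + ((stats hv r).L + (stats hv r).S) * q := by ring
          _ ≤ (stats hv l).M + (stats hv r).M := by omega
      · rw [hhCn, if_neg hh]; omega

theorem hC_mul_le (Hbig : ∀ m, 2 ≤ m → hv m → q < m)
    (Hsep : ∀ a b, 2 ≤ a → a < b → hv a → hv b → a + q < b) (t : BTree) :
    hC hv t * q ≤ 2 * wt t := by
  obtain ⟨hM, -, -, hc, hd, he⟩ := stats_inv Hbig Hsep t
  calc hC hv t * q = ((stats hv t).L + (stats hv t).S + (stats hv t).B) * q := by rw [he]
    _ ≤ (((stats hv t).L + (stats hv t).S) + ((stats hv t).L + (stats hv t).S)) * q := by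
        apply Nat.mul_le_mul_right
        omega
    _ = ((stats hv t).L + (stats hv t).S) * q + ((stats hv t).L + (stats hv t).S) * q := by
        ring
    _ ≤ 2 * wt t := by omega

end BTree

namespace BTree

def prodP (e : ℕ → ℝ) : BTree → ℝ
  | leaf => 1
  | node l r => e (wt l + wt r) * (prodP e l * prodP e r)

variable {e : ℕ → ℝ}

lemma one_le_prodP (he : ∀ m, 1 ≤ e m) (t : BTree) : 1 ≤ prodP e t := by
  induction t with
  | leaf => simp [prodP]
  | node l r ihl ihr =>
    have h1 : (1:ℝ) ≤ e (wt l + wt r) := he _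
    calc (1:ℝ) = 1 * (1 * 1) := by ring
      _ ≤ e (wt l + wt r) * (prodP e l * prodP e r) := by
          apply mul_le_mul h1 (mul_le_mul ihl ihr zero_le_one (by linarith)) (by norm_num)
          linarith
      _ = prodP e (node l r) := rfl

end BTree

noncomputable def Tf (e : ℕ → ℝ) : ℕ → ℝ
  | 0 => 1
  | 1 => 1
  | n+2 => e (n+2) *
      ((Finset.Ico 1 (n+2)).attach.sup'
        ⟨⟨1, by simp⟩, Finset.mem_attach _ _⟩
        (fun μ => Tf e μ.1 * Tf e (n+2-μ.1)))
  termination_by n => n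
  decreasing_by
  · have := μ.2; simp only [Finset.mem_Ico] at this; omega
  · have := μ.2; simp only [Finset.mem_Ico] at this; omega

section Tsec

variable {e : ℕ → ℝ} (he : ∀ m, 1 ≤ e m)

include he

lemma one_le_Tf : ∀ n, 1 ≤ Tf e n := by
  intro n
  induction n using Nat.strong_induction_on with
  | _ n ih =>
    match n with
    | 0 => simp [Tf]
    | 1 => simp [Tf]
    | n+2 =>
      rw [Tf]
      have h1 : (1:ℝ) ≤ e (n+2) := he _
      have hmem : (⟨1, by simp⟩ : {x // x ∈ Finset.Ico 1 (n+2)}) ∈ (Finset.Ico 1 (n+2)).attach :=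
        Finset.mem_attach _ _
      have hle := Finset.le_sup' (f := fun μ : {x // x ∈ Finset.Ico 1 (n+2)} =>
        Tf e μ.1 * Tf e (n+2-μ.1)) hmem
      have h2 : (1:ℝ) ≤ Tf e 1 * Tf e (n+2-1) := by
        have h3 := ih (n+2-1) (by omega)
        rw [show Tf e 1 = 1 from by rw [Tf], one_mul]
        exact h3
      have hsup : (1:ℝ) ≤ (Finset.Ico 1 (n+2)).attach.sup'
          ⟨⟨1, by simp⟩, Finset.mem_attach _ _⟩
          (fun μ => Tf e μ.1 * Tf e (n+2-μ.1)) := le_trans h2 hle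
      calc (1:ℝ) ≤ (Finset.Ico 1 (n+2)).attach.sup'
            ⟨⟨1, by simp⟩, Finset.mem_attach _ _⟩
            (fun μ => Tf e μ.1 * Tf e (n+2-μ.1)) := hsup
        _ ≤ _ := le_mul_of_one_le_left (by linarith) h1

lemma Tf_node {i j : ℕ} (hi : 1 ≤ i) (hj : 1 ≤ j) :
    e (i+j) * (Tf e i * Tf e j) ≤ Tf e (i+j) := by
  obtain ⟨m, hm⟩ : ∃ m, i + j = m + 2 := ⟨i+j-2, by omega⟩
  rw [hm, Tf]
  apply mul_le_mul_of_nonneg_left _ (le_trans zero_le_one (he _))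
  have hmem : (⟨i, by simp; omega⟩ : {x // x ∈ Finset.Ico 1 (m+2)}) ∈
      (Finset.Ico 1 (m+2)).attach := Finset.mem_attach _ _
  have hle := Finset.le_sup' (f := fun μ : {x // x ∈ Finset.Ico 1 (m+2)} =>
    Tf e μ.1 * Tf e (m+2-μ.1)) hmem
  simp only at hle
  rw [show m+2-i = j by omega] at hle
  exact hle

lemma Tf_supermul (a b : ℕ) : Tf e a * Tf e b ≤ Tf e (a+b) := by
  rcases Nat.eq_zero_or_pos a with rfl | ha
  · simp [Tf]
  rcases Nat.eq_zero_or_pos b with rfl | hb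
  · simp [Tf]
  calc Tf e a * Tf e b ≤ e (a+b) * (Tf e a * Tf e b) := by
        apply le_mul_of_one_le_left _ (he _)
        have := one_le_Tf he a
        have := one_le_Tf he b
        nlinarith
    _ ≤ Tf e (a+b) := Tf_node he ha hb

lemma Tf_exists_tree : ∀ n, 1 ≤ n → ∃ t : BTree, t.wt = n ∧ Tf e n ≤ BTree.prodP e t := by
  intro n
  induction n using Nat.strong_induction_on with
  | _ n ih =>
    match n with
    | 0 => exact fun h => absurd h (by omega)
    | 1 => exact fun _ => ⟨BTree.leaf, rfl, by simp [Tf, BTree.prodP]⟩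
    | n+2 =>
      intro _
      obtain ⟨μ, hμmem, hμ⟩ := Finset.exists_mem_eq_sup'
        (⟨⟨1, by simp⟩, Finset.mem_attach _ _⟩ :
          ((Finset.Ico 1 (n+2)).attach).Nonempty)
        (fun μ : {x // x ∈ Finset.Ico 1 (n+2)} => Tf e μ.1 * Tf e (n+2-μ.1))
      have hμ1 : 1 ≤ μ.1 ∧ μ.1 < n + 2 := Finset.mem_Ico.mp μ.2
      obtain ⟨t1, ht1w, ht1⟩ := ih μ.1 (by omega) hμ1.1
      obtain ⟨t2, ht2w, ht2⟩ := ih (n+2-μ.1) (by omega) (by omega)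
      refine ⟨BTree.node t1 t2, by simp [BTree.wt]; omega, ?_⟩
      rw [Tf, hμ]
      show e (n+2) * (Tf e μ.1 * Tf e (n+2-μ.1)) ≤
        e (BTree.wt t1 + BTree.wt t2) * (BTree.prodP e t1 * BTree.prodP e t2)
      rw [ht1w, ht2w, show μ.1 + (n+2-μ.1) = n+2 by omega]
      apply mul_le_mul_of_nonneg_left _ (le_trans zero_le_one (he _))
      have h1 := one_le_Tf he μ.1
      have h2 := one_le_Tf he (n+2-μ.1)
      apply mul_le_mul ht1 ht2 (by linarith) (by nlinarith [BTree.one_le_prodP he t1])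

end Tsec


section S4
variable (ε : ℕ → ℝ) (α : ℝ)

noncomputable def etil : ℕ → ℝ := fun m => max 1 (ε (m-1))

noncomputable def thf (s : ℕ) : ℝ := 2 * ((2:ℝ)^α)^(s+1)

noncomputable def hvB (s : ℕ) : ℕ → Bool :=
  fun m => @decide (thf α s < etil ε m) (Classical.propDecidable _)

variable {ε α}

lemma one_le_etil (m : ℕ) : 1 ≤ etil ε m := le_max_left _ _

lemma one_le_beta (hα : 0 < α) : 1 ≤ (2:ℝ)^α := by
  calc (1:ℝ) = (2:ℝ)^(0:ℝ) := (Real.rpow_zero 2).symm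
    _ ≤ (2:ℝ)^α := by
        apply Real.rpow_le_rpow_left_iff (by norm_num : (1:ℝ) < 2) |>.mpr hα.le

lemma two_le_thf (hα : 0 < α) (s : ℕ) : 2 ≤ thf α s := by
  have h1 : (1:ℝ) ≤ ((2:ℝ)^α)^(s+1) := one_le_pow₀ (one_le_beta hα)
  unfold thf; nlinarith

lemma thf_mono (hα : 0 < α) {s t : ℕ} (h : s ≤ t) : thf α s ≤ thf α t := by
  unfold thf
  have := one_le_beta hα
  apply mul_le_mul_of_nonneg_left _ (by norm_num)
  exact pow_le_pow_right₀ this (by omega)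

lemma pow_two_rpow (α : ℝ) (k : ℕ) : ((2:ℝ)^k)^α = ((2:ℝ)^α)^k := by
  rw [← Real.rpow_natCast 2 k, ← Real.rpow_mul (by norm_num : (0:ℝ) ≤ 2),
    mul_comm, Real.rpow_mul (by norm_num : (0:ℝ) ≤ 2), Real.rpow_natCast]

lemma hvB_eps (hα : 0 < α) {s m : ℕ} (hm : 2 ≤ m) (h : hvB ε α s m) :
    thf α s < ε (m-1) := by
  have h' : thf α s < etil ε m := of_decide_eq_true h
  by_contra hc
  push_neg at hc
  have : etil ε m ≤ thf α s := by
    apply max_le _ hc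
    linarith [two_le_thf hα s]
  linarith

lemma hvB_big (hα : 0 < α) (hgrow : ∀ l : ℕ, 1 ≤ l → ε l < (2 * (l : ℝ)) ^ α)
    {s m : ℕ} (hm : 2 ≤ m) (h : hvB ε α s m) : 2^s < m := by
  have h1 : thf α s < ε (m-1) := hvB_eps hα hm h
  have h2 : ε (m-1) < (2 * ((m-1:ℕ) : ℝ)) ^ α := hgrow (m-1) (by omega)
  have h3 : ((2:ℝ)^(s+1))^α < (2 * ((m-1:ℕ):ℝ))^α := by
    have hb : (1:ℝ) ≤ ((2:ℝ)^α)^(s+1) := one_le_pow₀ (one_le_beta hα)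
    calc ((2:ℝ)^(s+1))^α = ((2:ℝ)^α)^(s+1) := pow_two_rpow α (s+1)
      _ < thf α s := by unfold thf; nlinarith
      _ < ε (m-1) := h1
      _ < _ := h2
  have h4 : ((2:ℝ)^(s+1) : ℝ) < 2 * ((m-1:ℕ):ℝ) := by
    by_contra hc
    push_neg at hc
    have := Real.rpow_le_rpow (by positivity) hc hα.le
    linarith
  have h5 : (2:ℕ)^(s+1) < 2 * (m-1) := by
    have : ((2^(s+1) : ℕ) : ℝ) < ((2 * (m-1) : ℕ) : ℝ) := by push_cast; linarith
    exact_mod_cast this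
  have : 2^(s+1) = 2 * 2^s := by ring
  omega

lemma hvB_sep (hεpos : ∀ n, 1 ≤ n → 0 < ε n) (hα : 0 < α)
    (hgrow : ∀ l : ℕ, 1 ≤ l → ε l < (2 * (l : ℝ)) ^ α)
    (hsub : ∀ ν μ : ℕ, 1 ≤ μ → μ < ν → (ε (ν - μ))⁻¹ ≤ (ε ν)⁻¹ + (ε μ)⁻¹)
    {s a b : ℕ} (ha : 2 ≤ a) (hab : a < b)
    (hha : hvB ε α s a) (hhb : hvB ε α s b) : a + 2^s < b := by
  by_contra hc
  push_neg at hc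
  -- g = b - a satisfies 1 ≤ g ≤ 2^s
  set g := b - a with hg
  have hg1 : 1 ≤ g := by omega
  have hg2 : g ≤ 2^s := by omega
  have hεg : 0 < ε g := hεpos g hg1
  have hθ : (0:ℝ) < thf α s := by linarith [two_le_thf hα s]
  -- small divisor at the gap
  have hgap : ε g < thf α s / 2 := by
    have h1 : ε g < (2 * (g:ℝ))^α := hgrow g hg1
    have h2 : (2 * (g:ℝ))^α ≤ ((2:ℝ)^(s+1))^α := by
      apply Real.rpow_le_rpow (by positivity) _ hα.le
      have : (g:ℝ) ≤ (2:ℝ)^s := by exact_mod_cast hg2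
      have h2s : ((2:ℕ)^s : ℝ) = (2:ℝ)^s := by push_cast; ring
      calc 2 * (g:ℝ) ≤ 2 * (2:ℝ)^s := by nlinarith
        _ = (2:ℝ)^(s+1) := by ring
    have h3 : ((2:ℝ)^(s+1))^α = ((2:ℝ)^α)^(s+1) := pow_two_rpow α (s+1)
    have : thf α s / 2 = ((2:ℝ)^α)^(s+1) := by unfold thf; ring
    linarith
  have hae : thf α s < ε (a-1) := hvB_eps hα ha hha
  have hbe : thf α s < ε (b-1) := hvB_eps hα (by omega) hhb
  have hsub' := hsub (b-1) (a-1) (by omega) (by omega)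
  rw [show (b-1) - (a-1) = g by omega] at hsub'
  have hi1 : (ε (b-1))⁻¹ < (thf α s)⁻¹ := by
    apply inv_strictAnti₀ hθ hbe
  have hi2 : (ε (a-1))⁻¹ < (thf α s)⁻¹ := by
    apply inv_strictAnti₀ hθ hae
  have hi3 : (thf α s / 2)⁻¹ < (ε g)⁻¹ := by
    apply inv_strictAnti₀ hεg hgap
  have : (thf α s / 2)⁻¹ = 2 * (thf α s)⁻¹ := by
    field_simp
  linarith

end S4

section S4b
variable {ε : ℕ → ℝ} {α : ℝ}

lemma hC_pow_le (hεpos : ∀ n, 1 ≤ n → 0 < ε n) (hα : 0 < α)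
    (hgrow : ∀ l : ℕ, 1 ≤ l → ε l < (2 * (l : ℝ)) ^ α)
    (hsub : ∀ ν μ : ℕ, 1 ≤ μ → μ < ν → (ε (ν - μ))⁻¹ ≤ (ε ν)⁻¹ + (ε μ)⁻¹)
    (s : ℕ) (t : BTree) :
    BTree.hC (hvB ε α s) t * 2^s ≤ 2 * t.wt :=
  BTree.hC_mul_le (fun m hm hh => hvB_big hα hgrow hm hh)
    (fun a b ha hab hha hhb => hvB_sep hεpos hα hgrow hsub ha hab hha hhb) t

lemma hC_sum_le (hεpos : ∀ n, 1 ≤ n → 0 < ε n) (hα : 0 < α)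
    (hgrow : ∀ l : ℕ, 1 ≤ l → ε l < (2 * (l : ℝ)) ^ α)
    (hsub : ∀ ν μ : ℕ, 1 ≤ μ → μ < ν → (ε (ν - μ))⁻¹ ≤ (ε ν)⁻¹ + (ε μ)⁻¹)
    (S : ℕ) (t : BTree) :
    ∑ s ∈ Finset.range S, BTree.hC (hvB ε α s) t ≤ 4 * t.wt := by
  have key : ((∑ s ∈ Finset.range S, BTree.hC (hvB ε α s) t : ℕ) : ℝ) ≤ 4 * t.wt := by
    push_cast
    have h1 : ∀ s ∈ Finset.range S,
        ((BTree.hC (hvB ε α s) t : ℕ) : ℝ) ≤ 2 * t.wt * (1/2:ℝ)^s := by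
      intro s _
      have h := hC_pow_le hεpos hα hgrow hsub s t
      have h2 : (0:ℝ) < 2^s := by positivity
      rw [div_pow, one_pow, mul_one_div, le_div_iff₀ h2]
      calc ((BTree.hC (hvB ε α s) t : ℕ):ℝ) * 2^s
          = ((BTree.hC (hvB ε α s) t * 2^s : ℕ) : ℝ) := by push_cast; ring
        _ ≤ ((2 * t.wt : ℕ) : ℝ) := by exact_mod_cast h
        _ = 2 * (t.wt:ℝ) := by push_cast; ring
    calc ∑ s ∈ Finset.range S, ((BTree.hC (hvB ε α s) t : ℕ):ℝ)
        ≤ ∑ s ∈ Finset.range S, 2 * (t.wt:ℝ) * (1/2:ℝ)^s := Finset.sum_le_sum h1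
      _ = 2 * (t.wt:ℝ) * ∑ s ∈ Finset.range S, (1/2:ℝ)^s := by rw [Finset.mul_sum]
      _ ≤ 2 * (t.wt:ℝ) * 2 := by
          have hg : ∑ s ∈ Finset.range S, (1/2:ℝ)^s ≤ 2 := by
            have hegs := geom_sum_eq (by norm_num : (1/2:ℝ) ≠ 1) S
            rw [hegs]
            have hp : (0:ℝ) ≤ (1/2:ℝ)^S := by positivity
            rw [div_le_iff_of_neg (by norm_num : (1/2:ℝ) - 1 < 0)]
            linarith
          have : (0:ℝ) ≤ 2 * (t.wt:ℝ) := by positivity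
          nlinarith
      _ = 4 * (t.wt:ℝ) := by ring
  exact_mod_cast key

end S4b

section S4c
variable {ε : ℕ → ℝ} {α : ℝ}

lemma etil_node_bound (hα : 0 < α)
    (hgrow : ∀ l : ℕ, 1 ≤ l → ε l < (2 * (l : ℝ)) ^ α)
    {S m : ℕ} (hm : 2 ≤ m) (hth : m ≤ 2^S) :
    etil ε m ≤ (2*(2:ℝ)^α) *
      ((2:ℝ)^α)^(((Finset.range S).filter (fun s => (hvB ε α s m : Prop))).card) := by
  set c := ((Finset.range S).filter (fun s => (hvB ε α s m : Prop))).card with hc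
  have hnot : ¬ (hvB ε α c m : Prop) := by
    intro h
    have hc' : thf α c < etil ε m := of_decide_eq_true h
    have hsubset : Finset.range (c+1) ⊆
        (Finset.range S).filter (fun s => (hvB ε α s m : Prop)) := by
      intro s hs
      rw [Finset.mem_range] at hs
      have hsc : s ≤ c := by omega
      have hθ : thf α s < etil ε m := lt_of_le_of_lt (thf_mono hα hsc) hc'
      have hvs : (hvB ε α s m : Prop) := decide_eq_true hθ
      have hlt : 2^s < m := hvB_big hα hgrow hm hvs
      have hsS : s < S := by
        have : (2:ℕ)^s < 2^S := lt_of_lt_of_le hlt hth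
        exact (Nat.pow_lt_pow_iff_right (by norm_num)).mp this
      rw [Finset.mem_filter, Finset.mem_range]
      exact ⟨hsS, hvs⟩
    have := Finset.card_le_card hsubset
    rw [Finset.card_range] at this
    omega
  have hle : etil ε m ≤ thf α c := by
    by_contra hlt
    push_neg at hlt
    exact hnot (decide_eq_true hlt)
  calc etil ε m ≤ thf α c := hle
    _ = (2*(2:ℝ)^α) * ((2:ℝ)^α)^c := by unfold thf; ring

lemma prodP_bound (hεpos : ∀ n, 1 ≤ n → 0 < ε n) (hα : 0 < α)
    (hgrow : ∀ l : ℕ, 1 ≤ l → ε l < (2 * (l : ℝ)) ^ α)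
    (S : ℕ) :
    ∀ t : BTree, t.wt ≤ 2^S →
      BTree.prodP (etil ε) t ≤ (2*(2:ℝ)^α)^(t.wt - 1) *
        ((2:ℝ)^α)^(∑ s ∈ Finset.range S, BTree.hC (hvB ε α s) t) := by
  intro t
  induction t with
  | leaf => intro _; simp [BTree.prodP, BTree.wt, BTree.hC]
  | node l r ihl ihr =>
    intro hw
    have hwl := BTree.one_le_wt l
    have hwr := BTree.one_le_wt r
    have hwn : BTree.wt (BTree.node l r) = l.wt + r.wt := rfl
    have hβ := one_le_beta hα
    have hβ0 : (0:ℝ) < (2:ℝ)^α := by linarith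
    have h2β : (1:ℝ) ≤ 2*(2:ℝ)^α := by linarith
    have hl := ihl (by rw [hwn] at hw; omega)
    have hr := ihr (by rw [hwn] at hw; omega)
    set c := ((Finset.range S).filter (fun s => (hvB ε α s (l.wt + r.wt) : Prop))).card with hc
    have hA : ∑ s ∈ Finset.range S, BTree.hC (hvB ε α s) (BTree.node l r)
        = (∑ s ∈ Finset.range S, BTree.hC (hvB ε α s) l)
          + (∑ s ∈ Finset.range S, BTree.hC (hvB ε α s) r) + c := by
      have hnode : ∀ s, BTree.hC (hvB ε α s) (BTree.node l r)
          = BTree.hC (hvB ε α s) l + BTree.hC (hvB ε α s) r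
            + (if (hvB ε α s (l.wt + r.wt) : Prop) then 1 else 0) := fun s => rfl
      rw [hc, Finset.card_filter]
      simp only [hnode]
      rw [Finset.sum_add_distrib, Finset.sum_add_distrib]
    have hfac : etil ε (l.wt + r.wt) ≤ (2*(2:ℝ)^α) * ((2:ℝ)^α)^c :=
      etil_node_bound hα hgrow (by omega) (by rw [hwn] at hw; omega)
    have hP1 : (0:ℝ) ≤ BTree.prodP (etil ε) l :=
      le_trans zero_le_one (BTree.one_le_prodP one_le_etil l)
    have hP2 : (0:ℝ) ≤ BTree.prodP (etil ε) r :=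
      le_trans zero_le_one (BTree.one_le_prodP one_le_etil r)
    calc BTree.prodP (etil ε) (BTree.node l r)
        = etil ε (l.wt + r.wt) * (BTree.prodP (etil ε) l * BTree.prodP (etil ε) r) := rfl
      _ ≤ ((2*(2:ℝ)^α) * ((2:ℝ)^α)^c) *
          (((2*(2:ℝ)^α)^(l.wt - 1) *
              ((2:ℝ)^α)^(∑ s ∈ Finset.range S, BTree.hC (hvB ε α s) l)) *
            ((2*(2:ℝ)^α)^(r.wt - 1) *
              ((2:ℝ)^α)^(∑ s ∈ Finset.range S, BTree.hC (hvB ε α s) r))) := by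
          apply mul_le_mul hfac (mul_le_mul hl hr hP2 (by positivity)) (by positivity)
          positivity
      _ = (2*(2:ℝ)^α)^((l.wt - 1) + (r.wt - 1) + 1) *
          ((2:ℝ)^α)^((∑ s ∈ Finset.range S, BTree.hC (hvB ε α s) l)
            + (∑ s ∈ Finset.range S, BTree.hC (hvB ε α s) r) + c) := by
          rw [pow_add, pow_add, pow_add, pow_add]
          ring
      _ = _ := by
          rw [hA, hwn, show (l.wt - 1) + (r.wt - 1) + 1 = l.wt + r.wt - 1 by omega]

theorem Tf_etil_bound (hεpos : ∀ n, 1 ≤ n → 0 < ε n) (hα : 0 < α)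
    (hgrow : ∀ l : ℕ, 1 ≤ l → ε l < (2 * (l : ℝ)) ^ α)
    (hsub : ∀ ν μ : ℕ, 1 ≤ μ → μ < ν → (ε (ν - μ))⁻¹ ≤ (ε ν)⁻¹ + (ε μ)⁻¹) :
    ∀ n, 1 ≤ n → Tf (etil ε) n ≤ (2*((2:ℝ)^α)^5)^n := by
  intro n hn
  obtain ⟨t, htw, ht⟩ := Tf_exists_tree (e := etil ε) one_le_etil n hn
  have hβ := one_le_beta hα
  have hβ0 : (0:ℝ) < (2:ℝ)^α := by linarith
  have h2β : (1:ℝ) ≤ 2*(2:ℝ)^α := by linarith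
  have hwS : t.wt ≤ 2^n := by rw [htw]; exact Nat.lt_two_pow_self.le
  have hP := prodP_bound hεpos hα hgrow n t hwS
  have hA : ∑ s ∈ Finset.range n, BTree.hC (hvB ε α s) t ≤ 4 * n := by
    have h := hC_sum_le hεpos hα hgrow hsub n t
    rw [htw] at h
    exact h
  calc Tf (etil ε) n ≤ BTree.prodP (etil ε) t := ht
    _ ≤ (2*(2:ℝ)^α)^(t.wt - 1) *
        ((2:ℝ)^α)^(∑ s ∈ Finset.range n, BTree.hC (hvB ε α s) t) := hP
    _ ≤ (2*(2:ℝ)^α)^n * ((2:ℝ)^α)^(4*n) := by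
        apply mul_le_mul (pow_le_pow_right₀ h2β (by omega))
          (pow_le_pow_right₀ hβ hA) (by positivity) (by positivity)
    _ = (2*((2:ℝ)^α)^5)^n := by
        rw [mul_pow, pow_mul, mul_pow, ← pow_mul, ← pow_mul]
        ring

end S4c

noncomputable def gseq (cc : ℝ) : ℕ → ℝ := fun n => cc^(n-1) / (n:ℝ)^2

noncomputable def useq (R cc : ℝ) : ℕ → ℝ
  | 0 => 1
  | n+1 => R * ∑ k ∈ (Finset.Ico 1 (n+2)).attach, gseq cc k.1 * useq R cc (n+1-k.1)
  termination_by n => n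
  decreasing_by
  · have := k.2; simp only [Finset.mem_Ico] at this; omega

section Useq

variable {R cc : ℝ}

lemma gseq_nonneg (hcc16 : 16 ≤ cc) (n : ℕ) : 0 ≤ gseq cc n := by
  unfold gseq
  have h : (0:ℝ) ≤ cc := by linarith
  positivity

lemma gseq_zero : gseq cc 0 = 0 := by unfold gseq; norm_num

lemma gseq_one : gseq cc 1 = 1 := by unfold gseq; norm_num

lemma useq_zero : useq R cc 0 = 1 := by rw [useq]

lemma useq_succ (n : ℕ) : useq R cc (n+1)
    = R * ∑ k ∈ Finset.Ico 1 (n+2), gseq cc k * useq R cc (n+1-k) := by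
  rw [useq]
  congr 1
  exact Finset.sum_attach (Finset.Ico 1 (n+2)) (fun k => gseq cc k * useq R cc (n+1-k))

lemma useq_nonneg (hR : 0 < R) (hcc16 : 16 ≤ cc) : ∀ n, 0 ≤ useq R cc n := by
  intro n
  induction n using Nat.strong_induction_on with
  | _ n ih =>
    match n with
    | 0 => rw [useq]; norm_num
    | n+1 =>
      rw [useq_succ]
      apply mul_nonneg hR.le
      apply Finset.sum_nonneg
      intro k hk
      rw [Finset.mem_Ico] at hk
      exact mul_nonneg (gseq_nonneg hcc16 _) (ih _ (by omega))

lemma useq_le (hR : 0 < R) (hcc32 : 32*R ≤ cc) (hcc16 : 16 ≤ cc) :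
    ∀ n, 1 ≤ n → useq R cc n ≤ 2*R*cc^(n-1)/(n:ℝ)^2 := by
  have hcc0 : (0:ℝ) < cc := by linarith
  intro n
  induction n using Nat.strong_induction_on with
  | _ n ih =>
    match n with
    | 0 => omega
    | 1 =>
      intro _
      rw [useq_succ]
      have : Finset.Ico 1 2 = {1} := rfl
      rw [this, Finset.sum_singleton, gseq_one, show 1-1 = 0 by omega, useq_zero]
      norm_num
      linarith
    | m+2 =>
      intro _
      set M := m+1 with hM
      have hM1 : 1 ≤ M := by omega
      rw [useq_succ, Finset.sum_Ico_succ_top (by omega)]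
      rw [show M+1-(M+1) = 0 by omega, useq_zero]
      have hmid : ∑ k ∈ Finset.Ico 1 (M+1), gseq cc k * useq R cc (M+1-k)
          ≤ 2*R*cc^(M-1) * (16/((M+1:ℕ):ℝ)^2) := by
        calc ∑ k ∈ Finset.Ico 1 (M+1), gseq cc k * useq R cc (M+1-k)
            ≤ ∑ k ∈ Finset.Ico 1 (M+1),
                2*R*cc^(M-1) * (((k:ℝ)^2 * (((M+1)-k:ℕ):ℝ)^2)⁻¹) := by
              apply Finset.sum_le_sum
              intro k hk
              rw [Finset.mem_Ico] at hk
              have h1 : useq R cc (M+1-k) ≤ 2*R*cc^(M+1-k-1)/((M+1-k:ℕ):ℝ)^2 :=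
                ih (M+1-k) (by omega) (by omega)
              have hk0 : 0 < k := hk.1
              have hmk0 : 0 < M+1-k := by omega
              have hknz : (0:ℝ) < (k:ℝ)^2 := by positivity
              have hmknz : (0:ℝ) < ((M+1-k:ℕ):ℝ)^2 := by
                have : (0:ℝ) < ((M+1-k:ℕ):ℝ) := by exact_mod_cast hmk0
                positivity
              calc gseq cc k * useq R cc (M+1-k)
                  ≤ gseq cc k * (2*R*cc^(M+1-k-1)/((M+1-k:ℕ):ℝ)^2) :=
                    mul_le_mul_of_nonneg_left h1 (gseq_nonneg hcc16 _)
                _ = 2*R*(cc^(k-1)*cc^(M+1-k-1)) * (((k:ℝ)^2 * (((M+1)-k:ℕ):ℝ)^2)⁻¹) := by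
                    unfold gseq
                    field_simp
                _ = 2*R*cc^(M-1) * (((k:ℝ)^2 * (((M+1)-k:ℕ):ℝ)^2)⁻¹) := by
                    rw [← pow_add, show k-1 + (M+1-k-1) = M-1 by omega]
          _ = 2*R*cc^(M-1) * ∑ k ∈ Finset.Ico 1 (M+1), ((k:ℝ)^2 * (((M+1)-k:ℕ):ℝ)^2)⁻¹ := by
              rw [Finset.mul_sum]
          _ ≤ 2*R*cc^(M-1) * (16/((M+1:ℕ):ℝ)^2) := by
              apply mul_le_mul_of_nonneg_left (conv_sq_le (by omega))
              have : (0:ℝ) ≤ cc^(M-1) := pow_nonneg hcc0.le _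
              nlinarith
      have hg : gseq cc (M+1) = cc^M/((M+1:ℕ):ℝ)^2 := by
        unfold gseq; push_cast; norm_num
      have hm1 : (0:ℝ) < ((M+1:ℕ):ℝ)^2 := by positivity
      have hccM : cc^M = cc^(M-1) * cc := by
        rw [← pow_succ, show M-1+1 = M by omega]
      have hkey : R * (cc^M + 2*R*cc^(M-1)*16) ≤ 2*R*cc^M := by
        have h2 : (0:ℝ) ≤ cc^(M-1) := pow_nonneg hcc0.le _
        rw [hccM]
        nlinarith [mul_nonneg hR.le h2, mul_le_mul_of_nonneg_left hcc32 (mul_nonneg hR.le h2)]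
      calc R * (∑ k ∈ Finset.Ico 1 (M+1), gseq cc k * useq R cc (M+1-k)
            + gseq cc (M+1) * 1)
          ≤ R * (2*R*cc^(M-1) * (16/((M+1:ℕ):ℝ)^2) + cc^M/((M+1:ℕ):ℝ)^2) := by
            apply mul_le_mul_of_nonneg_left _ hR.le
            rw [hg, mul_one]
            linarith
        _ = R * (cc^M + 2*R*cc^(M-1)*16) / ((M+1:ℕ):ℝ)^2 := by ring
        _ ≤ 2*R*cc^M / ((M+1:ℕ):ℝ)^2 := by
            gcongr
        _ = 2*R*cc^(M+1-1)/((M+1:ℕ):ℝ)^2 := by rw [show M+1-1 = M by omega]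

end Useq

section Conv

variable {R cc K : ℝ}

lemma antidiag_to_Ico (f h : ℕ → ℝ) (hf : f 0 = 0) (n : ℕ) :
    ∑ p ∈ Finset.HasAntidiagonal.antidiagonal n, f p.1 * h p.2
      = ∑ k ∈ Finset.Ico 1 (n+1), f k * h (n-k) := by
  rw [Finset.Nat.sum_antidiagonal_eq_sum_range_succ_mk, Finset.range_eq_Ico]
  rw [show Finset.Ico 0 (n+1) = insert 0 (Finset.Ico 1 (n+1)) from by
    ext x; simp only [Finset.mem_Ico, Finset.mem_insert]; omega]
  rw [Finset.sum_insert (by simp), hf, zero_mul, zero_add]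

lemma GG_le (hcc16 : 16 ≤ cc) : ∀ n, 2 ≤ n →
    ∑ p ∈ Finset.HasAntidiagonal.antidiagonal n, gseq cc p.1 * gseq cc p.2 ≤ 16*cc^(n-2)/(n:ℝ)^2 := by
  have hcc0 : (0:ℝ) < cc := by linarith
  intro n hn
  rw [antidiag_to_Ico _ _ gseq_zero, Finset.sum_Ico_succ_top (by omega),
    show n-n = 0 by omega, gseq_zero, mul_zero, add_zero]
  calc ∑ k ∈ Finset.Ico 1 n, gseq cc k * gseq cc (n-k)
      = ∑ k ∈ Finset.Ico 1 n, cc^(n-2) * (((k:ℝ)^2 * ((n-k:ℕ):ℝ)^2)⁻¹) := by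
        apply Finset.sum_congr rfl
        intro k hk
        rw [Finset.mem_Ico] at hk
        unfold gseq
        rw [div_mul_div_comm, ← pow_add, show k-1 + ((n-k)-1) = n-2 by omega,
          div_eq_mul_inv]
    _ = cc^(n-2) * ∑ k ∈ Finset.Ico 1 n, ((k:ℝ)^2 * ((n-k:ℕ):ℝ)^2)⁻¹ := by
        rw [Finset.mul_sum]
    _ ≤ cc^(n-2) * (16/(n:ℝ)^2) := by
        apply mul_le_mul_of_nonneg_left (conv_sq_le (by omega))
        positivity
    _ = 16*cc^(n-2)/(n:ℝ)^2 := by ring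

lemma GG_zero : ∑ p ∈ Finset.HasAntidiagonal.antidiagonal 0, gseq cc p.1 * gseq cc p.2 = 0 := by
  simp [gseq_zero]

lemma GG_one : ∑ p ∈ Finset.HasAntidiagonal.antidiagonal 1, gseq cc p.1 * gseq cc p.2 = 0 := by
  rw [Finset.Nat.sum_antidiagonal_eq_sum_range_succ_mk]
  rw [Finset.sum_range_succ, Finset.sum_range_succ, Finset.sum_range_zero]
  simp [gseq_zero]

lemma GG_nonneg (hcc16 : 16 ≤ cc) (n : ℕ) :
    0 ≤ ∑ p ∈ Finset.HasAntidiagonal.antidiagonal n, gseq cc p.1 * gseq cc p.2 :=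
  Finset.sum_nonneg fun p _ => mul_nonneg (gseq_nonneg hcc16 _) (gseq_nonneg hcc16 _)

lemma UU_zero : ∑ p ∈ Finset.HasAntidiagonal.antidiagonal 0, useq R cc p.1 * useq R cc p.2 = 1 := by
  simp [useq_zero]

lemma UU_nonneg (hR : 0 < R) (hcc16 : 16 ≤ cc) (n : ℕ) :
    0 ≤ ∑ p ∈ Finset.HasAntidiagonal.antidiagonal n, useq R cc p.1 * useq R cc p.2 :=
  Finset.sum_nonneg fun p _ =>
    mul_nonneg (useq_nonneg hR hcc16 _) (useq_nonneg hR hcc16 _)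

lemma UU_le (hR : 0 < R) (hcc32 : 32*R ≤ cc) (hcc16 : 16 ≤ cc) : ∀ n, 1 ≤ n →
    ∑ p ∈ Finset.HasAntidiagonal.antidiagonal n, useq R cc p.1 * useq R cc p.2
      ≤ 6*R*cc^(n-1)/(n:ℝ)^2 := by
  have hcc0 : (0:ℝ) < cc := by linarith
  intro n hn
  rw [Finset.Nat.sum_antidiagonal_eq_sum_range_succ_mk, Finset.range_eq_Ico,
    Finset.sum_Ico_succ_top (by omega), Finset.sum_eq_sum_Ico_succ_bot (by omega)]
  dsimp only
  rw [show n-0 = n by omega, show n-n = 0 by omega, useq_zero, one_mul, mul_one,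
    show 0+1 = 1 by omega]
  rcases eq_or_lt_of_le hn with h1 | h2
  · -- n = 1
    subst h1
    have hu1 : useq R cc 1 = R := by
      rw [useq_succ, show Finset.Ico 1 2 = {1} from rfl, Finset.sum_singleton,
        gseq_one, show 1-1 = 0 by omega, useq_zero]
      ring
    rw [show Finset.Ico 1 1 = ∅ from rfl, Finset.sum_empty, hu1]
    norm_num
    linarith
  have hn2 : (0:ℝ) < (n:ℝ)^2 := by
    have : (0:ℝ) < (n:ℝ) := by exact_mod_cast (by omega : 0 < n)
    positivity
  have hun : useq R cc n ≤ 2*R*cc^(n-1)/(n:ℝ)^2 := useq_le hR hcc32 hcc16 n hn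
  have hmid : ∑ k ∈ Finset.Ico 1 n, useq R cc k * useq R cc (n-k)
      ≤ 2*R*cc^(n-1)/(n:ℝ)^2 := by
    calc ∑ k ∈ Finset.Ico 1 n, useq R cc k * useq R cc (n-k)
        ≤ ∑ k ∈ Finset.Ico 1 n, 4*R^2*cc^(n-2) * (((k:ℝ)^2 * ((n-k:ℕ):ℝ)^2)⁻¹) := by
          apply Finset.sum_le_sum
          intro k hk
          rw [Finset.mem_Ico] at hk
          have hk0 : 0 < k := hk.1
          have hmk0 : 0 < n-k := by omega
          have h1 : (0:ℝ) < (k:ℝ)^2 := by positivity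
          have h2 : (0:ℝ) < ((n-k:ℕ):ℝ)^2 := by
            have : (0:ℝ) < ((n-k:ℕ):ℝ) := by exact_mod_cast hmk0
            positivity
          calc useq R cc k * useq R cc (n-k)
              ≤ (2*R*cc^(k-1)/(k:ℝ)^2) * (2*R*cc^(n-k-1)/((n-k:ℕ):ℝ)^2) := by
                apply mul_le_mul (useq_le hR hcc32 hcc16 k (by omega))
                  (useq_le hR hcc32 hcc16 (n-k) (by omega))
                  (useq_nonneg hR hcc16 _)
                positivity
            _ = 4*R^2*(cc^(k-1)*cc^(n-k-1)) * (((k:ℝ)^2 * ((n-k:ℕ):ℝ)^2)⁻¹) := by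
                field_simp
                ring
            _ = 4*R^2*cc^(n-2) * (((k:ℝ)^2 * ((n-k:ℕ):ℝ)^2)⁻¹) := by
                rw [← pow_add, show k-1 + (n-k-1) = n-2 by omega]
      _ = 4*R^2*cc^(n-2) * ∑ k ∈ Finset.Ico 1 n, ((k:ℝ)^2 * ((n-k:ℕ):ℝ)^2)⁻¹ := by
          rw [Finset.mul_sum]
      _ ≤ 4*R^2*cc^(n-2) * (16/(n:ℝ)^2) := by
          apply mul_le_mul_of_nonneg_left (conv_sq_le (by omega))
          positivity
      _ = 64*R^2*cc^(n-2)/(n:ℝ)^2 := by ring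
      _ ≤ 2*R*cc^(n-1)/(n:ℝ)^2 := by
          have h2' : (0:ℝ) ≤ cc^(n-2) := pow_nonneg hcc0.le _
          have key : 64*R^2 ≤ 2*R*cc := by nlinarith
          have hnum : 64*R^2*cc^(n-2) ≤ 2*R*cc^(n-1) := by
            calc 64*R^2*cc^(n-2) ≤ (2*R*cc)*cc^(n-2) :=
                  mul_le_mul_of_nonneg_right key h2'
              _ = 2*R*cc^(n-1) := by
                  rw [show n-1 = (n-2)+1 by omega, pow_succ]
                  ring
          rw [div_le_div_iff₀ hn2 hn2]
          exact mul_le_mul_of_nonneg_right hnum hn2.le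
  have hfin := add_le_add (add_le_add hun hmid) hun
  calc useq R cc n + ∑ k ∈ Finset.Ico 1 n, useq R cc k * useq R cc (n-k) + useq R cc n
      ≤ 2*R*cc^(n-1)/(n:ℝ)^2 + 2*R*cc^(n-1)/(n:ℝ)^2 + 2*R*cc^(n-1)/(n:ℝ)^2 := hfin
    _ = 6*R*cc^(n-1)/(n:ℝ)^2 := by ring

end Conv

section SP
variable {R cc K : ℝ}

lemma UU_one (hR : 0 < R) : ∑ p ∈ Finset.HasAntidiagonal.antidiagonal 1, useq R cc p.1 * useq R cc p.2
    = 2 * useq R cc 1 := by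
  rw [Finset.Nat.sum_antidiagonal_eq_sum_range_succ_mk]
  rw [Finset.sum_range_succ, Finset.sum_range_succ, Finset.sum_range_zero]
  simp [useq_zero]
  ring

lemma GG_two : ∑ q ∈ Finset.HasAntidiagonal.antidiagonal 2, gseq cc q.1 * gseq cc q.2 = 1 := by
  rw [Finset.Nat.sum_antidiagonal_eq_sum_range_succ_mk]
  rw [Finset.sum_range_succ, Finset.sum_range_succ, Finset.sum_range_succ,
    Finset.sum_range_zero]
  simp [gseq_zero, gseq_one]

lemma SP (hR : 0 < R) (hK : 0 < K) (hcc32 : 32*R ≤ cc) (hcc128 : 128*K ≤ cc)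
    (hcc16 : 16 ≤ cc) : ∀ n, 2 ≤ n →
    2*K * ∑ p ∈ Finset.HasAntidiagonal.antidiagonal n,
      (∑ q ∈ Finset.HasAntidiagonal.antidiagonal p.1, gseq cc q.1 * gseq cc q.2) *
      (∑ r ∈ Finset.HasAntidiagonal.antidiagonal p.2, useq R cc r.1 * useq R cc r.2)
    ≤ gseq cc n := by
  have hcc0 : (0:ℝ) < cc := by linarith
  intro n hn
  rw [Finset.Nat.sum_antidiagonal_eq_sum_range_succ_mk, Finset.range_eq_Ico,
    Finset.sum_Ico_succ_top (by omega : 0 ≤ n),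
    Finset.sum_eq_sum_Ico_succ_bot (by omega : 0 < n),
    Finset.sum_eq_sum_Ico_succ_bot (by omega : 0+1 < n)]
  dsimp only
  rw [GG_zero, zero_mul, zero_add, show (0+1) = 1 by omega, GG_one, zero_mul, zero_add,
    show n-n = 0 by omega, UU_zero, mul_one, show 0+1+1 = 2 by omega]
  -- now goal: 2*K*(∑ k ∈ Ico 2 n, GG k * UU (n-k) + GG n) ≤ g n
  have hGGn : ∑ q ∈ Finset.HasAntidiagonal.antidiagonal n, gseq cc q.1 * gseq cc q.2
      ≤ 16*cc^(n-2)/(n:ℝ)^2 := GG_le hcc16 n hn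
  have hn2 : (0:ℝ) < (n:ℝ)^2 := by
    have : (0:ℝ) < (n:ℝ) := by exact_mod_cast (by omega : 0 < n)
    positivity
  have hmid : ∑ k ∈ Finset.Ico 2 n,
      (∑ q ∈ Finset.HasAntidiagonal.antidiagonal k, gseq cc q.1 * gseq cc q.2) *
      (∑ r ∈ Finset.HasAntidiagonal.antidiagonal (n-k), useq R cc r.1 * useq R cc r.2)
      ≤ 96*R*cc^(n-3) * (16/(n:ℝ)^2) := by
    calc ∑ k ∈ Finset.Ico 2 n,
        (∑ q ∈ Finset.HasAntidiagonal.antidiagonal k, gseq cc q.1 * gseq cc q.2) *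
        (∑ r ∈ Finset.HasAntidiagonal.antidiagonal (n-k), useq R cc r.1 * useq R cc r.2)
        ≤ ∑ k ∈ Finset.Ico 2 n, 96*R*cc^(n-3) * (((k:ℝ)^2 * ((n-k:ℕ):ℝ)^2)⁻¹) := by
          apply Finset.sum_le_sum
          intro k hk
          rw [Finset.mem_Ico] at hk
          have hk0 : 0 < k := by omega
          have hmk0 : 0 < n-k := by omega
          have h1 : (0:ℝ) < (k:ℝ)^2 := by positivity
          have h2 : (0:ℝ) < ((n-k:ℕ):ℝ)^2 := by
            have : (0:ℝ) < ((n-k:ℕ):ℝ) := by exact_mod_cast hmk0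
            positivity
          calc (∑ q ∈ Finset.HasAntidiagonal.antidiagonal k, gseq cc q.1 * gseq cc q.2) *
              (∑ r ∈ Finset.HasAntidiagonal.antidiagonal (n-k), useq R cc r.1 * useq R cc r.2)
              ≤ (16*cc^(k-2)/(k:ℝ)^2) * (6*R*cc^(n-k-1)/((n-k:ℕ):ℝ)^2) := by
                apply mul_le_mul (GG_le hcc16 k (by omega))
                  (UU_le hR hcc32 hcc16 (n-k) (by omega))
                  (UU_nonneg hR hcc16 _)
                positivity
            _ = 96*R*(cc^(k-2)*cc^(n-k-1)) * (((k:ℝ)^2 * ((n-k:ℕ):ℝ)^2)⁻¹) := by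
                field_simp
                ring
            _ = 96*R*cc^(n-3) * (((k:ℝ)^2 * ((n-k:ℕ):ℝ)^2)⁻¹) := by
                rw [← pow_add, show k-2 + (n-k-1) = n-3 by omega]
      _ = 96*R*cc^(n-3) * ∑ k ∈ Finset.Ico 2 n, ((k:ℝ)^2 * ((n-k:ℕ):ℝ)^2)⁻¹ := by
          rw [Finset.mul_sum]
      _ ≤ 96*R*cc^(n-3) * (16/(n:ℝ)^2) := by
          apply mul_le_mul_of_nonneg_left _ (by positivity)
          calc ∑ k ∈ Finset.Ico 2 n, ((k:ℝ)^2 * ((n-k:ℕ):ℝ)^2)⁻¹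
              ≤ ∑ k ∈ Finset.Ico 1 n, ((k:ℝ)^2 * ((n-k:ℕ):ℝ)^2)⁻¹ := by
                apply Finset.sum_le_sum_of_subset_of_nonneg
                · intro x hx; rw [Finset.mem_Ico] at *; omega
                · intro k hk _
                  rw [Finset.mem_Ico] at hk
                  have hk0 : 0 < k := hk.1
                  have hmk0 : 0 < n-k := by omega
                  have h1 : (0:ℝ) < (k:ℝ)^2 := by positivity
                  have h2 : (0:ℝ) < ((n-k:ℕ):ℝ)^2 := by
                    have : (0:ℝ) < ((n-k:ℕ):ℝ) := by exact_mod_cast hmk0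
                    positivity
                  positivity
            _ ≤ 16/(n:ℝ)^2 := conv_sq_le (by omega)
  rcases eq_or_lt_of_le hn with h2 | h3
  · -- n = 2 : middle sum is empty
    rw [← h2] at *
    rw [show Finset.Ico 2 2 = ∅ from rfl, Finset.sum_empty, zero_add, GG_two]
    unfold gseq
    norm_num
    linarith
  · have hn3 : 3 ≤ n := h3
    have hub : 2*K * (∑ k ∈ Finset.Ico 2 n,
        (∑ q ∈ Finset.HasAntidiagonal.antidiagonal k, gseq cc q.1 * gseq cc q.2) *
        (∑ r ∈ Finset.HasAntidiagonal.antidiagonal (n-k), useq R cc r.1 * useq R cc r.2)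
        + ∑ q ∈ Finset.HasAntidiagonal.antidiagonal n, gseq cc q.1 * gseq cc q.2)
        ≤ 2*K*(96*R*cc^(n-3) * (16/(n:ℝ)^2) + 16*cc^(n-2)/(n:ℝ)^2) := by
      apply mul_le_mul_of_nonneg_left _ (by linarith)
      linarith
    refine le_trans hub ?_
    unfold gseq
    have e2 : cc^(n-1) = cc^(n-3)*cc^2 := by rw [← pow_add, show n-3+2 = n-1 by omega]
    have e1 : cc^(n-2) = cc^(n-3)*cc := by rw [← pow_succ, show n-3+1 = n-2 by omega]
    have hp : (0:ℝ) ≤ cc^(n-3) := pow_nonneg hcc0.le _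
    have key : 3072*K*R + 32*K*cc ≤ cc^2 := by
      nlinarith [mul_le_mul hcc32 hcc128 (by positivity) hcc0.le,
        mul_le_mul_of_nonneg_right hcc128 hcc0.le]
    have key2 := mul_le_mul_of_nonneg_right key hp
    calc 2*K*(96*R*cc^(n-3) * (16/(n:ℝ)^2) + 16*cc^(n-2)/(n:ℝ)^2)
        = (3072*K*R*cc^(n-3) + 32*K*cc^(n-2))/(n:ℝ)^2 := by ring
      _ ≤ cc^(n-1)/(n:ℝ)^2 := by
          rw [e1, e2, div_le_div_iff₀ hn2 hn2]
          nlinarith [mul_le_mul_of_nonneg_right key2 hn2.le]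

end SP



open PowerSeries

/-- The majorant series for Theorem 1.1 (ii): the formal power series
`B(X) = X + ∑_{n≥2} B_n X^n` determined by
`∑_{n≥2} ε_{n-1}⁻¹ B_n X^n = 2K B(X)² / (1 - R B(X))²` (denominators cleared)
has non-negative coefficients and positive radius of convergence. -/
theorem majorant_series_ii
    (ε : ℕ → ℝ) (hεpos : ∀ n, 1 ≤ n → 0 < ε n)
    (α : ℝ) (hα : 0 < α)
    (hgrow : ∀ l : ℕ, 1 ≤ l → ε l < (2 * (l : ℝ)) ^ α)
    (hsub : ∀ ν μ : ℕ, 1 ≤ μ → μ < ν → (ε (ν - μ))⁻¹ ≤ (ε ν)⁻¹ + (ε μ)⁻¹)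
    (K R : ℝ) (hK : 0 < K) (hR : 0 < R)
    (B : PowerSeries ℝ) (hB0 : constantCoeff B = 0) (hB1 : coeff 1 B = 1)
    (heq : (PowerSeries.mk fun n => if 2 ≤ n then (ε (n - 1))⁻¹ * coeff n B else 0)
        * (1 - C R * B) ^ 2 = C (2 * K) * B ^ 2) :
    (∀ n, 0 ≤ coeff n B) ∧ ∃ r : ℝ, 0 < r ∧ Summable fun n => coeff n B * r ^ n := by
  have hb0 : coeff 0 B = 0 := by
    rw [PowerSeries.coeff_zero_eq_constantCoeff]; exact hB0
  set V : PowerSeries ℝ := (1 - C R * B)⁻¹ with hVdef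
  have hVc : constantCoeff (1 - C R * B) = 1 := by
    simp [hB0]
  have hVu : (1 - C R * B) * V = 1 :=
    PowerSeries.mul_inv_cancel _ (by rw [hVc]; norm_num)
  have hA : (PowerSeries.mk fun n => if 2 ≤ n then (ε (n - 1))⁻¹ * coeff n B else 0)
      = C (2 * K) * B ^ 2 * V ^ 2 := by
    calc (PowerSeries.mk fun n => if 2 ≤ n then (ε (n - 1))⁻¹ * coeff n B else 0)
        = (PowerSeries.mk fun n => if 2 ≤ n then (ε (n - 1))⁻¹ * coeff n B else 0)
            * ((1 - C R * B) * V) ^ 2 := by rw [hVu]; ring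
      _ = ((PowerSeries.mk fun n => if 2 ≤ n then (ε (n - 1))⁻¹ * coeff n B else 0)
            * (1 - C R * B) ^ 2) * V ^ 2 := by ring
      _ = C (2 * K) * B ^ 2 * V ^ 2 := by rw [heq]
  have hbrec : ∀ n, 2 ≤ n → coeff n B = ε (n-1) * (2*K *
      ∑ p ∈ Finset.HasAntidiagonal.antidiagonal n,
        (∑ q ∈ Finset.HasAntidiagonal.antidiagonal p.1, coeff q.1 B * coeff q.2 B) *
        (∑ r ∈ Finset.HasAntidiagonal.antidiagonal p.2, coeff r.1 V * coeff r.2 V)) := by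
    intro n hn
    have h1 := congrArg (coeff n) hA
    rw [PowerSeries.coeff_mk, if_pos hn] at h1
    have h2 : coeff n (C (2*K) * B ^ 2 * V ^ 2) = 2*K *
        ∑ p ∈ Finset.HasAntidiagonal.antidiagonal n,
          (∑ q ∈ Finset.HasAntidiagonal.antidiagonal p.1, coeff q.1 B * coeff q.2 B) *
          (∑ r ∈ Finset.HasAntidiagonal.antidiagonal p.2, coeff r.1 V * coeff r.2 V) := by
      rw [show C (2*K) * B ^ 2 * V ^ 2 = C (2*K) * ((B*B) * (V*V)) from by ring]
      rw [PowerSeries.coeff_C_mul, PowerSeries.coeff_mul]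
      congr 1
      apply Finset.sum_congr rfl
      intro p _
      rw [PowerSeries.coeff_mul, PowerSeries.coeff_mul]
    rw [h2] at h1
    have hε : 0 < ε (n-1) := hεpos _ (by omega)
    have hε' : ε (n-1) ≠ 0 := ne_of_gt hε
    calc coeff n B = ε (n-1) * ((ε (n-1))⁻¹ * coeff n B) := by
          field_simp
      _ = _ := by rw [h1]
  have hv0 : coeff 0 V = 1 := by
    have h1 := congrArg (constantCoeff) hVu
    rw [map_mul, hVc, one_mul, map_one] at h1
    rw [PowerSeries.coeff_zero_eq_constantCoeff]
    exact h1
  have hVrec : V = 1 + (C R * B) * V := by linear_combination hVu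
  have hvrec : ∀ n, 1 ≤ n → coeff n V
      = R * ∑ p ∈ Finset.HasAntidiagonal.antidiagonal n, coeff p.1 B * coeff p.2 V := by
    intro n hn
    have h1 := congrArg (coeff n) hVrec
    rw [map_add, PowerSeries.coeff_one, if_neg (by omega),
      show (C R * B) * V = C R * (B * V) from by ring,
      PowerSeries.coeff_C_mul, PowerSeries.coeff_mul, zero_add] at h1
    exact h1
  -- nonnegativity
  have hnonneg : ∀ n, 0 ≤ coeff n B ∧ 0 ≤ coeff n V := by
    intro n
    induction n using Nat.strong_induction_on with
    | _ n ih =>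
      have hbn : 0 ≤ coeff n B := by
        rcases Nat.lt_or_ge n 2 with hn2 | hn2
        · interval_cases n
          · rw [hb0]
          · rw [hB1]; norm_num
        · rw [hbrec n hn2]
          apply mul_nonneg (hεpos _ (by omega)).le
          apply mul_nonneg (by linarith)
          apply Finset.sum_nonneg
          intro p hp
          rw [Finset.HasAntidiagonal.mem_antidiagonal] at hp
          by_cases hp1 : p.1 ≤ 1
          · have hz : ∑ q ∈ Finset.HasAntidiagonal.antidiagonal p.1, coeff q.1 B * coeff q.2 B = 0 := by
              apply Finset.sum_eq_zero
              intro q hq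
              rw [Finset.HasAntidiagonal.mem_antidiagonal] at hq
              rcases (by omega : q.1 = 0 ∨ q.2 = 0) with h | h
              · rw [h, hb0, zero_mul]
              · rw [h, hb0, mul_zero]
            rw [hz, zero_mul]
          · apply mul_nonneg
            · apply Finset.sum_nonneg
              intro q hq
              rw [Finset.HasAntidiagonal.mem_antidiagonal] at hq
              rcases (by omega : q.1 = 0 ∨ q.2 = 0 ∨ (1 ≤ q.1 ∧ 1 ≤ q.2)) with h | h | ⟨h1, h2⟩
              · rw [h, hb0, zero_mul]
              · rw [h, hb0, mul_zero]
              · exact mul_nonneg (ih q.1 (by omega)).1 (ih q.2 (by omega)).1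
            · apply Finset.sum_nonneg
              intro r hr
              rw [Finset.HasAntidiagonal.mem_antidiagonal] at hr
              exact mul_nonneg (ih r.1 (by omega)).2 (ih r.2 (by omega)).2
      have hvn : 0 ≤ coeff n V := by
        rcases Nat.eq_zero_or_pos n with rfl | hn1
        · rw [hv0]; norm_num
        · rw [hvrec n hn1]
          apply mul_nonneg hR.le
          apply Finset.sum_nonneg
          intro p hp
          rw [Finset.HasAntidiagonal.mem_antidiagonal] at hp
          rcases Nat.eq_zero_or_pos p.1 with h0 | h0
          · rw [h0, hb0, zero_mul]
          · have hbp : 0 ≤ coeff p.1 B := by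
              rcases eq_or_lt_of_le (by omega : p.1 ≤ n) with h | h
              · rw [h]; exact hbn
              · exact (ih p.1 h).1
            exact mul_nonneg hbp (ih p.2 (by omega)).2
      exact ⟨hbn, hvn⟩
  refine ⟨fun n => (hnonneg n).1, ?_⟩
  -- quantitative bound
  set cc : ℝ := 16*(2*R + 8*K + 1) with hccdef
  have hcc32 : 32*R ≤ cc := by rw [hccdef]; nlinarith
  have hcc128 : 128*K ≤ cc := by rw [hccdef]; nlinarith
  have hcc16 : 16 ≤ cc := by rw [hccdef]; nlinarith
  have hcc0 : (0:ℝ) < cc := by linarith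
  have hT1 : ∀ m, 1 ≤ Tf (etil ε) m := one_le_Tf one_le_etil
  have hT0 : Tf (etil ε) 0 = 1 := by rw [Tf]
  have hTone : Tf (etil ε) 1 = 1 := by rw [Tf]
  have hmain : ∀ n, coeff n B ≤ Tf (etil ε) n * gseq cc n
      ∧ coeff n V ≤ Tf (etil ε) n * useq R cc n := by
    intro n
    induction n using Nat.strong_induction_on with
    | _ n ih =>
      have hTchain : ∀ q1 q2 r1 r2 : ℕ, 1 ≤ q1 → 1 ≤ q2 → q1+q2+r1+r2 = n →
          etil ε n * (Tf (etil ε) q1 * Tf (etil ε) q2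
            * (Tf (etil ε) r1 * Tf (etil ε) r2)) ≤ Tf (etil ε) n := by
        intro q1 q2 r1 r2 h1 h2 hsum
        have hTnn : ∀ m, (0:ℝ) ≤ Tf (etil ε) m := fun m => le_trans zero_le_one (hT1 m)
        have s1 : Tf (etil ε) r1 * Tf (etil ε) r2 ≤ Tf (etil ε) (r1+r2) :=
          Tf_supermul one_le_etil r1 r2
        have s2 : Tf (etil ε) q2 * Tf (etil ε) (r1+r2) ≤ Tf (etil ε) (q2+(r1+r2)) :=
          Tf_supermul one_le_etil q2 (r1+r2)
        have s3 : Tf (etil ε) q1 * Tf (etil ε) q2 * (Tf (etil ε) r1 * Tf (etil ε) r2)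
            ≤ Tf (etil ε) q1 * Tf (etil ε) (q2+(r1+r2)) := by
          calc Tf (etil ε) q1 * Tf (etil ε) q2 * (Tf (etil ε) r1 * Tf (etil ε) r2)
              = Tf (etil ε) q1 * (Tf (etil ε) q2 * (Tf (etil ε) r1 * Tf (etil ε) r2)) := by
                ring
            _ ≤ Tf (etil ε) q1 * (Tf (etil ε) q2 * Tf (etil ε) (r1+r2)) := by
                apply mul_le_mul_of_nonneg_left
                  (mul_le_mul_of_nonneg_left s1 (hTnn q2)) (hTnn q1)
            _ ≤ Tf (etil ε) q1 * Tf (etil ε) (q2+(r1+r2)) :=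
                mul_le_mul_of_nonneg_left s2 (hTnn q1)
        calc etil ε n * (Tf (etil ε) q1 * Tf (etil ε) q2
              * (Tf (etil ε) r1 * Tf (etil ε) r2))
            ≤ etil ε n * (Tf (etil ε) q1 * Tf (etil ε) (q2+(r1+r2))) := by
              apply mul_le_mul_of_nonneg_left s3
                (le_trans zero_le_one (one_le_etil n))
          _ ≤ Tf (etil ε) (q1 + (q2+(r1+r2))) := by
              rw [show etil ε n = etil ε (q1 + (q2+(r1+r2))) from by rw [show
                q1 + (q2+(r1+r2)) = n by omega]]
              exact Tf_node one_le_etil h1 (by omega)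
          _ = Tf (etil ε) n := by rw [show q1 + (q2+(r1+r2)) = n by omega]
      have hbn : coeff n B ≤ Tf (etil ε) n * gseq cc n := by
        rcases Nat.lt_or_ge n 2 with hn2 | hn2
        · interval_cases n
          · rw [hb0, hT0, gseq_zero, mul_zero]
          · rw [hB1, hTone, gseq_one, mul_one]
        · rw [hbrec n hn2]
          have key : ε (n-1) * (∑ p ∈ Finset.HasAntidiagonal.antidiagonal n,
              (∑ q ∈ Finset.HasAntidiagonal.antidiagonal p.1, coeff q.1 B * coeff q.2 B) *
              (∑ r ∈ Finset.HasAntidiagonal.antidiagonal p.2, coeff r.1 V * coeff r.2 V))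
              ≤ Tf (etil ε) n * (∑ p ∈ Finset.HasAntidiagonal.antidiagonal n,
              (∑ q ∈ Finset.HasAntidiagonal.antidiagonal p.1, gseq cc q.1 * gseq cc q.2) *
              (∑ r ∈ Finset.HasAntidiagonal.antidiagonal p.2, useq R cc r.1 * useq R cc r.2)) := by
            rw [Finset.mul_sum, Finset.mul_sum]
            apply Finset.sum_le_sum
            intro p hp
            rw [Finset.HasAntidiagonal.mem_antidiagonal] at hp
            rw [Finset.sum_mul_sum, Finset.sum_mul_sum, Finset.mul_sum, Finset.mul_sum]
            apply Finset.sum_le_sum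
            intro q hq
            rw [Finset.mul_sum, Finset.mul_sum]
            apply Finset.sum_le_sum
            intro r hr
            rw [Finset.HasAntidiagonal.mem_antidiagonal] at hq hr
            -- per-term bound
            have hTnn : ∀ m, (0:ℝ) ≤ Tf (etil ε) m := fun m => le_trans zero_le_one (hT1 m)
            have hgu_nn : (0:ℝ) ≤ gseq cc q.1 * gseq cc q.2
                * (useq R cc r.1 * useq R cc r.2) :=
              mul_nonneg (mul_nonneg (gseq_nonneg hcc16 _) (gseq_nonneg hcc16 _))
                (mul_nonneg (useq_nonneg hR hcc16 _) (useq_nonneg hR hcc16 _))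
            rcases (by omega : q.1 = 0 ∨ q.2 = 0 ∨ (1 ≤ q.1 ∧ 1 ≤ q.2)) with h | h | ⟨h1, h2⟩
            · rw [h, hb0]
              simp only [zero_mul, mul_zero]
              exact mul_nonneg (hTnn n) (mul_nonneg
                (mul_nonneg (gseq_nonneg hcc16 _) (gseq_nonneg hcc16 _))
                (mul_nonneg (useq_nonneg hR hcc16 _) (useq_nonneg hR hcc16 _)))
            · rw [h, hb0]
              simp only [zero_mul, mul_zero]
              exact mul_nonneg (hTnn n) (mul_nonneg
                (mul_nonneg (gseq_nonneg hcc16 _) (gseq_nonneg hcc16 _))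
                (mul_nonneg (useq_nonneg hR hcc16 _) (useq_nonneg hR hcc16 _)))
            · have hq1 : q.1 < n := by omega
              have hq2 : q.2 < n := by omega
              have hr1 : r.1 < n := by omega
              have hr2 : r.2 < n := by omega
              have e1 := (ih q.1 hq1).1
              have e2 := (ih q.2 hq2).1
              have e3 := (ih r.1 hr1).2
              have e4 := (ih r.2 hr2).2
              have hbnn : ∀ m, 0 ≤ coeff m B := fun m => (hnonneg m).1
              have hvnn : ∀ m, 0 ≤ coeff m V := fun m => (hnonneg m).2
              have hprod : coeff q.1 B * coeff q.2 B * (coeff r.1 V * coeff r.2 V)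
                  ≤ (Tf (etil ε) q.1 * gseq cc q.1) * (Tf (etil ε) q.2 * gseq cc q.2)
                    * ((Tf (etil ε) r.1 * useq R cc r.1)
                      * (Tf (etil ε) r.2 * useq R cc r.2)) := by
                apply mul_le_mul
                · apply mul_le_mul e1 e2 (hbnn _)
                  exact mul_nonneg (hTnn _) (gseq_nonneg hcc16 _)
                · apply mul_le_mul e3 e4 (hvnn _)
                  exact mul_nonneg (hTnn _) (useq_nonneg hR hcc16 _)
                · exact mul_nonneg (hvnn _) (hvnn _)
                · apply mul_nonneg <;> exact mul_nonneg (hTnn _) (gseq_nonneg hcc16 _)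
              calc ε (n-1) * (coeff q.1 B * coeff q.2 B
                    * (coeff r.1 V * coeff r.2 V))
                  ≤ etil ε n * ((Tf (etil ε) q.1 * gseq cc q.1)
                      * (Tf (etil ε) q.2 * gseq cc q.2)
                      * ((Tf (etil ε) r.1 * useq R cc r.1)
                        * (Tf (etil ε) r.2 * useq R cc r.2))) := by
                    apply mul_le_mul (le_max_right _ _) hprod
                    · exact mul_nonneg (mul_nonneg (hbnn _) (hbnn _))
                        (mul_nonneg (hvnn _) (hvnn _))
                    · exact le_trans zero_le_one (one_le_etil n)
                _ = (etil ε n * (Tf (etil ε) q.1 * Tf (etil ε) q.2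
                      * (Tf (etil ε) r.1 * Tf (etil ε) r.2)))
                    * (gseq cc q.1 * gseq cc q.2 * (useq R cc r.1 * useq R cc r.2)) := by
                    ring
                _ ≤ Tf (etil ε) n
                    * (gseq cc q.1 * gseq cc q.2 * (useq R cc r.1 * useq R cc r.2)) := by
                    apply mul_le_mul_of_nonneg_right
                      (hTchain q.1 q.2 r.1 r.2 h1 h2 (by omega)) hgu_nn
                _ = Tf (etil ε) n * (gseq cc q.1 * gseq cc q.2
                      * (useq R cc r.1 * useq R cc r.2)) := rfl
          calc ε (n-1) * (2*K * ∑ p ∈ Finset.HasAntidiagonal.antidiagonal n,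
              (∑ q ∈ Finset.HasAntidiagonal.antidiagonal p.1, coeff q.1 B * coeff q.2 B) *
              (∑ r ∈ Finset.HasAntidiagonal.antidiagonal p.2, coeff r.1 V * coeff r.2 V))
              = 2*K * (ε (n-1) * ∑ p ∈ Finset.HasAntidiagonal.antidiagonal n,
              (∑ q ∈ Finset.HasAntidiagonal.antidiagonal p.1, coeff q.1 B * coeff q.2 B) *
              (∑ r ∈ Finset.HasAntidiagonal.antidiagonal p.2, coeff r.1 V * coeff r.2 V)) := by ring
            _ ≤ 2*K * (Tf (etil ε) n * (∑ p ∈ Finset.HasAntidiagonal.antidiagonal n,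
              (∑ q ∈ Finset.HasAntidiagonal.antidiagonal p.1, gseq cc q.1 * gseq cc q.2) *
              (∑ r ∈ Finset.HasAntidiagonal.antidiagonal p.2, useq R cc r.1 * useq R cc r.2))) := by
                apply mul_le_mul_of_nonneg_left key (by linarith)
            _ = Tf (etil ε) n * (2*K * ∑ p ∈ Finset.HasAntidiagonal.antidiagonal n,
              (∑ q ∈ Finset.HasAntidiagonal.antidiagonal p.1, gseq cc q.1 * gseq cc q.2) *
              (∑ r ∈ Finset.HasAntidiagonal.antidiagonal p.2, useq R cc r.1 * useq R cc r.2)) := by ring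
            _ ≤ Tf (etil ε) n * gseq cc n := by
                apply mul_le_mul_of_nonneg_left
                  (SP hR hK hcc32 hcc128 hcc16 n hn2)
                  (le_trans zero_le_one (hT1 n))
      have hvn : coeff n V ≤ Tf (etil ε) n * useq R cc n := by
        rcases Nat.eq_zero_or_pos n with rfl | hn1
        · rw [hv0, hT0, useq_zero, mul_one]
        · obtain ⟨m, rfl⟩ : ∃ m, n = m + 1 := ⟨n-1, by omega⟩
          rw [hvrec (m+1) (by omega),
            antidiag_to_Ico (fun k => coeff k B) (fun k => coeff k V) hb0, useq_succ]
          have key2 : ∑ k ∈ Finset.Ico 1 (m+1+1), coeff k B * coeff (m+1-k) V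
              ≤ Tf (etil ε) (m+1)
                * ∑ k ∈ Finset.Ico 1 (m+2), gseq cc k * useq R cc (m+1-k) := by
            rw [Finset.mul_sum]
            apply Finset.sum_le_sum
            intro k hk
            rw [Finset.mem_Ico] at hk
            have hbk : coeff k B ≤ Tf (etil ε) k * gseq cc k := by
              rcases eq_or_lt_of_le (by omega : k ≤ m+1) with h | h
              · rw [h]; exact hbn
              · exact (ih k h).1
            have hvk : coeff (m+1-k) V ≤ Tf (etil ε) (m+1-k) * useq R cc (m+1-k) :=
              (ih (m+1-k) (by omega)).2
            have hTnn : ∀ j, (0:ℝ) ≤ Tf (etil ε) j := fun j => le_trans zero_le_one (hT1 j)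
            calc coeff k B * coeff (m+1-k) V
                ≤ (Tf (etil ε) k * gseq cc k) * (Tf (etil ε) (m+1-k) * useq R cc (m+1-k)) := by
                  apply mul_le_mul hbk hvk (hnonneg _).2
                  exact mul_nonneg (hTnn _) (gseq_nonneg hcc16 _)
              _ = (Tf (etil ε) k * Tf (etil ε) (m+1-k)) * (gseq cc k * useq R cc (m+1-k)) := by
                  ring
              _ ≤ Tf (etil ε) (m+1) * (gseq cc k * useq R cc (m+1-k)) := by
                  apply mul_le_mul_of_nonneg_right _
                    (mul_nonneg (gseq_nonneg hcc16 _) (useq_nonneg hR hcc16 _))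
                  have hs := Tf_supermul (e := etil ε) one_le_etil k (m+1-k)
                  rw [show k + (m+1-k) = m+1 by omega] at hs
                  exact hs
          calc R * ∑ k ∈ Finset.Ico 1 (m+1+1), coeff k B * coeff (m+1-k) V
              ≤ R * (Tf (etil ε) (m+1)
                * ∑ k ∈ Finset.Ico 1 (m+2), gseq cc k * useq R cc (m+1-k)) :=
                mul_le_mul_of_nonneg_left key2 hR.le
            _ = Tf (etil ε) (m+1)
                * (R * ∑ k ∈ Finset.Ico 1 (m+2), gseq cc k * useq R cc (m+1-k)) := by ring
      exact ⟨hbn, hvn⟩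
  -- conclude summability
  set β : ℝ := (2:ℝ)^α with hβdef
  have hβ1 : 1 ≤ β := one_le_beta hα
  have hβ5 : (1:ℝ) ≤ β^5 := one_le_pow₀ hβ1
  set D : ℝ := (2*β^5) * cc with hDdef
  have hD1 : 1 ≤ D := by rw [hDdef]; nlinarith
  have hD0 : 0 < D := by linarith
  refine ⟨(2*D)⁻¹, by positivity, ?_⟩
  have hTbound := Tf_etil_bound (ε := ε) (α := α) hεpos hα hgrow hsub
  have hbound : ∀ n, coeff n B * ((2*D)⁻¹)^n ≤ (1/2:ℝ)^n := by
    intro n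
    rcases Nat.eq_zero_or_pos n with rfl | hn1
    · simp [hb0]
    · have h1 : coeff n B ≤ D^n := by
        have h2 : gseq cc n ≤ cc^n := by
          unfold gseq
          have hn2 : (1:ℝ) ≤ (n:ℝ)^2 := by
            have : (1:ℝ) ≤ (n:ℝ) := by exact_mod_cast hn1
            nlinarith
          calc cc^(n-1)/(n:ℝ)^2 ≤ cc^(n-1)/1 := by
                apply div_le_div_of_nonneg_left (pow_nonneg hcc0.le _) (by norm_num) hn2
              _ = cc^(n-1) := by norm_num
              _ ≤ cc^n := pow_le_pow_right₀ (by linarith) (by omega)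
        calc coeff n B ≤ Tf (etil ε) n * gseq cc n := (hmain n).1
          _ ≤ (2*β^5)^n * cc^n := by
              apply mul_le_mul (hTbound n hn1) h2 (gseq_nonneg hcc16 n) (by positivity)
          _ = D^n := by rw [hDdef]; exact (mul_pow (2*β^5) cc n).symm
      calc coeff n B * ((2*D)⁻¹)^n ≤ D^n * ((2*D)⁻¹)^n := by
            apply mul_le_mul_of_nonneg_right h1 (by positivity)
        _ = (D * (2*D)⁻¹)^n := (mul_pow _ _ _).symm
        _ = (1/2:ℝ)^n := by
            congr 1
            field_simp
  apply Summable.of_nonneg_of_le _ hbound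
    (summable_geometric_of_lt_one (by norm_num) (by norm_num))
  intro n
  exact mul_nonneg (hnonneg n).1 (by positivity)
end

section
/- Let $\{\varepsilon_n\}_{n\geq 1}$, $K, R$ be as above, and let $B(X)=X+\sum B_n X^n$ satisfy $\sum_{n\geq 2}\varepsilon_{n-1}^{-1}B_n X^n = \frac{2K B(X)^2}{(1-RB(X))^2}$. Let $\widetilde{A}_n \geq 0$ be real numbers with $\widetilde{A}_1 = 1$ satisfying $\sum_{n\geq 2}\varepsilon_{n-1}^{-1}\widetilde{A}_n X^n = \frac{K}{1-RX}\left((\widetilde{A}(X)-X)X + \frac{\widetilde{A}(X)^2}{1-R\widetilde{A}(X)}\right)$ where $\widetilde{A}(X)=\sum_{n\geq 1}\widetilde{A}_n X^n$. Then $\widetilde{A}_n \leq B_n$ for every $n \geq 2$. -/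
open PowerSeries Finset

/-- Coefficient comparison in Section 4.2: the coefficients of `Ã` (the
diagonalized majorant of `A(X,Y)`) are bounded by those of the majorant `B`. -/
theorem coefficient_comparison_ii
    (ε : ℕ → ℝ) (hεpos : ∀ n, 1 ≤ n → 0 < ε n)
    (K R : ℝ) (hK : 0 < K) (hR : 0 < R)
    (B : PowerSeries ℝ) (hB0 : constantCoeff B = 0) (hB1 : coeff 1 B = 1)
    (heqB : (PowerSeries.mk fun n => if 2 ≤ n then (ε (n - 1))⁻¹ * coeff n B else 0)
        * (1 - C R * B) ^ 2 = C (2 * K) * B ^ 2)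
    (At : PowerSeries ℝ) (hAt0 : constantCoeff At = 0) (hAt1 : coeff 1 At = 1)
    (hAtnonneg : ∀ n, 0 ≤ coeff n At)
    (heqAt : (PowerSeries.mk fun n => if 2 ≤ n then (ε (n - 1))⁻¹ * coeff n At else 0)
        * (1 - C R * X) * (1 - C R * At)
        = C K * ((At - X) * X * (1 - C R * At) + At ^ 2)) :
    ∀ n, 2 ≤ n → coeff n At ≤ coeff n B := by
  set MB : PowerSeries ℝ := PowerSeries.mk fun n => if 2 ≤ n then (ε (n - 1))⁻¹ * coeff n B else 0 with hMBdef
  set MA : PowerSeries ℝ := PowerSeries.mk fun n => if 2 ≤ n then (ε (n - 1))⁻¹ * coeff n At else 0 with hMAdef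
  set T : PowerSeries ℝ := PowerSeries.invOfUnit (1 - C R * B) 1 with hTdef
  set SA : PowerSeries ℝ := PowerSeries.invOfUnit (1 - C R * At) 1 with hSAdef
  set P : PowerSeries ℝ := PowerSeries.mk fun n => R ^ n with hPdef
  have ha0 : coeff 0 At = 0 := by rw [coeff_zero_eq_constantCoeff]; exact hAt0
  have hb0 : coeff 0 B = 0 := by rw [coeff_zero_eq_constantCoeff]; exact hB0
  have hT1 : (1 - C R * B) * T = 1 := by
    apply mul_invOfUnit
    simp [hB0]
  have hSA1 : (1 - C R * At) * SA = 1 := by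
    apply mul_invOfUnit
    simp [hAt0]
  have hP1 : (1 - C R * X) * P = 1 := by
    ext n
    rw [sub_mul, one_mul, map_sub, mul_assoc, coeff_C_mul]
    cases n with
    | zero =>
      simp [hPdef, coeff_zero_eq_constantCoeff]
    | succ m =>
      rw [coeff_succ_X_mul]
      simp [hPdef, coeff_mk, coeff_one, pow_succ]
      ring
  have hT0 : coeff 0 T = 1 := by
    rw [coeff_zero_eq_constantCoeff, hTdef, constantCoeff_invOfUnit]
    simp
  have hSA0 : coeff 0 SA = 1 := by
    rw [coeff_zero_eq_constantCoeff, hSAdef, constantCoeff_invOfUnit]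
    simp
  have hTrec : ∀ n, 1 ≤ n →
      coeff n T = R * ∑ p ∈ antidiagonal n, coeff p.1 B * coeff p.2 T := by
    intro n hn
    have h : T = 1 + C R * (B * T) := by linear_combination hT1
    conv_lhs => rw [h]
    rw [map_add, coeff_one, if_neg (by omega), coeff_C_mul, coeff_mul, zero_add]
  have hSArec : ∀ n, 1 ≤ n →
      coeff n SA = R * ∑ p ∈ antidiagonal n, coeff p.1 At * coeff p.2 SA := by
    intro n hn
    have h : SA = 1 + C R * (At * SA) := by linear_combination hSA1
    conv_lhs => rw [h]
    rw [map_add, coeff_one, if_neg (by omega), coeff_C_mul, coeff_mul, zero_add]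
  have hMB : MB = C (2 * K) * (T * (B * B * T)) := by
    have h2 : ((1 - C R * B) * T) ^ 2 = 1 := by rw [hT1]; norm_num
    calc MB = MB * (((1 - C R * B) * T) ^ 2) := by rw [h2, mul_one]
      _ = (MB * (1 - C R * B) ^ 2) * (T * T) := by ring
      _ = (C (2 * K) * B ^ 2) * (T * T) := by rw [heqB]
      _ = C (2 * K) * (T * (B * B * T)) := by ring
  have hMA : MA = C K * (P * ((At - X) * X + At * At * SA)) := by
    calc MA = MA * ((1 - C R * X) * P) * ((1 - C R * At) * SA) := by
          rw [hP1, hSA1]; ring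
      _ = (MA * (1 - C R * X) * (1 - C R * At)) * (P * SA) := by ring
      _ = (C K * ((At - X) * X * (1 - C R * At) + At ^ 2)) * (P * SA) := by rw [heqAt]
      _ = C K * (P * ((At - X) * X * ((1 - C R * At) * SA) + At * At * SA)) := by ring
      _ = C K * (P * ((At - X) * X + At * At * SA)) := by rw [hSA1]; ring
  -- nonnegativity of SA
  have hSAnn : ∀ n, 0 ≤ coeff n SA := by
    intro n
    induction n using Nat.strong_induction_on with
    | _ n ih =>
      rcases Nat.eq_zero_or_pos n with h0 | h1
      · rw [h0, hSA0]; norm_num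
      · rw [hSArec n h1]
        apply mul_nonneg hR.le
        apply Finset.sum_nonneg
        intro p hp
        rw [Finset.HasAntidiagonal.mem_antidiagonal] at hp
        rcases Nat.eq_zero_or_pos p.1 with h0 | hp1
        · have : coeff p.1 At = 0 := by rw [h0]; exact ha0
          rw [this, zero_mul]
        · exact mul_nonneg (hAtnonneg _) (ih p.2 (by omega))
  have hBsq0 : ∀ i, i ≤ 1 → coeff i (B * B) = 0 := by
    intro i hi
    rw [coeff_mul]
    apply Finset.sum_eq_zero
    intro p hp
    rw [Finset.HasAntidiagonal.mem_antidiagonal] at hp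
    rcases Nat.eq_zero_or_pos p.1 with h | h
    · have : coeff p.1 B = 0 := by rw [h]; exact hb0
      rw [this, zero_mul]
    · have h2 : p.2 = 0 := by omega
      have : coeff p.2 B = 0 := by rw [h2]; exact hb0
      rw [this, mul_zero]
  have hAtsq0 : ∀ i, i ≤ 1 → coeff i (At * At) = 0 := by
    intro i hi
    rw [coeff_mul]
    apply Finset.sum_eq_zero
    intro p hp
    rw [Finset.HasAntidiagonal.mem_antidiagonal] at hp
    rcases Nat.eq_zero_or_pos p.1 with h | h
    · have : coeff p.1 At = 0 := by rw [h]; exact ha0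
      rw [this, zero_mul]
    · have h2 : p.2 = 0 := by omega
      have : coeff p.2 At = 0 := by rw [h2]; exact ha0
      rw [this, mul_zero]
  -- joint nonnegativity of B and T
  have hBstep : ∀ n, (∀ m, m < n → 0 ≤ coeff m B ∧ 0 ≤ coeff m T) → 0 ≤ coeff n B := by
    intro n ih
    rcases lt_or_ge n 2 with hn | hn
    · interval_cases n
      · rw [hb0]
      · rw [hB1]; norm_num
    · have hcoef := congrArg (coeff n) hMB
      rw [hMBdef, coeff_mk, if_pos hn, coeff_C_mul] at hcoef
      have hnn : 0 ≤ coeff n (T * (B * B * T)) := by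
        rw [coeff_mul]
        apply Finset.sum_nonneg
        intro p hp
        rw [Finset.HasAntidiagonal.mem_antidiagonal] at hp
        rw [coeff_mul]
        rw [Finset.mul_sum]
        apply Finset.sum_nonneg
        intro q hq
        rw [Finset.HasAntidiagonal.mem_antidiagonal] at hq
        rcases le_or_gt q.1 1 with h1 | h1
        · rw [hBsq0 q.1 h1]
          simp
        · -- q.1 ≥ 2 hence p.1 ≤ n - 2 and q.2 ≤ n - 2
          apply mul_nonneg (ih p.1 (by omega)).2
          apply mul_nonneg
          · rw [coeff_mul]
            apply Finset.sum_nonneg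
            intro r hr
            rw [Finset.HasAntidiagonal.mem_antidiagonal] at hr
            rcases Nat.eq_zero_or_pos r.1 with h0 | hr1
            · have : coeff r.1 B = 0 := by rw [h0]; exact hb0
              rw [this, zero_mul]
            · rcases Nat.eq_zero_or_pos r.2 with h0 | hr2
              · have : coeff r.2 B = 0 := by rw [h0]; exact hb0
                rw [this, mul_zero]
              · exact mul_nonneg (ih r.1 (by omega)).1 (ih r.2 (by omega)).1
          · exact (ih q.2 (by omega)).2
      have hε := hεpos (n - 1) (by omega)
      have h1 : 0 ≤ (ε (n - 1))⁻¹ * coeff n B := by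
        rw [hcoef]
        apply mul_nonneg (by positivity) hnn
      have h2 : coeff n B = ε (n - 1) * ((ε (n - 1))⁻¹ * coeff n B) := by
        field_simp
      rw [h2]
      exact mul_nonneg hε.le h1
  have hBTnn : ∀ n, 0 ≤ coeff n B ∧ 0 ≤ coeff n T := by
    intro n
    induction n using Nat.strong_induction_on with
    | _ n ih =>
      have hBnn := hBstep n ih
      refine ⟨hBnn, ?_⟩
      rcases Nat.eq_zero_or_pos n with h0 | h1
      · rw [h0, hT0]; norm_num
      · rw [hTrec n h1]
        apply mul_nonneg hR.le
        apply Finset.sum_nonneg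
        intro p hp
        rw [Finset.HasAntidiagonal.mem_antidiagonal] at hp
        rcases Nat.eq_zero_or_pos p.1 with h0 | hp1
        · have : coeff p.1 B = 0 := by rw [h0]; exact hb0
          rw [this, zero_mul]
        · apply mul_nonneg
          · rcases eq_or_lt_of_le (show p.1 ≤ n by omega) with he | hlt
            · rw [he]; exact hBnn
            · exact (ih p.1 hlt).1
          · exact (ih p.2 (by omega)).2
  -- P ≤ T coefficientwise
  have hPT : ∀ n, coeff n P ≤ coeff n T := by
    intro n
    induction n using Nat.strong_induction_on with
    | _ n ih =>
      rcases Nat.eq_zero_or_pos n with h0 | h1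
      · rw [h0, hT0]; simp [hPdef]
      · obtain ⟨m, rfl⟩ : ∃ m, n = m + 1 := ⟨n - 1, by omega⟩
        rw [hTrec (m + 1) (by omega)]
        have hmem : ((1 : ℕ), m) ∈ antidiagonal (m + 1) := by
          rw [Finset.HasAntidiagonal.mem_antidiagonal]
          simp [Nat.add_comm]
        have hsingle : coeff 1 B * coeff m T
            ≤ ∑ p ∈ antidiagonal (m + 1), coeff p.1 B * coeff p.2 T :=
          Finset.single_le_sum (fun p _ => mul_nonneg (hBTnn p.1).1 (hBTnn p.2).2) hmem
        rw [hB1, one_mul] at hsingle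
        have h2 : coeff m P ≤ coeff m T := ih m (by omega)
        have h3 : coeff (m + 1) P = R * coeff m P := by
          rw [hPdef, coeff_mk, coeff_mk, pow_succ]
          ring
        rw [h3]
        have h4 : (0:ℝ) ≤ coeff m P := by rw [hPdef, coeff_mk]; positivity
        calc R * coeff m P ≤ R * coeff m T := by
              exact mul_le_mul_of_nonneg_left h2 hR.le
          _ ≤ R * ∑ p ∈ antidiagonal (m + 1), coeff p.1 B * coeff p.2 T := by
              exact mul_le_mul_of_nonneg_left hsingle hR.le
  have hPnn : ∀ n, 0 ≤ coeff n P := by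
    intro n; rw [hPdef, coeff_mk]; positivity
  have hXle : ∀ m, 0 ≤ coeff m (X : PowerSeries ℝ) ∧ coeff m (X : PowerSeries ℝ) ≤ coeff m At := by
    intro m
    rw [coeff_X]
    by_cases h : m = 1
    · rw [if_pos h, h, hAt1]
      norm_num
    · rw [if_neg h]
      exact ⟨le_refl 0, hAtnonneg m⟩
  have hAmX : ∀ m, 0 ≤ coeff m (At - X) ∧ coeff m (At - X) ≤ coeff m At := by
    intro m
    rw [map_sub]
    constructor
    · linarith [(hXle m).2]
    · linarith [(hXle m).1]
  have hAtsqnn : ∀ i, 0 ≤ coeff i (At * At) := by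
    intro i
    rw [coeff_mul]
    exact Finset.sum_nonneg fun p _ => mul_nonneg (hAtnonneg _) (hAtnonneg _)
  have hAASAnn : ∀ j, 0 ≤ coeff j (At * At * SA) := by
    intro j
    rw [coeff_mul]
    exact Finset.sum_nonneg fun p _ => mul_nonneg (hAtsqnn _) (hSAnn _)
  have hBBnn : ∀ i, 0 ≤ coeff i (B * B) := by
    intro i
    rw [coeff_mul]
    exact Finset.sum_nonneg fun p _ => mul_nonneg (hBTnn _).1 (hBTnn _).1
  have hG : ∀ j, coeff j ((At - X) * X) ≤ coeff j (At * At * SA) := by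
    intro j
    have step1 : coeff j ((At - X) * X) ≤ coeff j (At * At) := by
      rw [coeff_mul, coeff_mul]
      apply Finset.sum_le_sum
      intro p _
      exact mul_le_mul (hAmX p.1).2 (hXle p.2).2 (hXle p.2).1 (hAtnonneg p.1)
    have step2 : coeff j (At * At) ≤ coeff j (At * At * SA) := by
      rw [coeff_mul (φ := At * At)]
      have hmem : ((j : ℕ), (0 : ℕ)) ∈ antidiagonal j := by
        rw [Finset.HasAntidiagonal.mem_antidiagonal]
        simp
      have := Finset.single_le_sum
        (f := fun p : ℕ × ℕ => coeff p.1 (At * At) * coeff p.2 SA)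
        (fun p _ => mul_nonneg (hAtsqnn _) (hSAnn _)) hmem
      simpa [hSA0] using this
    linarith
  have hGXnn : ∀ j, 0 ≤ coeff j ((At - X) * X) := by
    intro j
    rw [coeff_mul]
    exact Finset.sum_nonneg fun p _ => mul_nonneg (hAmX p.1).1 (hXle p.2).1
  -- main comparison
  have main : ∀ n, coeff n At ≤ coeff n B ∧ coeff n SA ≤ coeff n T := by
    intro n
    induction n using Nat.strong_induction_on with
    | _ n ih =>
      have hAB : coeff n At ≤ coeff n B := by
        rcases lt_or_ge n 2 with hn | hn
        · interval_cases n
          · rw [ha0, hb0]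
          · rw [hAt1, hB1]
        · -- key lemma
          have hkey : ∀ j, j ≤ n → coeff j (At * At * SA) ≤ coeff j (B * B * T) := by
            intro j hj
            rw [coeff_mul, coeff_mul]
            apply Finset.sum_le_sum
            intro p hp
            rw [Finset.HasAntidiagonal.mem_antidiagonal] at hp
            rcases le_or_gt p.1 1 with h1 | h1
            · rw [hAtsq0 p.1 h1, zero_mul]
              exact mul_nonneg (hBBnn p.1) (hBTnn p.2).2
            · have hsq : coeff p.1 (At * At) ≤ coeff p.1 (B * B) := by
                rw [coeff_mul, coeff_mul]
                apply Finset.sum_le_sum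
                intro q hq
                rw [Finset.HasAntidiagonal.mem_antidiagonal] at hq
                rcases Nat.eq_zero_or_pos q.1 with h0 | hq1
                · have e1 : coeff q.1 At = 0 := by rw [h0]; exact ha0
                  have e2 : coeff q.1 B = 0 := by rw [h0]; exact hb0
                  rw [e1, e2, zero_mul, zero_mul]
                · rcases Nat.eq_zero_or_pos q.2 with h0 | hq2
                  · have e1 : coeff q.2 At = 0 := by rw [h0]; exact ha0
                    have e2 : coeff q.2 B = 0 := by rw [h0]; exact hb0
                    rw [e1, e2, mul_zero, mul_zero]
                  · exact mul_le_mul (ih q.1 (by omega)).1 (ih q.2 (by omega)).1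
                      (hAtnonneg q.2) (hBTnn q.1).1
              have hs : coeff p.2 SA ≤ coeff p.2 T := (ih p.2 (by omega)).2
              exact mul_le_mul hsq hs (hSAnn p.2) (hBBnn p.1)
          have hAc : (ε (n - 1))⁻¹ * coeff n At
              = K * coeff n (P * ((At - X) * X + At * At * SA)) := by
            have := congrArg (coeff n) hMA
            rwa [hMAdef, coeff_mk, if_pos hn, coeff_C_mul] at this
          have hBc : (ε (n - 1))⁻¹ * coeff n B
              = (2 * K) * coeff n (T * (B * B * T)) := by
            have := congrArg (coeff n) hMB
            rwa [hMBdef, coeff_mk, if_pos hn, coeff_C_mul] at this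
          have hcmp : K * coeff n (P * ((At - X) * X + At * At * SA))
              ≤ (2 * K) * coeff n (T * (B * B * T)) := by
            rw [coeff_mul, coeff_mul, Finset.mul_sum, Finset.mul_sum]
            apply Finset.sum_le_sum
            intro p hp
            rw [Finset.HasAntidiagonal.mem_antidiagonal] at hp
            have h1 : coeff p.2 ((At - X) * X + At * At * SA)
                ≤ 2 * coeff p.2 (At * At * SA) := by
              rw [map_add]
              linarith [hG p.2]
            have h2 : coeff p.2 (At * At * SA) ≤ coeff p.2 (B * B * T) :=
              hkey p.2 (by omega)
            have h3 : coeff p.1 P ≤ coeff p.1 T := hPT p.1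
            have h4 : 0 ≤ coeff p.1 P := hPnn p.1
            have h5 : 0 ≤ coeff p.2 (At * At * SA) := hAASAnn p.2
            have h6 : 0 ≤ coeff p.2 ((At - X) * X + At * At * SA) := by
              rw [map_add]
              have := hGXnn p.2
              linarith
            have hTp : 0 ≤ coeff p.1 T := (hBTnn p.1).2
            calc K * (coeff p.1 P * coeff p.2 ((At - X) * X + At * At * SA))
                ≤ K * (coeff p.1 P * (2 * coeff p.2 (At * At * SA))) := by
                  exact mul_le_mul_of_nonneg_left (mul_le_mul_of_nonneg_left h1 h4) hK.le
              _ ≤ K * (coeff p.1 T * (2 * coeff p.2 (At * At * SA))) := by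
                  exact mul_le_mul_of_nonneg_left
                    (mul_le_mul_of_nonneg_right h3 (by linarith)) hK.le
              _ ≤ K * (coeff p.1 T * (2 * coeff p.2 (B * B * T))) := by
                  exact mul_le_mul_of_nonneg_left
                    (mul_le_mul_of_nonneg_left (by linarith) hTp) hK.le
              _ = 2 * K * (coeff p.1 T * coeff p.2 (B * B * T)) := by ring
          have hfin : (ε (n - 1))⁻¹ * coeff n At ≤ (ε (n - 1))⁻¹ * coeff n B := by
            rw [hAc, hBc]; exact hcmp
          have hε := hεpos (n - 1) (by omega)
          exact le_of_mul_le_mul_left hfin (inv_pos.mpr hε)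
      refine ⟨hAB, ?_⟩
      rcases Nat.eq_zero_or_pos n with h0 | h1
      · rw [h0, hSA0, hT0]
      · rw [hSArec n h1, hTrec n h1]
        apply mul_le_mul_of_nonneg_left _ hR.le
        apply Finset.sum_le_sum
        intro p hp
        rw [Finset.HasAntidiagonal.mem_antidiagonal] at hp
        rcases Nat.eq_zero_or_pos p.1 with h0 | hp1
        · have e1 : coeff p.1 At = 0 := by rw [h0]; exact ha0
          have e2 : coeff p.1 B = 0 := by rw [h0]; exact hb0
          rw [e1, e2, zero_mul, zero_mul]
        · have hsa : coeff p.2 SA ≤ coeff p.2 T := (ih p.2 (by omega)).2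
          have hab : coeff p.1 At ≤ coeff p.1 B := by
            rcases eq_or_lt_of_le (show p.1 ≤ n by omega) with he | hlt
            · rw [he]; exact hAB
            · exact (ih p.1 hlt).1
          exact mul_le_mul hab hsa (hSAnn p.2) (hBTnn p.1).1
  exact fun n _ => (main n).1
end
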